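/- arXiv:1210.5322 — 3 statements merged into one kernel-verified Lean document; each statement's English description precedes it below -/
import Mathlib

section
/- Let G be a finite median graph. Then Σ_{i≥0} (−1)^i α_i(G) = 1; equivalently, the cube polynomial of G evaluated at −1 equals 1: C(G,−1) = 1. -/
open SimpleGraph Polynomial

/-- The `n`-cube `Q_n`: vertices are the functions `Fin n → Bool`, two functions
being adjacent iff they differ in exactly one coordinate. -/
def cubeGraph (n : ℕ) : SimpleGraph (Fin n → Bool) where
  Adj f g := ∃! i, f i ≠ g i
  symm := by
    constructor
    rintro f g ⟨i, hi, hu⟩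
    exact ⟨i, hi.symm, fun j hj => hu j hj.symm⟩
  loopless := by
    constructor
    rintro f ⟨i, hi, -⟩
    exact hi rfl

/-- `α_i(G)`: the number of vertex subsets of `G` whose induced subgraph is
isomorphic to the `i`-cube `Q_i`. -/
noncomputable def cubeCount {V : Type*} (G : SimpleGraph V) (i : ℕ) : ℕ :=
  Nat.card {S : Set V // Nonempty (G.induce S ≃g cubeGraph i)}

/-- The cube polynomial `C(G,x) = Σ_i α_i(G)·xⁱ` of `G`.  (The `i`-cube has
`2ⁱ ≥ i + 1` vertices, so `α_i(G) = 0` for `i > |V|` and the range of summation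
captures all nonzero terms.) -/
noncomputable def cubePoly {V : Type*} (G : SimpleGraph V) : Polynomial ℤ :=
  ∑ i ∈ Finset.range (Nat.card V + 1), Polynomial.C (cubeCount G i : ℤ) * Polynomial.X ^ i

/-- A median graph: a connected graph in which, for every triple of vertices
`u`, `v`, `w`, there is a unique vertex `m` lying simultaneously on a shortest
`u,v`-path, a shortest `u,w`-path and a shortest `v,w`-path. -/
def IsMedianGraph {V : Type*} (G : SimpleGraph V) : Prop :=
  G.Connected ∧ ∀ u v w : V, ∃! m : V,
    G.dist u m + G.dist m v = G.dist u v ∧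
    G.dist u m + G.dist m w = G.dist u w ∧
    G.dist v m + G.dist m w = G.dist v w

namespace MedianCube

variable {V : Type*} {G : SimpleGraph V}

/-- the median vertex -/
noncomputable def med (hG : IsMedianGraph G) (u v w : V) : V := (hG.2 u v w).choose

lemma med_spec (hG : IsMedianGraph G) (u v w : V) :
    G.dist u (med hG u v w) + G.dist (med hG u v w) v = G.dist u v ∧
    G.dist u (med hG u v w) + G.dist (med hG u v w) w = G.dist u w ∧
    G.dist v (med hG u v w) + G.dist (med hG u v w) w = G.dist v w :=
  (hG.2 u v w).choose_spec.1

lemma med_unique (hG : IsMedianGraph G) {u v w m : V}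
    (h1 : G.dist u m + G.dist m v = G.dist u v)
    (h2 : G.dist u m + G.dist m w = G.dist u w)
    (h3 : G.dist v m + G.dist m w = G.dist v w) : m = med hG u v w :=
  (hG.2 u v w).choose_spec.2 m ⟨h1, h2, h3⟩

lemma adj_dist_eq_one (hG : IsMedianGraph G) {x y : V} (h : G.Adj x y) :
    G.dist x y = 1 := SimpleGraph.dist_eq_one_iff_adj.mpr h

/-- distance is symmetric, helper -/
lemma dc (G : SimpleGraph V) (a b : V) : G.dist a b = G.dist b a := SimpleGraph.dist_comm

/-- Along any edge, the distance to any basepoint changes by exactly one. -/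
lemma step (hG : IsMedianGraph G) {x y : V} (h : G.Adj x y) (z : V) :
    G.dist z y = G.dist z x + 1 ∨ G.dist z x = G.dist z y + 1 := by
  have hxy : G.dist x y = 1 := adj_dist_eq_one hG h
  obtain ⟨h1, h2, h3⟩ := med_spec hG x y z
  rw [hxy] at h1
  rcases Nat.le_one_iff_eq_zero_or_eq_one.mp (by omega : G.dist x (med hG x y z) ≤ 1) with h0 | h0
  · have hm : med hG x y z = x := (hG.1.dist_eq_zero_iff).mp (by rw [dc] ; exact h0)
    rw [hm] at h3
    left
    have c1 := dc G y x; have c2 := dc G z y; have c3 := dc G z x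
    omega
  · have hmy : G.dist (med hG x y z) y = 0 := by omega
    have hm : med hG x y z = y := (hG.1.dist_eq_zero_iff).mp hmy
    rw [hm, hxy] at h2
    right
    have c2 := dc G z y; have c3 := dc G z x
    omega

lemma adj_level_ne (hG : IsMedianGraph G) {x y : V} (h : G.Adj x y) (z : V) :
    G.dist z x ≠ G.dist z y := by
  rcases step hG h z with h' | h' <;> omega

lemma dist_eq_two (hG : IsMedianGraph G) {x y c : V} (hne : x ≠ y)
    (hnadj : ¬ G.Adj x y) (hcx : G.Adj c x) (hcy : G.Adj c y) :
    G.dist x y = 2 := by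
  have h2 : G.dist x y ≤ 2 := by
    have ht := hG.1.dist_triangle (u := x) (v := c) (w := y)
    have c1 := dc G x c
    have e1 := adj_dist_eq_one hG hcx; have e2 := adj_dist_eq_one hG hcy
    omega
  have h0 : G.dist x y ≠ 0 := fun h0 => hne ((hG.1.dist_eq_zero_iff).mp h0)
  have h1 : G.dist x y ≠ 1 := fun h1 => hnadj (SimpleGraph.dist_eq_one_iff_adj.mp h1)
  omega

/-- two vertices whose levels w.r.t. some basepoint differ by other than one
are non-adjacent -/
lemma not_adj_of_level (hG : IsMedianGraph G) {x y : V} (z : V)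
    (h : ∀ n : ℕ, ¬(G.dist z x = n + 1 ∧ G.dist z y = n) ∧
        ¬(G.dist z y = n + 1 ∧ G.dist z x = n)) : ¬ G.Adj x y := fun hadj => by
  rcases step hG hadj z with h' | h'
  · exact ((h (G.dist z x)).2 ⟨h', rfl⟩)
  · exact ((h (G.dist z y)).1 ⟨h', rfl⟩)

/-- same-level vertices are non-adjacent -/
lemma not_adj_same_level (hG : IsMedianGraph G) {x y : V} (z : V)
    (hlev : G.dist z x = G.dist z y) : ¬ G.Adj x y := fun hadj =>
  adj_level_ne hG hadj z hlev

/-- any two vertices that both satisfy the median conditions coincide -/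
lemma median_eq (hG : IsMedianGraph G) {u v w m m' : V}
    (h1 : G.dist u m + G.dist m v = G.dist u v)
    (h2 : G.dist u m + G.dist m w = G.dist u w)
    (h3 : G.dist v m + G.dist m w = G.dist v w)
    (h1' : G.dist u m' + G.dist m' v = G.dist u v)
    (h2' : G.dist u m' + G.dist m' w = G.dist u w)
    (h3' : G.dist v m' + G.dist m' w = G.dist v w) : m = m' := by
  rw [med_unique hG h1 h2 h3, med_unique hG h1' h2' h3']

/-- Quadrangle uniqueness: two vertices at the same level with a common
neighbour have a unique common neighbour one level down. -/
lemma qdown_unique (hG : IsMedianGraph G) {z a b c1 c2 : V} (hab : a ≠ b)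
    (hlev : G.dist z a = G.dist z b)
    (h1a : G.Adj c1 a) (h1b : G.Adj c1 b) (h2a : G.Adj c2 a) (h2b : G.Adj c2 b)
    (hl1 : G.dist z c1 + 1 = G.dist z a) (hl2 : G.dist z c2 + 1 = G.dist z a) :
    c1 = c2 := by
  have hab2 : G.dist a b = 2 := dist_eq_two hG hab (not_adj_same_level hG z hlev) h1a h1b
  have med_cond : ∀ c : V, G.Adj c a → G.Adj c b → G.dist z c + 1 = G.dist z a →
      (G.dist a c + G.dist c b = G.dist a b ∧
       G.dist a c + G.dist c z = G.dist a z ∧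
       G.dist b c + G.dist c z = G.dist b z) := by
    intro c hca hcb hlc
    have e1 := adj_dist_eq_one hG hca; have e2 := adj_dist_eq_one hG hcb
    have c1 := dc G a c; have c2 := dc G b c; have c3 := dc G c z
    have c4 := dc G a z; have c5 := dc G b z; have c6 := dc G c a; have c7 := dc G c b
    refine ⟨by omega, by omega, by omega⟩
  obtain ⟨p1, p2, p3⟩ := med_cond c1 h1a h1b hl1
  obtain ⟨q1, q2, q3⟩ := med_cond c2 h2a h2b hl2
  exact median_eq hG p1 p2 p3 q1 q2 q3

/-- Quadrangle existence: the median of `a b z` is the common lower neighbour. -/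
lemma qdown_exists (hG : IsMedianGraph G) {z a b : V} (hab : a ≠ b)
    (hlev : G.dist z a = G.dist z b) {c : V} (hca : G.Adj c a) (hcb : G.Adj c b) :
    G.Adj (med hG a b z) a ∧ G.Adj (med hG a b z) b ∧
      G.dist z (med hG a b z) + 1 = G.dist z a := by
  have hab2 : G.dist a b = 2 := dist_eq_two hG hab (not_adj_same_level hG z hlev) hca hcb
  obtain ⟨h1, h2, h3⟩ := med_spec hG a b z
  set m := med hG a b z with hm
  rw [hab2] at h1
  have hz0 : G.dist z a ≠ 0 := by
    intro h0
    have hza : z = a := (hG.1.dist_eq_zero_iff).mp h0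
    subst hza
    rw [SimpleGraph.dist_self] at hlev
    exact hab ((hG.1.dist_eq_zero_iff).mp hlev.symm)
  have hma : G.dist a m ≠ 0 := by
    intro h0
    have : a = m := (hG.1.dist_eq_zero_iff).mp h0
    rw [← this] at h3
    have c5 := dc G b a; have c4 := dc G a z; have c5' := dc G b z
    omega
  have hmb : G.dist m b ≠ 0 := by
    intro h0
    have : m = b := (hG.1.dist_eq_zero_iff).mp h0
    rw [this] at h2
    have c4 := dc G a z; have c5 := dc G b z
    omega
  have hma1 : G.dist a m = 1 := by omega
  have hmb1 : G.dist m b = 1 := by omega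
  have cma := dc G a m; have cmz := dc G m z; have caz := dc G a z
  refine ⟨SimpleGraph.dist_eq_one_iff_adj.mp (by omega : G.dist m a = 1),
    SimpleGraph.dist_eq_one_iff_adj.mp hmb1, by omega⟩

/-- no `K_{2,3}`-like configuration: a triple of pairwise-distance-2 vertices
has at most one "simultaneous neighbour pair". -/
lemma k23 (hG : IsMedianGraph G) {c1 c2 c3 a b : V}
    (d12 : G.dist c1 c2 = 2) (d13 : G.dist c1 c3 = 2) (d23 : G.dist c2 c3 = 2)
    (ha1 : G.Adj a c1) (ha2 : G.Adj a c2) (ha3 : G.Adj a c3)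
    (hb1 : G.Adj b c1) (hb2 : G.Adj b c2) (hb3 : G.Adj b c3) : a = b := by
  have med_cond : ∀ x : V, G.Adj x c1 → G.Adj x c2 → G.Adj x c3 →
      (G.dist c1 x + G.dist x c2 = G.dist c1 c2 ∧
       G.dist c1 x + G.dist x c3 = G.dist c1 c3 ∧
       G.dist c2 x + G.dist x c3 = G.dist c2 c3) := by
    intro x h1 h2 h3
    have e1 := adj_dist_eq_one hG h1; have e2 := adj_dist_eq_one hG h2
    have e3 := adj_dist_eq_one hG h3
    have q1 := dc G x c1; have q2 := dc G x c2; have q3 := dc G x c3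
    refine ⟨by omega, by omega, by omega⟩
  obtain ⟨p1, p2, p3⟩ := med_cond a ha1 ha2 ha3
  obtain ⟨q1, q2, q3⟩ := med_cond b hb1 hb2 hb3
  exact median_eq hG p1 p2 p3 q1 q2 q3

/-- Upper uniqueness: two distinct same-level vertices with some common
neighbour have at most one common neighbour one level up. -/
lemma qup_unique (hG : IsMedianGraph G) {z a b c1 c2 : V} (hab : a ≠ b)
    (hlev : G.dist z a = G.dist z b)
    (h1a : G.Adj c1 a) (h1b : G.Adj c1 b) (h2a : G.Adj c2 a) (h2b : G.Adj c2 b)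
    (hl1 : G.dist z c1 = G.dist z a + 1) (hl2 : G.dist z c2 = G.dist z a + 1) :
    c1 = c2 := by
  by_contra hne
  obtain ⟨hma, hmb, hml⟩ := qdown_exists hG hab hlev h1a h1b
  set m := med hG a b z with hm
  -- levels distinguish m from c1 c2
  have hm1 : m ≠ c1 := fun h => by rw [h] at hml; omega
  have hm2 : m ≠ c2 := fun h => by rw [h] at hml; omega
  -- pairwise distances are 2
  have d12 : G.dist c1 c2 = 2 :=
    dist_eq_two hG hne (not_adj_same_level hG z (by omega)) h1a.symm h2a.symm
  have d1m : G.dist c1 m = 2 := dist_eq_two hG hm1.symm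
    (fun hadj => by rcases step hG hadj z with h' | h' <;> omega) h1a.symm hma.symm
  have d2m : G.dist c2 m = 2 := dist_eq_two hG hm2.symm
    (fun hadj => by rcases step hG hadj z with h' | h' <;> omega) h2a.symm hma.symm
  exact hab (k23 hG d12 d1m d2m h1a.symm h2a.symm hma.symm h1b.symm h2b.symm hmb.symm)

section Ham

variable {ι : Type*} [Fintype ι] [DecidableEq ι]

/-- set of coordinates where two boolean vectors differ -/
def dS (x y : ι → Bool) : Finset ι := Finset.univ.filter fun j => x j ≠ y j

/-- Hamming distance -/
def ham (x y : ι → Bool) : ℕ := (dS x y).card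

/-- flip one coordinate -/
def flipb (j : ι) (x : ι → Bool) : ι → Bool := Function.update x j (!x j)

lemma bool_ne_iff {a b : Bool} : a ≠ b ↔ a = !b := by
  cases a <;> cases b <;> simp

@[simp] lemma mem_dS {x y : ι → Bool} {j : ι} : j ∈ dS x y ↔ x j ≠ y j := by
  simp [dS]

lemma dS_comm (x y : ι → Bool) : dS x y = dS y x := by
  ext j; simp [ne_comm]

lemma ham_comm (x y : ι → Bool) : ham x y = ham y x := by
  rw [ham, ham, dS_comm]

lemma ham_eq_zero_iff {x y : ι → Bool} : ham x y = 0 ↔ x = y := by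
  rw [ham, Finset.card_eq_zero]
  constructor
  · intro h
    funext j
    by_contra hj
    have : j ∈ dS x y := mem_dS.mpr hj
    simp [h] at this
  · intro h; subst h; ext j; simp

@[simp] lemma flipb_apply_self (j : ι) (x : ι → Bool) : flipb j x j = !x j := by
  simp [flipb]

lemma flipb_apply_ne {i j : ι} (h : i ≠ j) (x : ι → Bool) : flipb j x i = x i := by
  simp [flipb, Function.update_of_ne h]

@[simp] lemma flipb_flipb (j : ι) (x : ι → Bool) : flipb j (flipb j x) = x := by
  funext i
  by_cases h : i = j
  · subst h; simp
  · rw [flipb_apply_ne h, flipb_apply_ne h]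

lemma flipb_comm {i j : ι} (h : i ≠ j) (x : ι → Bool) :
    flipb j (flipb i x) = flipb i (flipb j x) := by
  calc flipb j (flipb i x) = Function.update (Function.update x i (!x i)) j (!x j) := by
        unfold flipb; rw [Function.update_of_ne (Ne.symm h)]
    _ = Function.update (Function.update x j (!x j)) i (!x i) := Function.update_comm h _ _ _
    _ = flipb i (flipb j x) := by unfold flipb; rw [Function.update_of_ne h]

lemma dS_flipb_left {j : ι} (x y : ι → Bool) :
    dS (flipb j x) y = if j ∈ dS x y then (dS x y).erase j else insert j (dS x y) := by
  split_ifs with h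
  · ext i
    by_cases hi : i = j
    · subst hi
      simp only [mem_dS, Finset.mem_erase, ne_eq, not_true_eq_false, false_and, iff_false,
        flipb_apply_self]
      have := mem_dS.mp h
      cases hx : x i <;> cases hy : y i <;> simp_all
    · simp [Finset.mem_erase, hi, flipb_apply_ne hi]
  · ext i
    by_cases hi : i = j
    · subst hi
      simp only [mem_dS, flipb_apply_self, Finset.mem_insert, true_or, iff_true]
      have : ¬ x i ≠ y i := fun hc => h (mem_dS.mpr hc)
      cases hx : x i <;> cases hy : y i <;> simp_all
    · simp [Finset.mem_insert, hi, flipb_apply_ne hi]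

lemma ham_flipb_mem {j : ι} {x y : ι → Bool} (h : j ∈ dS x y) :
    ham (flipb j x) y + 1 = ham x y := by
  rw [ham, dS_flipb_left, if_pos h, Finset.card_erase_of_mem h, ham]
  have : 0 < (dS x y).card := Finset.card_pos.mpr ⟨j, h⟩
  omega

lemma ham_flipb_not_mem {j : ι} {x y : ι → Bool} (h : j ∉ dS x y) :
    ham (flipb j x) y = ham x y + 1 := by
  rw [ham, dS_flipb_left, if_neg h, Finset.card_insert_of_notMem h, ham]

lemma dS_flipb_self (j : ι) (x : ι → Bool) : dS (flipb j x) x = {j} := by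
  have h : j ∉ dS x x := by simp
  have := dS_flipb_left (j := j) x x
  rw [if_neg h] at this
  rw [this]
  ext i; simp

lemma ham_flipb_self (j : ι) (x : ι → Bool) : ham (flipb j x) x = 1 := by
  rw [ham, dS_flipb_self]; simp

lemma ham_flipb_self' (j : ι) (x : ι → Bool) : ham x (flipb j x) = 1 := by
  rw [ham_comm, ham_flipb_self]

lemma ham_triangle (x y z : ι → Bool) : ham x z ≤ ham x y + ham y z := by
  have hsub : dS x z ⊆ dS x y ∪ dS y z := by
    intro j hj
    rw [Finset.mem_union, mem_dS, mem_dS]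
    by_contra hc
    push_neg at hc
    exact (mem_dS.mp hj) (hc.1.trans hc.2)
  calc (dS x z).card ≤ (dS x y ∪ dS y z).card := Finset.card_le_card hsub
    _ ≤ _ := Finset.card_union_le _ _

lemma ham_eq_one_iff {x y : ι → Bool} : ham x y = 1 ↔ ∃! j, x j ≠ y j := by
  rw [ham, Finset.card_eq_one]
  constructor
  · rintro ⟨j, hj⟩
    refine ⟨j, ?_, fun i hi => ?_⟩
    · have : j ∈ dS x y := by rw [hj]; simp
      exact mem_dS.mp this
    · have : i ∈ dS x y := mem_dS.mpr hi
      rw [hj] at this; simpa using this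
  · rintro ⟨j, hj, hu⟩
    refine ⟨j, ?_⟩
    ext i
    simp only [mem_dS, Finset.mem_singleton]
    exact ⟨fun h => hu i h, fun h => h ▸ hj⟩

lemma exists_mem_dS {x y : ι → Bool} (h : x ≠ y) : ∃ j, j ∈ dS x y := by
  by_contra hc
  push_neg at hc
  exact h (ham_eq_zero_iff.mp (by
    rw [ham, Finset.card_eq_zero]
    exact Finset.eq_empty_of_forall_notMem hc))

lemma two_mem_dS {x y : ι → Bool} (h : 2 ≤ ham x y) :
    ∃ j1 j2, j1 ∈ dS x y ∧ j2 ∈ dS x y ∧ j1 ≠ j2 := by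
  obtain ⟨j1, hj1, j2, hj2, hne⟩ := Finset.one_lt_card.mp h
  exact ⟨j1, j2, hj1, hj2, hne⟩

end Ham

section CubeMap

variable {ι : Type*} [Fintype ι] [DecidableEq ι]
variable {V : Type*} {G : SimpleGraph V}

/-- a labelling of the hypercube by vertices of `G`, injective, with adjacency
exactly along cube edges -/
def IsCubeMap (G : SimpleGraph V) (F : (ι → Bool) → V) : Prop :=
  Function.Injective F ∧ ∀ x y, G.Adj (F x) (F y) ↔ ham x y = 1

lemma IsCubeMap.adj_flipb {F : (ι → Bool) → V} (hF : IsCubeMap G F)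
    (j : ι) (x : ι → Bool) : G.Adj (F (flipb j x)) (F x) :=
  (hF.2 _ _).mpr (ham_flipb_self j x)

lemma IsCubeMap.ne_of_ne {F : (ι → Bool) → V} (hF : IsCubeMap G F)
    {x y : ι → Bool} (h : x ≠ y) : F x ≠ F y := fun hc => h (hF.1 hc)

/-- the square lemma: the level increment of the direction `j` does not change
when moving in direction `i`. -/
lemma square_inc (hG : IsMedianGraph G) {F : (ι → Bool) → V} (hF : IsCubeMap G F)
    (z : V) (x : ι → Bool) {i j : ι} (hij : i ≠ j) :
    (G.dist z (F (flipb j x)) : ℤ) - (G.dist z (F x) : ℤ)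
      = (G.dist z (F (flipb j (flipb i x))) : ℤ) - (G.dist z (F (flipb i x)) : ℤ) := by
  have hAB : G.Adj (F x) (F (flipb j x)) := (hF.adj_flipb j x).symm
  have hAC : G.Adj (F x) (F (flipb i x)) := (hF.adj_flipb i x).symm
  have hCD : G.Adj (F (flipb i x)) (F (flipb j (flipb i x))) :=
    (hF.adj_flipb j (flipb i x)).symm
  have hBD : G.Adj (F (flipb j x)) (F (flipb j (flipb i x))) := by
    rw [flipb_comm hij]
    exact (hF.adj_flipb i (flipb j x)).symm
  have hxBC : flipb j x ≠ flipb i x := by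
    intro hc
    have : (flipb j x) j = (flipb i x) j := by rw [hc]
    rw [flipb_apply_self, flipb_apply_ne (Ne.symm hij)] at this
    cases hxj : x j <;> simp [hxj] at this
  have hxAD : x ≠ flipb j (flipb i x) := by
    intro hc
    have : x i = flipb j (flipb i x) i := by rw [← hc]
    rw [flipb_apply_ne hij, flipb_apply_self] at this
    cases hxi : x i <;> simp [hxi] at this
  have hBC : F (flipb j x) ≠ F (flipb i x) := hF.ne_of_ne hxBC
  have hAD : F x ≠ F (flipb j (flipb i x)) := hF.ne_of_ne hxAD
  rcases step hG hAB z with s1 | s1 <;> rcases step hG hAC z with s2 | s2 <;>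
    rcases step hG hBD z with s3 | s3 <;> rcases step hG hCD z with s4 | s4 <;>
    try omega
  · -- B, C above A; D above both : A and D are the two lower common nbrs
    exact absurd (qdown_unique hG (z := z) hBC (by omega) hAB hAC hBD.symm hCD.symm
      (by omega) (by omega)) hAD
  · -- B, C below A; D below both : A and D are the two upper common nbrs
    exact absurd (qup_unique hG (z := z) hBC (by omega) hAB hAC hBD.symm hCD.symm
      (by omega) (by omega)) hAD

/-- increments are position-independent -/
lemma aff (hG : IsMedianGraph G) {F : (ι → Bool) → V} (hF : IsCubeMap G F)
    (z : V) (j : ι) :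
    ∀ x y : ι → Bool, x j = false → y j = false →
    (G.dist z (F (flipb j x)) : ℤ) - (G.dist z (F x) : ℤ)
      = (G.dist z (F (flipb j y)) : ℤ) - (G.dist z (F y) : ℤ) := by
  suffices H : ∀ n (x y : ι → Bool), ham x y = n → x j = false → y j = false →
      (G.dist z (F (flipb j x)) : ℤ) - (G.dist z (F x) : ℤ)
      = (G.dist z (F (flipb j y)) : ℤ) - (G.dist z (F y) : ℤ) by
    exact fun x y hx hy => H (ham x y) x y rfl hx hy
  intro n
  induction n using Nat.strong_induction_on with
  | _ n IH =>
    intro x y hn hx hy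
    rcases eq_or_ne x y with rfl | hne
    · rfl
    obtain ⟨i, hi⟩ := exists_mem_dS hne
    have hij : i ≠ j := by
      intro hc; subst hc
      exact (mem_dS.mp hi) (hx.trans hy.symm)
    have h1 : ham (flipb i x) y + 1 = n := by rw [← hn]; exact ham_flipb_mem hi
    have h2 : (flipb i x) j = false := by rw [flipb_apply_ne (Ne.symm hij)]; exact hx
    calc (G.dist z (F (flipb j x)) : ℤ) - (G.dist z (F x) : ℤ)
        = (G.dist z (F (flipb j (flipb i x))) : ℤ) - (G.dist z (F (flipb i x)) : ℤ) :=
          square_inc hG hF z x hij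
      _ = _ := IH (ham (flipb i x) y) (by omega) (flipb i x) y rfl h2 hy

/-- if all directions go up from `b`, the cube is graded upward from `b` -/
lemma grad_up (hG : IsMedianGraph G) {F : (ι → Bool) → V} (hF : IsCubeMap G F)
    (z : V) (b : ι → Bool)
    (hb : ∀ j, G.dist z (F (flipb j b)) = G.dist z (F b) + 1) :
    ∀ x, G.dist z (F x) = G.dist z (F b) + ham b x := by
  suffices H : ∀ n (x : ι → Bool), ham b x = n → G.dist z (F x) = G.dist z (F b) + n by
    exact fun x => H (ham b x) x rfl
  intro n
  induction n using Nat.strong_induction_on with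
  | _ n IH =>
    intro x hn
    rcases Nat.eq_zero_or_pos n with rfl | hpos
    · rw [ham_eq_zero_iff.mp hn]; omega
    obtain ⟨i, hi⟩ := exists_mem_dS (fun hc : b = x => by
      rw [← hc] at hn; rw [ham_eq_zero_iff.mpr rfl] at hn; omega)
    set y := flipb i x with hy
    have hxy : x = flipb i y := by rw [hy, flipb_flipb]
    have hham : ham b y + 1 = n := by
      rw [← hn, ham_comm b y, ham_comm b x]
      exact ham_flipb_mem (by rw [dS_comm]; exact hi)
    have hyIH : G.dist z (F y) = G.dist z (F b) + (n - 1) := IH (n-1) (by omega) y (by omega)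
    -- now show G.dist z (F x) = G.dist z (F y) + 1 using aff
    have key : (G.dist z (F x) : ℤ) = (G.dist z (F y) : ℤ) + 1 := by
      have hbx : x i = !(b i) := bool_ne_iff.mp (Ne.symm (mem_dS.mp hi))
      cases hbi : b i with
      | true =>
        have hxi : x i = false := by rw [hbx, hbi]; rfl
        have hfbi : (flipb i b) i = false := by rw [flipb_apply_self, hbi]; rfl
        have haff := aff hG hF z i x (flipb i b) hxi hfbi
        rw [flipb_flipb] at haff
        have hbb := hb i
        -- haff : d (F (flipb i x)) - d (F x) = d (F b) - d (F (flipb i b))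
        rw [← hy] at haff
        omega
      | false =>
        have hyi : y i = false := by
          rw [hy, flipb_apply_self, hbx, hbi]; rfl
        have haff := aff hG hF z i b y hbi hyi
        rw [← hxy] at haff
        have hbb := hb i
        omega
    omega

/-- if all directions go down from `b`, the cube is graded downward from `b` -/
lemma grad_down (hG : IsMedianGraph G) {F : (ι → Bool) → V} (hF : IsCubeMap G F)
    (z : V) (b : ι → Bool)
    (hb : ∀ j, G.dist z (F (flipb j b)) + 1 = G.dist z (F b)) :
    ∀ x, G.dist z (F x) + ham b x = G.dist z (F b) := by
  suffices H : ∀ n (x : ι → Bool), ham b x = n → G.dist z (F x) + n = G.dist z (F b) by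
    exact fun x => H (ham b x) x rfl
  intro n
  induction n using Nat.strong_induction_on with
  | _ n IH =>
    intro x hn
    rcases Nat.eq_zero_or_pos n with rfl | hpos
    · rw [ham_eq_zero_iff.mp hn]; omega
    obtain ⟨i, hi⟩ := exists_mem_dS (fun hc : b = x => by
      rw [← hc] at hn; rw [ham_eq_zero_iff.mpr rfl] at hn; omega)
    set y := flipb i x with hy
    have hxy : x = flipb i y := by rw [hy, flipb_flipb]
    have hham : ham b y + 1 = n := by
      rw [← hn, ham_comm b y, ham_comm b x]
      exact ham_flipb_mem (by rw [dS_comm]; exact hi)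
    have hyIH : G.dist z (F y) + (n - 1) = G.dist z (F b) := IH (n-1) (by omega) y (by omega)
    have key : (G.dist z (F x) : ℤ) + 1 = (G.dist z (F y) : ℤ) := by
      have hbx : x i = !(b i) := bool_ne_iff.mp (Ne.symm (mem_dS.mp hi))
      cases hbi : b i with
      | true =>
        have hxi : x i = false := by rw [hbx, hbi]; rfl
        have hfbi : (flipb i b) i = false := by rw [flipb_apply_self, hbi]; rfl
        have haff := aff hG hF z i x (flipb i b) hxi hfbi
        rw [flipb_flipb] at haff
        have hbb := hb i
        rw [← hy] at haff
        omega
      | false =>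
        have hyi : y i = false := by
          rw [hy, flipb_apply_self, hbx, hbi]; rfl
        have haff := aff hG hF z i b y hbi hyi
        rw [← hxy] at haff
        have hbb := hb i
        omega
    omega

/-- cube maps are isometric: distance between corners is the Hamming distance -/
lemma corner_dist (hG : IsMedianGraph G) {F : (ι → Bool) → V} (hF : IsCubeMap G F)
    (c x : ι → Bool) : G.dist (F c) (F x) = ham c x := by
  have hb : ∀ j, G.dist (F c) (F (flipb j c)) = G.dist (F c) (F c) + 1 := by
    intro j
    rw [SimpleGraph.dist_self, adj_dist_eq_one hG (hF.adj_flipb j c).symm]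
  have := grad_up hG hF (F c) c hb x
  rw [SimpleGraph.dist_self] at this
  omega

/-- a vertex outside the cube adjacent to a corner `b` is graded away from `b` -/
lemma outside_dist (hG : IsMedianGraph G) {F : (ι → Bool) → V} (hF : IsCubeMap G F)
    {z : V} (hz : ∀ x, z ≠ F x) {b : ι → Bool} (hzb : G.Adj z (F b)) :
    ∀ x, G.dist z (F x) = 1 + ham b x := by
  have hzb1 : G.dist z (F b) = 1 := adj_dist_eq_one hG hzb
  have hb : ∀ j, G.dist z (F (flipb j b)) = G.dist z (F b) + 1 := by
    intro j
    rcases step hG (hF.adj_flipb j b) z with h' | h'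
    · -- dist z (F b) = dist z (F (flipb j b)) + 1 → the latter is 0 → z = corner
      exfalso
      have h0 : G.dist z (F (flipb j b)) = 0 := by omega
      exact hz _ ((hG.1.dist_eq_zero_iff).mp h0)
    · omega
  intro x
  rw [grad_up hG hF z b hb x, hzb1, add_comm]

end CubeMap

section HamExtra

variable {ι : Type*} [Fintype ι] [DecidableEq ι]

lemma eq_flipb_of_ham_one {x y : ι → Bool} (h : ham x y = 1) : ∃ j, x = flipb j y := by
  obtain ⟨j, hj⟩ := Finset.card_eq_one.mp h
  refine ⟨j, funext fun i => ?_⟩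
  by_cases hij : i = j
  · subst hij
    have hmem : i ∈ dS x y := by rw [hj]; simp
    rw [flipb_apply_self]
    exact bool_ne_iff.mp (mem_dS.mp hmem)
  · have hmem : i ∉ dS x y := by rw [hj]; simpa using hij
    rw [flipb_apply_ne hij]
    by_contra hc
    exact hmem (mem_dS.mpr hc)

lemma ham_flipb_flipb {i j : ι} (h : i ≠ j) (x : ι → Bool) :
    ham (flipb i x) (flipb j x) = 2 := by
  have hd : dS (flipb i x) (flipb j x) = {i, j} := by
    ext l
    rcases eq_or_ne l i with rfl | hli
    · simp only [mem_dS, Finset.mem_insert, Finset.mem_singleton, true_or, iff_true,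
        flipb_apply_self, flipb_apply_ne h]
      cases x l <;> simp
    · rcases eq_or_ne l j with rfl | hlj
      · simp only [mem_dS, Finset.mem_insert, Finset.mem_singleton, or_true, iff_true,
          flipb_apply_ne (Ne.symm h), flipb_apply_self]
        cases x l <;> simp
      · rw [mem_dS, flipb_apply_ne hli, flipb_apply_ne hlj]
        simp [hli, hlj]
  rw [ham, hd, Finset.card_insert_of_notMem (by simpa using h), Finset.card_singleton]

lemma ham_succ {k : ℕ} (x y : Fin (k+1) → Bool) :
    ham x y = (if x 0 ≠ y 0 then 1 else 0) + ham (x ∘ Fin.succ) (y ∘ Fin.succ) := by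
  rw [ham, dS, Finset.card_filter, Fin.sum_univ_succ, ham, dS, Finset.card_filter]
  rfl

lemma funext_succ {k : ℕ} {x y : Fin (k+1) → Bool} (h0 : x 0 = y 0)
    (ht : x ∘ Fin.succ = y ∘ Fin.succ) : x = y :=
  funext fun i => Fin.cases h0 (fun j => congrFun ht j) i

end HamExtra

section Push

variable {V : Type*}

/-- auxiliary fueled recursion for the pushed-down copy of a cube -/
noncomputable def pushAux {k : ℕ} (m2 : V → V → V) (F' : (Fin k → Bool) → V) (w : V) :
    ℕ → (Fin k → Bool) → V
  | 0, _ => w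
  | n + 1, x =>
    if h : (dS x (fun _ => true)).Nonempty then
      m2 (F' x) (pushAux m2 F' w n (flipb h.choose x))
    else w

/-- the pushed-down copy of a cube in direction `w` -/
noncomputable def push {k : ℕ} (m2 : V → V → V) (F' : (Fin k → Bool) → V) (w : V)
    (x : Fin k → Bool) : V := pushAux m2 F' w (ham x (fun _ => true)) x

lemma push_top {k : ℕ} (m2 : V → V → V) (F' : (Fin k → Bool) → V) (w : V) :
    push m2 F' w (fun _ => true) = w := by
  have h : ham (fun j : Fin k => true) (fun _ => true) = 0 := ham_eq_zero_iff.mpr rfl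
  rw [push, h, pushAux]

lemma push_step {k : ℕ} (m2 : V → V → V) (F' : (Fin k → Bool) → V) (w : V)
    {x : Fin k → Bool} (h : (dS x (fun _ => true)).Nonempty) :
    push m2 F' w x = m2 (F' x) (push m2 F' w (flipb h.choose x)) := by
  have hc : ham x (fun _ => true) = ham (flipb h.choose x) (fun _ => true) + 1 :=
    (ham_flipb_mem h.choose_spec).symm
  rw [push, hc, pushAux, dif_pos h, push]

end Push

section Construct

variable {V : Type*} [DecidableEq V] {G : SimpleGraph V}

/-- Main construction: any set `T` of downward neighbours of `u` spans a
downward cube. -/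
lemma cube_exists (hG : IsMedianGraph G) (v0 : V) :
    ∀ (k : ℕ) (u : V) (T : Finset V),
      (∀ t ∈ T, G.Adj u t ∧ G.dist v0 t + 1 = G.dist v0 u) → T.card = k →
      ∃ F : (Fin k → Bool) → V, IsCubeMap G F ∧ F (fun _ => true) = u ∧
        (∀ x, G.dist v0 (F x) + ham x (fun _ => true) = G.dist v0 u) ∧
        Finset.image (fun j => F (flipb j (fun _ => true))) Finset.univ = T := by
  intro k
  induction k with
  | zero =>
    intro u T hT hcard
    refine ⟨fun _ => u, ⟨?_, ?_⟩, rfl, ?_, ?_⟩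
    · intro a b _
      exact funext fun j => j.elim0
    · intro x y
      have hxy : x = y := funext fun j => j.elim0
      subst hxy
      simp only [SimpleGraph.irrefl, false_iff]
      rw [ham_eq_zero_iff.mpr rfl]
      omega
    · intro x
      have hx : x = fun _ => true := funext fun j => j.elim0
      subst hx
      rw [ham_eq_zero_iff.mpr rfl]
      show G.dist v0 u + 0 = G.dist v0 u
      omega
    · rw [Finset.card_eq_zero.mp hcard]
      exact Finset.image_eq_empty.mpr Finset.univ_eq_empty
  | succ k IH =>
    intro u T hT hcard
    -- pick w ∈ T
    have hTne : T.Nonempty := Finset.card_pos.mp (by omega)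
    obtain ⟨w, hw⟩ := hTne
    have hcard' : (T.erase w).card = k := by
      rw [Finset.card_erase_of_mem hw]; omega
    obtain ⟨F', hF', htop, hlev, himg⟩ :=
      IH u (T.erase w) (fun t ht => hT t (Finset.mem_of_mem_erase ht)) hcard'
    obtain ⟨hwAdj, hwlev⟩ := hT w hw
    have hwT' : w ∉ T.erase w := Finset.notMem_erase w T
    set g : (Fin k → Bool) → V := push (fun a b => med hG a b v0) F' w with hgdef
    -- the battery of invariants, by strong induction on the number of `false`s
    have battery : ∀ n (x : Fin k → Bool), ham x (fun _ => true) = n →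
        (G.dist v0 (g x) + 1 = G.dist v0 (F' x)) ∧ G.Adj (F' x) (g x) ∧
        (∀ y, g x ≠ F' y) ∧
        (∀ j, x j = false → G.Adj (g x) (g (flipb j x))) := by
      intro n
      induction n using Nat.strong_induction_on with
      | _ n IHn =>
        intro x hn
        rcases Nat.eq_zero_or_pos n with rfl | hpos
        · -- x = top
          have hx : x = fun _ => true := ham_eq_zero_iff.mp hn
          have hgw : g x = w := by rw [hx]; exact push_top _ _ _
          have hFx : F' x = u := by rw [hx]; exact htop
          refine ⟨?_, ?_, ?_, ?_⟩
          · rw [hgw, hFx]; exact hwlev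
          · rw [hgw, hFx]; exact hwAdj
          · intro y hc
            rw [hgw] at hc
            have hly := hlev y
            have hy1 : ham y (fun _ => true) = 1 := by
              rw [← hc] at hly
              omega
            obtain ⟨j, hj⟩ := eq_flipb_of_ham_one hy1
            apply hwT'
            rw [← himg, hc, hj]
            exact Finset.mem_image.mpr ⟨j, Finset.mem_univ j, rfl⟩
          · intro j hj
            have htr : x j = true := by rw [hx]
            rw [hj] at htr
            exact absurd htr (by simp)
        · -- inductive case
          have hne : (dS x (fun _ => true)).Nonempty := Finset.card_pos.mp (by
            rw [← ham]; omega)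
          set j0 := hne.choose with hj0def
          have hj0mem : j0 ∈ dS x (fun _ => true) := hne.choose_spec
          have hxj0 : x j0 = false := by
            have hb := bool_ne_iff.mp (mem_dS.mp hj0mem)
            simpa using hb
          have hflip : ham (flipb j0 x) (fun _ => true) + 1 = ham x (fun _ => true) :=
            ham_flipb_mem hj0mem
          obtain ⟨I1p, I2p, I4p, I3p⟩ := IHn (ham (flipb j0 x) (fun _ => true))
            (by omega) (flipb j0 x) rfl
          have Dp : ∀ y, G.dist (g (flipb j0 x)) (F' y) = 1 + ham (flipb j0 x) y :=
            outside_dist hG hF' (fun y => I4p y) I2p.symm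
          -- the defining equation for g x
          have hgx : g x = med hG (F' x) (g (flipb j0 x)) v0 := push_step _ _ _ hne
          have hlevx := hlev x
          have hlevxu := hlev (flipb j0 x)
          have hq := qdown_exists hG (z := v0) (a := F' x) (b := g (flipb j0 x))
            (Ne.symm (I4p x)) (by omega)
            ((hF'.2 (flipb j0 x) x).mpr (ham_flipb_self j0 x)) I2p
          rw [← hgx] at hq
          obtain ⟨hgx1, hgx2, hgx3⟩ := hq
          have I1 : G.dist v0 (g x) + 1 = G.dist v0 (F' x) := hgx3
          have I2 : G.Adj (F' x) (g x) := hgx1.symm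
          have hedge0 : G.Adj (g x) (g (flipb j0 x)) := hgx2
          have I4 : ∀ y, g x ≠ F' y := by
            intro y hc
            have hadj : G.Adj (F' y) (g (flipb j0 x)) := hc ▸ hedge0
            have hd : G.dist (g (flipb j0 x)) (F' y) = 1 := by
              rw [dc]; exact adj_dist_eq_one hG hadj
            rw [Dp y] at hd
            have hy : y = flipb j0 x :=
              (ham_eq_zero_iff.mp (by omega : ham (flipb j0 x) y = 0)).symm
            subst hy
            rw [← hc] at hlevxu
            omega
          have D : ∀ y, G.dist (g x) (F' y) = 1 + ham x y :=
            outside_dist hG hF' (fun y => I4 y) I2.symm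
          have I3 : ∀ j, x j = false → G.Adj (g x) (g (flipb j x)) := by
            intro j hj
            rcases eq_or_ne j j0 with rfl | hjj0
            · exact hedge0
            · -- the diamond argument
              have hjmem : j ∈ dS x (fun _ => true) := mem_dS.mpr (by simp [hj])
              have hflipj : ham (flipb j x) (fun _ => true) + 1 = ham x (fun _ => true) :=
                ham_flipb_mem hjmem
              obtain ⟨I1q, I2q, I4q, I3q⟩ := IHn (ham (flipb j x) (fun _ => true))
                (by omega) (flipb j x) rfl
              have Dq : ∀ y, G.dist (g (flipb j x)) (F' y) = 1 + ham (flipb j x) y :=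
                outside_dist hG hF' (fun y => I4q y) I2q.symm
              have hlevxj := hlev (flipb j x)
              -- the three same-level vertices around g x
              have hham2 : ham (flipb j0 x) (flipb j x) = 2 := ham_flipb_flipb hjj0.symm x
              have h23 : g (flipb j0 x) ≠ g (flipb j x) := by
                intro hc
                have := Dp (flipb j x)
                rw [hc] at this
                rw [dc] at this
                rw [adj_dist_eq_one hG I2q] at this
                omega
              -- edges to the common lower vertex x''
              have hxuj : (flipb j0 x) j = false := by
                rw [flipb_apply_ne hjj0]; exact hj
              have hxju0 : (flipb j x) j0 = false := by
                rw [flipb_apply_ne hjj0.symm]; exact hxj0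
              have e1 : G.Adj (g (flipb j0 x)) (g (flipb j (flipb j0 x))) := I3p j hxuj
              have e2 : G.Adj (g (flipb j x)) (g (flipb j (flipb j0 x))) := by
                have := I3q j0 hxju0
                rwa [flipb_comm hjj0] at this
              -- pairwise distances 2
              have d12 : G.dist (F' x) (g (flipb j0 x)) = 2 :=
                dist_eq_two hG (Ne.symm (I4p x)) (not_adj_same_level hG v0 (by omega))
                  ((hF'.2 (flipb j0 x) x).mpr (ham_flipb_self j0 x)) I2p
              have d13 : G.dist (F' x) (g (flipb j x)) = 2 :=
                dist_eq_two hG (Ne.symm (I4q x)) (not_adj_same_level hG v0 (by omega))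
                  ((hF'.2 (flipb j x) x).mpr (ham_flipb_self j x)) I2q
              have d23 : G.dist (g (flipb j0 x)) (g (flipb j x)) = 2 :=
                dist_eq_two hG h23 (not_adj_same_level hG v0 (by omega)) e1.symm e2.symm
              -- the median of the triple is adjacent to all three
              obtain ⟨s1, s2, s3⟩ := med_spec hG (F' x) (g (flipb j0 x)) (g (flipb j x))
              set m := med hG (F' x) (g (flipb j0 x)) (g (flipb j x)) with hmdef
              rw [d12] at s1
              rw [d13] at s2
              rw [d23] at s3
              have hm1 : G.dist (F' x) m ≠ 0 := by
                intro h0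
                have hmx : m = F' x := ((hG.1.dist_eq_zero_iff).mp h0).symm
                rw [hmx] at s3
                have c1 := dc G (g (flipb j0 x)) (F' x)
                omega
              have hm2 : G.dist m (g (flipb j0 x)) ≠ 0 := by
                intro h0
                have hmx : m = g (flipb j0 x) := (hG.1.dist_eq_zero_iff).mp h0
                rw [hmx] at s2
                omega
              have hm3 : G.dist m (g (flipb j x)) ≠ 0 := by
                intro h0
                have hmx : m = g (flipb j x) := (hG.1.dist_eq_zero_iff).mp h0
                rw [hmx] at s1
                have c1 := dc G (g (flipb j0 x)) (g (flipb j x))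
                omega
              have hdm1 : G.dist (F' x) m = 1 := by
                have c1 := dc G m (g (flipb j0 x))
                omega
              have hdm2 : G.dist m (g (flipb j0 x)) = 1 := by omega
              have hdm3 : G.dist m (g (flipb j x)) = 1 := by omega
              have am1 : G.Adj m (F' x) := SimpleGraph.dist_eq_one_iff_adj.mp
                (by rw [dc]; exact hdm1)
              have am2 : G.Adj m (g (flipb j0 x)) := SimpleGraph.dist_eq_one_iff_adj.mp hdm2
              have am3 : G.Adj m (g (flipb j x)) := SimpleGraph.dist_eq_one_iff_adj.mp hdm3
              -- level of m
              rcases step hG am1 v0 with hbelow | habove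
              · -- m is one level below : it is g x, so g x is adjacent to g (flipb j x)
                have hmgx : m = g x := by
                  refine (qdown_unique hG (z := v0) (a := F' x) (b := g (flipb j0 x))
                    (Ne.symm (I4p x)) (by omega) I2.symm hedge0 am1 am2 ?_ ?_).symm
                  · omega
                  · omega
                rw [hmgx] at am3
                exact am3
              · -- m is one level above F' x : contradiction via qup uniqueness
                exfalso
                have hFadj : G.Adj (F' (flipb j0 x)) (F' x) :=
                  (hF'.2 (flipb j0 x) x).mpr (ham_flipb_self j0 x)
                have hmF : m = F' (flipb j0 x) := by
                  refine qup_unique hG (z := v0) (a := F' x) (b := g (flipb j0 x))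
                    (Ne.symm (I4p x)) (by omega) am1 am2 hFadj I2p ?_ ?_
                  · omega
                  · omega
                have hd1 : G.dist (g (flipb j x)) (F' (flipb j0 x)) = 1 := by
                  rw [dc, ← hmF]
                  exact adj_dist_eq_one hG am3
                rw [Dq (flipb j0 x)] at hd1
                rw [ham_comm] at hham2
                omega
          exact ⟨I1, I2, I4, I3⟩
    -- global consequences of the battery
    have gI1 : ∀ x, G.dist v0 (g x) + 1 = G.dist v0 (F' x) :=
      fun x => (battery _ x rfl).1
    have gI2 : ∀ x, G.Adj (F' x) (g x) := fun x => (battery _ x rfl).2.1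
    have gI4 : ∀ x y, g x ≠ F' y := fun x => (battery _ x rfl).2.2.1
    have gI3 : ∀ x (j : Fin k), x j = false → G.Adj (g x) (g (flipb j x)) :=
      fun x => (battery _ x rfl).2.2.2
    have gD : ∀ x y, G.dist (g x) (F' y) = 1 + ham x y :=
      fun x => outside_dist hG hF' (gI4 x) (gI2 x).symm
    have ginj : ∀ x y, g x = g y → x = y := by
      intro x y hc
      have h1 : G.dist (g x) (F' y) = 1 := by
        rw [hc, dc]; exact adj_dist_eq_one hG (gI2 y)
      rw [gD x y] at h1
      exact ham_eq_zero_iff.mp (by omega)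
    have gadj1 : ∀ x y, G.Adj (g x) (g y) → ham x y = 1 := by
      intro x y hadj
      have hxy : x ≠ y := fun hc => by
        rw [hc] at hadj; exact (G.loopless.irrefl _) hadj
      have t := hG.1.dist_triangle (u := g x) (v := g y) (w := F' y)
      have t1 : G.dist (g x) (g y) = 1 := adj_dist_eq_one hG hadj
      have t2 : G.dist (g y) (F' y) = 1 := by
        rw [dc]; exact adj_dist_eq_one hG (gI2 y)
      have t3 := gD x y
      have hne0 : ham x y ≠ 0 := fun h0 => hxy (ham_eq_zero_iff.mp h0)
      omega
    have gadj2 : ∀ x y, ham x y = 1 → G.Adj (g x) (g y) := by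
      intro x y h1
      obtain ⟨j, hj⟩ := eq_flipb_of_ham_one h1
      cases hyj : y j with
      | false =>
        rw [hj]
        exact (gI3 y j hyj).symm
      | true =>
        have hxj : x j = false := by rw [hj, flipb_apply_self, hyj]; rfl
        have hyx : y = flipb j x := by rw [hj, flipb_flipb]
        rw [hyx]
        exact gI3 x j hxj
    have gmixed : ∀ x y, G.Adj (g x) (F' y) → x = y := by
      intro x y hadj
      have h1 := adj_dist_eq_one hG hadj
      rw [gD] at h1
      exact ham_eq_zero_iff.mp (by omega)
    -- assembling the new cube map
    have bfalse : ∀ (b : Bool), ¬(b = true) → b = false := by decide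
    have htt : ((fun (_ : Fin (k+1)) => true) ∘ Fin.succ) = (fun (_ : Fin k) => true) := rfl
    refine ⟨fun x => if x 0 = true then F' (x ∘ Fin.succ) else g (x ∘ Fin.succ),
      ⟨?_, ?_⟩, ?_, ?_, ?_⟩
    · -- injectivity
      intro a b hab
      dsimp only at hab
      by_cases ha : a 0 = true <;> by_cases hb : b 0 = true
      · rw [if_pos ha, if_pos hb] at hab
        exact funext_succ (ha.trans hb.symm) (hF'.1 hab)
      · rw [if_pos ha, if_neg hb] at hab
        exact absurd hab.symm (gI4 _ _)
      · rw [if_neg ha, if_pos hb] at hab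
        exact absurd hab (gI4 _ _)
      · rw [if_neg ha, if_neg hb] at hab
        exact funext_succ ((bfalse _ ha).trans (bfalse _ hb).symm) (ginj _ _ hab)
    · -- adjacency iff
      intro x y
      dsimp only
      rw [ham_succ]
      by_cases hx : x 0 = true <;> by_cases hy : y 0 = true
      · rw [if_pos hx, if_pos hy, if_neg (by rw [hx, hy]; exact fun h => h rfl), zero_add]
        exact hF'.2 _ _
      · rw [if_pos hx, if_neg hy, if_pos (by rw [hx, bfalse _ hy]; simp)]
        constructor
        · intro h
          have := gmixed _ _ h.symm
          rw [← this, ham_eq_zero_iff.mpr rfl]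
        · intro h
          have h0 : ham (x ∘ Fin.succ) (y ∘ Fin.succ) = 0 := by omega
          rw [ham_eq_zero_iff.mp h0]
          exact (gI2 _).symm.symm
      · rw [if_neg hx, if_pos hy, if_pos (by rw [hy, bfalse _ hx]; simp)]
        constructor
        · intro h
          have := gmixed _ _ h
          rw [this, ham_comm, ham_eq_zero_iff.mpr rfl]
        · intro h
          have h0 : ham (x ∘ Fin.succ) (y ∘ Fin.succ) = 0 := by omega
          rw [ham_eq_zero_iff.mp h0]
          exact (gI2 _).symm
      · rw [if_neg hx, if_neg hy,
          if_neg (by rw [bfalse _ hx, bfalse _ hy]; exact fun h => h rfl), zero_add]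
        exact ⟨gadj1 _ _, gadj2 _ _⟩
    · -- top
      dsimp only
      rw [if_pos rfl, htt, htop]
    · -- levels
      intro x
      dsimp only
      rw [ham_succ, htt]
      by_cases hx : x 0 = true
      · rw [if_pos hx, if_neg (by rw [hx]; exact fun h => h rfl)]
        have := hlev (x ∘ Fin.succ)
        omega
      · rw [if_neg hx, if_pos (by rw [bfalse _ hx]; simp)]
        have h1 := gI1 (x ∘ Fin.succ)
        have h2 := hlev (x ∘ Fin.succ)
        omega
    · -- direction image
      have h0 : (if (flipb (0 : Fin (k+1)) (fun _ => true)) 0 = true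
          then F' ((flipb (0 : Fin (k+1)) (fun _ => true)) ∘ Fin.succ)
          else g ((flipb (0 : Fin (k+1)) (fun _ => true)) ∘ Fin.succ)) = w := by
        have hh : (flipb (0 : Fin (k+1)) (fun _ => true)) 0 = false := by
          rw [flipb_apply_self]; rfl
        rw [if_neg (by rw [hh]; exact fun h => nomatch h)]
        have hc : (flipb (0 : Fin (k+1)) (fun _ => true)) ∘ Fin.succ
            = (fun (_ : Fin k) => true) := by
          funext i
          show flipb (0 : Fin (k+1)) (fun _ => true) i.succ = true
          rw [flipb_apply_ne (Fin.succ_ne_zero i)]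
        rw [hc]
        exact push_top _ _ _
      have hsucc : ∀ j : Fin k, (if (flipb j.succ (fun _ : Fin (k+1) => true)) 0 = true
          then F' ((flipb j.succ (fun _ : Fin (k+1) => true)) ∘ Fin.succ)
          else g ((flipb j.succ (fun _ : Fin (k+1) => true)) ∘ Fin.succ))
          = F' (flipb j (fun _ => true)) := by
        intro j
        have hh : (flipb j.succ (fun _ : Fin (k+1) => true)) 0 = true := by
          rw [flipb_apply_ne (Fin.succ_ne_zero j).symm]
        rw [if_pos hh]
        congr 1
        funext i
        show flipb j.succ (fun _ : Fin (k+1) => true) i.succ = flipb j (fun _ => true) i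
        rcases eq_or_ne i j with rfl | hij
        · rw [flipb_apply_self, flipb_apply_self]
        · rw [flipb_apply_ne (fun hc => hij (Fin.succ_injective _ hc)),
            flipb_apply_ne hij]
      ext v
      simp only [Finset.mem_image]
      constructor
      · rintro ⟨j, -, rfl⟩
        refine Fin.cases ?_ ?_ j
        · rw [h0]; exact hw
        · intro i
          rw [hsucc i]
          have hmem : F' (flipb i (fun _ => true)) ∈ T.erase w := by
            rw [← himg]; exact Finset.mem_image.mpr ⟨i, Finset.mem_univ i, rfl⟩
          exact Finset.mem_of_mem_erase hmem
      · intro hv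
        rcases eq_or_ne v w with rfl | hvw
        · exact ⟨0, Finset.mem_univ _, h0⟩
        · have hmem : v ∈ T.erase w := Finset.mem_erase.mpr ⟨hvw, hv⟩
          rw [← himg] at hmem
          obtain ⟨i, -, hi⟩ := Finset.mem_image.mp hmem
          exact ⟨i.succ, Finset.mem_univ _, by rw [hsucc i, hi]⟩

end Construct

section Unique

variable {V : Type*} {G : SimpleGraph V}
variable {ι : Type*} [Fintype ι] [DecidableEq ι]
variable {ι' : Type*} [Fintype ι'] [DecidableEq ι']

/-- every cube map has a corner of maximal distance from the basepoint,
from which the whole cube is graded downward -/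
lemma exists_top (hG : IsMedianGraph G) (v0 : V) {F : (ι → Bool) → V}
    (hF : IsCubeMap G F) :
    ∃ b : ι → Bool, ∀ j, G.dist v0 (F (flipb j b)) + 1 = G.dist v0 (F b) := by
  classical
  set z0 : ι → Bool := fun _ => false with hz0
  refine ⟨fun j => if G.dist v0 (F (flipb j z0)) = G.dist v0 (F z0) + 1 then true
    else false, fun j => ?_⟩
  set b : ι → Bool := fun j => if G.dist v0 (F (flipb j z0)) = G.dist v0 (F z0) + 1
    then true else false with hb
  have hz0j : z0 j = false := rfl
  by_cases hj : G.dist v0 (F (flipb j z0)) = G.dist v0 (F z0) + 1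
  · have hbj : b j = true := by simp only [hb]; rw [if_pos hj]
    have hfbj : (flipb j b) j = false := by rw [flipb_apply_self, hbj]; rfl
    have haff := aff hG hF v0 j (flipb j b) z0 hfbj hz0j
    rw [flipb_flipb] at haff
    omega
  · have hbj : b j = false := by simp only [hb]; rw [if_neg hj]
    have hstep := step hG (hF.adj_flipb j z0) v0
    have hj' : G.dist v0 (F (flipb j z0)) + 1 = G.dist v0 (F z0) := by
      rcases hstep with h | h <;> omega
    have haff := aff hG hF v0 j b z0 hbj hz0j
    omega

/-- uniqueness: two downward cubes with the same top vertex and the same set of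
downward directions have the same range -/
lemma range_subset (hG : IsMedianGraph G) (v0 : V)
    {F : (ι → Bool) → V} {F₂ : (ι' → Bool) → V}
    (hF : IsCubeMap G F) (hF₂ : IsCubeMap G F₂) {b : ι → Bool} {b₂ : ι' → Bool}
    (hgr : ∀ x, G.dist v0 (F x) + ham b x = G.dist v0 (F b))
    (hgr₂ : ∀ x, G.dist v0 (F₂ x) + ham b₂ x = G.dist v0 (F₂ b₂))
    (htopeq : F b = F₂ b₂)
    (himg : ∀ j : ι, ∃ j' : ι', F (flipb j b) = F₂ (flipb j' b₂)) :
    ∀ x, ∃ y, F x = F₂ y := by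
  classical
  suffices H : ∀ n (x : ι → Bool), ham b x = n → ∃ y, F x = F₂ y by
    exact fun x => H (ham b x) x rfl
  intro n
  induction n using Nat.strong_induction_on with
  | _ n IHn =>
    intro x hn
    match n, hn with
    | 0, hn =>
      exact ⟨b₂, by rw [← ham_eq_zero_iff.mp hn]; exact htopeq⟩
    | 1, hn =>
      obtain ⟨j, hj⟩ := eq_flipb_of_ham_one (by rw [ham_comm x b]; exact hn)
      obtain ⟨j', hj'⟩ := himg j
      exact ⟨flipb j' b₂, by rw [hj]; exact hj'⟩
    | (m+2), hn =>
      obtain ⟨j1, j2, hj1, hj2, hj12⟩ := two_mem_dS (by omega : 2 ≤ ham b x)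
      -- the two parents of x toward b
      have hj1' : j1 ∈ dS x b := by rw [dS_comm]; exact hj1
      have hj2' : j2 ∈ dS x b := by rw [dS_comm]; exact hj2
      have hp1 : ham b (flipb j1 x) = m + 1 := by
        have := ham_flipb_mem hj1'
        rw [ham_comm (flipb j1 x) b, ham_comm x b] at this
        omega
      have hp2 : ham b (flipb j2 x) = m + 1 := by
        have := ham_flipb_mem hj2'
        rw [ham_comm (flipb j2 x) b, ham_comm x b] at this
        omega
      obtain ⟨y1, hy1⟩ := IHn (m+1) (by omega) (flipb j1 x) hp1
      obtain ⟨y2, hy2⟩ := IHn (m+1) (by omega) (flipb j2 x) hp2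
      -- levels
      have hD := htopeq
      have hg1 := hgr (flipb j1 x)
      have hg2 := hgr (flipb j2 x)
      have hgx := hgr x
      have hg1' := hgr₂ y1
      have hg2' := hgr₂ y2
      rw [← hy1] at hg1'
      rw [← hy2] at hg2'
      -- ham b₂ y1 = ham b₂ y2 = m + 1
      have hDD : G.dist v0 (F b) = G.dist v0 (F₂ b₂) := by rw [htopeq]
      have hby1 : ham b₂ y1 = m + 1 := by omega
      have hby2 : ham b₂ y2 = m + 1 := by omega
      -- ham y1 y2 = 2
      have hham12 : ham (flipb j1 x) (flipb j2 x) = 2 := ham_flipb_flipb hj12 x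
      have hd12 : G.dist (F (flipb j1 x)) (F (flipb j2 x)) = 2 := by
        rw [corner_dist hG hF, hham12]
      have hy12 : ham y1 y2 = 2 := by
        rw [← corner_dist hG hF₂, ← hy1, ← hy2, hd12]
      -- find a coordinate i2 where y1, y2 differ but y1 agrees with b₂
      have hex : ∃ i2 ∈ dS y1 y2, i2 ∉ dS b₂ y1 := by
        by_contra hc
        push_neg at hc
        have hsub : dS y1 y2 ⊆ dS b₂ y1 := fun i hi => hc i hi
        have hset : dS b₂ y2 = dS b₂ y1 \ dS y1 y2 := by
          ext i
          by_cases hiE : i ∈ dS y1 y2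
          · simp only [Finset.mem_sdiff, hiE, not_true_eq_false, and_false, iff_false]
            have h1 : y1 i ≠ y2 i := mem_dS.mp hiE
            have h2 : b₂ i ≠ y1 i := mem_dS.mp (hsub hiE)
            rw [mem_dS]
            intro h3
            cases hb2 : b₂ i <;> cases hy1i : y1 i <;> cases hy2i : y2 i <;>
              simp_all
          · simp only [Finset.mem_sdiff, hiE, not_false_eq_true, and_true]
            have h1 : y1 i = y2 i := not_ne_iff.mp (fun hne => hiE (mem_dS.mpr hne))
            rw [mem_dS, mem_dS, h1]
        have hcards : (dS b₂ y2).card = (dS b₂ y1).card - 2 := by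
          rw [hset, Finset.card_sdiff_of_subset hsub]
          have : (dS y1 y2).card = 2 := hy12
          omega
        have c1 : (dS b₂ y1).card = m + 1 := hby1
        have c2 : (dS b₂ y2).card = m + 1 := hby2
        omega
      obtain ⟨i2, hi2E, hi2B⟩ := hex
      have hbz : ham b₂ (flipb i2 y1) = m + 2 := by
        have hi2B' : i2 ∉ dS y1 b₂ := by rw [dS_comm]; exact hi2B
        have := ham_flipb_not_mem hi2B'
        rw [ham_comm (flipb i2 y1) b₂, ham_comm y1 b₂] at this
        omega
      have hzy1 : ham (flipb i2 y1) y1 = 1 := ham_flipb_self i2 y1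
      have hzy2 : ham (flipb i2 y1) y2 = 1 := by
        rw [ham]
        rw [dS_flipb_left, if_pos hi2E, Finset.card_erase_of_mem hi2E]
        have : (dS y1 y2).card = 2 := hy12
        omega
      -- F x and F₂ z are both lower common neighbours of F p1 = F₂ y1, F p2 = F₂ y2
      have hgz := hgr₂ (flipb i2 y1)
      have hadj_x1 : G.Adj (F x) (F (flipb j1 x)) := (hF.2 _ _).mpr (ham_flipb_self' j1 x)
      have hadj_x2 : G.Adj (F x) (F (flipb j2 x)) := (hF.2 _ _).mpr (ham_flipb_self' j2 x)
      have hadj_z1 : G.Adj (F₂ (flipb i2 y1)) (F₂ y1) := (hF₂.2 _ _).mpr hzy1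
      have hadj_z2 : G.Adj (F₂ (flipb i2 y1)) (F₂ y2) := (hF₂.2 _ _).mpr hzy2
      have hp12ne : F (flipb j1 x) ≠ F (flipb j2 x) :=
        hF.ne_of_ne (fun hc => by rw [hc] at hham12; rw [ham_eq_zero_iff.mpr rfl] at hham12; omega)
      refine ⟨flipb i2 y1,
        qdown_unique hG (z := v0) hp12ne (by omega) hadj_x1 hadj_x2 ?_ ?_ ?_ ?_⟩
      · rw [hy1]; exact hadj_z1
      · rw [hy2]; exact hadj_z2
      · omega
      · omega

end Unique

section Count

variable {V : Type*} {G : SimpleGraph V}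

lemma iso_cubeMap {i : ℕ} {S : Set V} (e : G.induce S ≃g cubeGraph i) :
    IsCubeMap G (fun x => (e.symm x : V)) ∧ Set.range (fun x => (e.symm x : V)) = S := by
  constructor
  · constructor
    · intro a b hab
      exact e.symm.injective (Subtype.ext hab)
    · intro x y
      have h := e.symm.map_rel_iff (a := x) (b := y)
      have hadj_iff : (G.induce S).Adj (e.symm x) (e.symm y) ↔
          G.Adj (e.symm x : V) (e.symm y : V) := SimpleGraph.comap_adj
      constructor
      · intro hadj
        exact ham_eq_one_iff.mpr (h.mp (hadj_iff.mpr hadj))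
      · intro hh
        exact hadj_iff.mp (h.mpr (ham_eq_one_iff.mp hh))
  · ext v
    constructor
    · rintro ⟨x, rfl⟩
      exact (e.symm x).2
    · intro hv
      exact ⟨e ⟨v, hv⟩, by simp⟩

lemma cubeMap_iso {i : ℕ} {F : (Fin i → Bool) → V} (hF : IsCubeMap G F) :
    Nonempty (G.induce (Set.range F) ≃g cubeGraph i) := by
  refine ⟨SimpleGraph.Iso.symm ⟨Equiv.ofInjective F hF.1, ?_⟩⟩
  intro a b
  show (G.induce (Set.range F)).Adj (Equiv.ofInjective F hF.1 a)
    (Equiv.ofInjective F hF.1 b) ↔ (cubeGraph i).Adj a b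
  rw [SimpleGraph.comap_adj]
  simp only [Function.Embedding.coe_subtype, Equiv.ofInjective_apply]
  have h1 : G.Adj (F a) (F b) ↔ ham a b = 1 := hF.2 a b
  exact h1.trans ⟨fun hh => ham_eq_one_iff.mp hh, fun hh => ham_eq_one_iff.mpr hh⟩

end Count

section Count2

variable {V : Type*} [Fintype V] {G : SimpleGraph V}

/-- the set of downward neighbours of `u` w.r.t. the basepoint `v0` -/
noncomputable def dnb (G : SimpleGraph V) (v0 u : V) : Finset V :=
  @Finset.filter _ (fun t => G.Adj u t ∧ G.dist v0 t + 1 = G.dist v0 u)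
    (Classical.decPred _) Finset.univ

lemma mem_dnb {v0 u t : V} : t ∈ dnb G v0 u ↔
    (G.Adj u t ∧ G.dist v0 t + 1 = G.dist v0 u) := by
  unfold dnb
  rw [@Finset.mem_filter _ _ (Classical.decPred _)]
  simp

lemma count_eq (hG : IsMedianGraph G) (v0 : V) (i : ℕ) :
    cubeCount G i = ∑ u : V, ((dnb G v0 u).card.choose i) := by
  classical
  set PF : Finset (Σ _ : V, Finset V) :=
    Finset.univ.sigma (fun u => (dnb G v0 u).powersetCard i) with hPF
  have key : ∀ (u : V) (T : Finset V), T ⊆ dnb G v0 u → T.card = i →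
      ∃ F : (Fin i → Bool) → V, IsCubeMap G F ∧ F (fun _ => true) = u ∧
        (∀ x, G.dist v0 (F x) + ham x (fun _ => true) = G.dist v0 u) ∧
        Finset.image (fun j => F (flipb j (fun _ => true))) Finset.univ = T := by
    intro u T hsub hcard
    exact cube_exists hG v0 i u T (fun t ht => mem_dnb.mp (hsub ht)) hcard
  choose Fc hc1 hc2 hc3 hc4 using key
  have pmem : ∀ p : ↥PF, p.1.2 ⊆ dnb G v0 p.1.1 ∧ p.1.2.card = i := by
    intro p
    have hp : p.1 ∈ Finset.univ.sigma (fun u => (dnb G v0 u).powersetCard i) := p.2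
    rw [Finset.mem_sigma] at hp
    exact Finset.mem_powersetCard.mp hp.2
  set fmap : ↥PF → {S : Set V // Nonempty (G.induce S ≃g cubeGraph i)} := fun p =>
    ⟨Set.range (Fc p.1.1 p.1.2 (pmem p).1 (pmem p).2),
      cubeMap_iso (hc1 p.1.1 p.1.2 (pmem p).1 (pmem p).2)⟩ with hfmap
  have hbij : Function.Bijective fmap := by
    constructor
    · -- injective
      intro p q hpq
      have hS : Set.range (Fc p.1.1 p.1.2 (pmem p).1 (pmem p).2)
          = Set.range (Fc q.1.1 q.1.2 (pmem q).1 (pmem q).2) := congrArg Subtype.val hpq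
      have hu : p.1.1 = q.1.1 := by
        have h1 : p.1.1 ∈ Set.range (Fc p.1.1 p.1.2 (pmem p).1 (pmem p).2) :=
          ⟨(fun _ => true), hc2 _ _ _ _⟩
        have h2 : q.1.1 ∈ Set.range (Fc q.1.1 q.1.2 (pmem q).1 (pmem q).2) :=
          ⟨(fun _ => true), hc2 _ _ _ _⟩
        rw [hS] at h1
        rw [← hS] at h2
        obtain ⟨x, hx⟩ := h1
        obtain ⟨y, hy⟩ := h2
        have e1 := hc3 q.1.1 q.1.2 (pmem q).1 (pmem q).2 x
        have e2 := hc3 p.1.1 p.1.2 (pmem p).1 (pmem p).2 y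
        rw [hx] at e1
        rw [hy] at e2
        have hx0 : ham x (fun _ => true) = 0 := by omega
        rw [← hx, ham_eq_zero_iff.mp hx0]
        exact hc2 q.1.1 q.1.2 (pmem q).1 (pmem q).2
      have hT : p.1.2 = q.1.2 := by
        have hsub2 : ∀ (a b : ↥PF), a.1.1 = b.1.1 →
            Set.range (Fc a.1.1 a.1.2 (pmem a).1 (pmem a).2)
              = Set.range (Fc b.1.1 b.1.2 (pmem b).1 (pmem b).2) →
            a.1.2 ⊆ b.1.2 := by
          intro a b hab hSab t ht
          have ht' : t ∈ Finset.image
              (fun j => Fc a.1.1 a.1.2 (pmem a).1 (pmem a).2 (flipb j (fun _ => true)))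
              Finset.univ := by
            rw [hc4 a.1.1 a.1.2 (pmem a).1 (pmem a).2]
            exact ht
          obtain ⟨j, -, hj⟩ := Finset.mem_image.mp ht'
          have htr : t ∈ Set.range (Fc b.1.1 b.1.2 (pmem b).1 (pmem b).2) := by
            rw [← hSab, ← hj]
            exact Set.mem_range_self _
          obtain ⟨y, hy⟩ := htr
          have hadj : G.Adj a.1.1 t := (mem_dnb.mp ((pmem a).1 ht)).1
          rw [hab] at hadj
          have hadj2 : G.Adj (Fc b.1.1 b.1.2 (pmem b).1 (pmem b).2 (fun _ => true))
              (Fc b.1.1 b.1.2 (pmem b).1 (pmem b).2 y) := by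
            rw [hc2 b.1.1 b.1.2 (pmem b).1 (pmem b).2, hy]
            exact hadj
          have hham := ((hc1 b.1.1 b.1.2 (pmem b).1 (pmem b).2).2 _ _).mp hadj2
          obtain ⟨j', hj'⟩ := eq_flipb_of_ham_one (by
            rw [ham_comm y (fun _ => true)]; exact hham)
          have : t ∈ Finset.image
              (fun j => Fc b.1.1 b.1.2 (pmem b).1 (pmem b).2 (flipb j (fun _ => true)))
              Finset.univ :=
            Finset.mem_image.mpr ⟨j', Finset.mem_univ _, by rw [← hj', hy]⟩
          rw [hc4 b.1.1 b.1.2 (pmem b).1 (pmem b).2] at this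
          exact this
        exact Finset.Subset.antisymm (hsub2 p q hu hS) (hsub2 q p hu.symm hS.symm)
      apply Subtype.ext
      exact Sigma.ext hu (heq_of_eq hT)
    · -- surjective
      rintro ⟨S, hne⟩
      obtain ⟨e⟩ := hne
      obtain ⟨hΦ, hrange⟩ := iso_cubeMap e
      set Φ : (Fin i → Bool) → V := fun x => (e.symm x : V) with hΦdef
      obtain ⟨b, hb⟩ := exists_top hG v0 hΦ
      have hgrΦ := grad_down hG hΦ v0 b hb
      have hTD : Finset.image (fun j => Φ (flipb j b)) Finset.univ ⊆ dnb G v0 (Φ b) := by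
        intro t ht
        obtain ⟨j, -, hj⟩ := Finset.mem_image.mp ht
        refine mem_dnb.mpr ⟨?_, ?_⟩
        · rw [← hj]
          exact (hΦ.2 b (flipb j b)).mpr (ham_flipb_self' j b)
        · rw [← hj]
          exact hb j
      have hflipinj : Function.Injective (fun j : Fin i => Φ (flipb j b)) := by
        intro j j' hjj
        by_contra hne2
        have h1 := congrFun (hΦ.1 hjj) j
        rw [flipb_apply_self, flipb_apply_ne hne2] at h1
        cases hbj : b j <;> rw [hbj] at h1 <;> simp at h1
      have hTcard : (Finset.image (fun j => Φ (flipb j b)) Finset.univ).card = i := by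
        rw [Finset.card_image_of_injective _ hflipinj, Finset.card_univ, Fintype.card_fin]
      have hmemPF : (⟨Φ b, Finset.image (fun j => Φ (flipb j b)) Finset.univ⟩
          : Σ _ : V, Finset V) ∈ PF := by
        refine Finset.mem_sigma.mpr ⟨Finset.mem_univ _, ?_⟩
        exact Finset.mem_powersetCard.mpr ⟨hTD, hTcard⟩
      set pp : ↥PF := ⟨⟨Φ b, Finset.image (fun j => Φ (flipb j b)) Finset.univ⟩, hmemPF⟩
        with hpp
      refine ⟨pp, ?_⟩
      apply Subtype.ext
      show Set.range (Fc pp.1.1 pp.1.2 (pmem pp).1 (pmem pp).2) = S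
      rw [← hrange]
      have gr1 : ∀ x, G.dist v0 (Fc pp.1.1 pp.1.2 (pmem pp).1 (pmem pp).2 x)
          + ham (fun _ => true) x
          = G.dist v0 (Fc pp.1.1 pp.1.2 (pmem pp).1 (pmem pp).2 (fun _ => true)) := by
        intro x
        rw [hc2 pp.1.1 pp.1.2 (pmem pp).1 (pmem pp).2, ham_comm]
        exact hc3 pp.1.1 pp.1.2 (pmem pp).1 (pmem pp).2 x
      have topeq : Fc pp.1.1 pp.1.2 (pmem pp).1 (pmem pp).2 (fun _ => true) = Φ b :=
        hc2 pp.1.1 pp.1.2 (pmem pp).1 (pmem pp).2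
      have himg1 : ∀ j : Fin i, ∃ j' : Fin i,
          Fc pp.1.1 pp.1.2 (pmem pp).1 (pmem pp).2 (flipb j (fun _ => true))
            = Φ (flipb j' b) := by
        intro j
        have hmem : Fc pp.1.1 pp.1.2 (pmem pp).1 (pmem pp).2 (flipb j (fun _ => true))
            ∈ Finset.image (fun j => Φ (flipb j b)) Finset.univ := by
          have h2 : Fc pp.1.1 pp.1.2 (pmem pp).1 (pmem pp).2 (flipb j (fun _ => true))
              ∈ Finset.image
                (fun j => Fc pp.1.1 pp.1.2 (pmem pp).1 (pmem pp).2
                  (flipb j (fun _ => true))) Finset.univ :=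
            Finset.mem_image.mpr ⟨j, Finset.mem_univ _, rfl⟩
          rw [hc4 pp.1.1 pp.1.2 (pmem pp).1 (pmem pp).2] at h2
          exact h2
        obtain ⟨j', -, hj'⟩ := Finset.mem_image.mp hmem
        exact ⟨j', hj'.symm⟩
      have himg2 : ∀ j' : Fin i, ∃ j : Fin i, Φ (flipb j' b)
          = Fc pp.1.1 pp.1.2 (pmem pp).1 (pmem pp).2 (flipb j (fun _ => true)) := by
        intro j'
        have hmem : Φ (flipb j' b) ∈ Finset.image
            (fun j => Fc pp.1.1 pp.1.2 (pmem pp).1 (pmem pp).2 (flipb j (fun _ => true)))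
            Finset.univ := by
          rw [hc4 pp.1.1 pp.1.2 (pmem pp).1 (pmem pp).2]
          exact Finset.mem_image.mpr ⟨j', Finset.mem_univ _, rfl⟩
        obtain ⟨j, -, hj⟩ := Finset.mem_image.mp hmem
        exact ⟨j, hj.symm⟩
      apply Set.Subset.antisymm
      · rintro _ ⟨x, rfl⟩
        obtain ⟨y, hy⟩ := range_subset hG v0
          (hc1 pp.1.1 pp.1.2 (pmem pp).1 (pmem pp).2) hΦ gr1 hgrΦ topeq himg1 x
        exact ⟨y, hy.symm⟩
      · rintro _ ⟨x, rfl⟩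
        obtain ⟨y, hy⟩ := range_subset hG v0 hΦ
          (hc1 pp.1.1 pp.1.2 (pmem pp).1 (pmem pp).2) hgrΦ gr1 topeq.symm himg2 x
        exact ⟨y, hy.symm⟩
  have hnat : Nat.card ↥PF = Nat.card {S : Set V // Nonempty (G.induce S ≃g cubeGraph i)} :=
    Nat.card_eq_of_bijective fmap hbij
  have h1 : cubeCount G i = Nat.card ↥PF := hnat.symm
  rw [h1, Nat.card_eq_fintype_card, Fintype.card_coe, hPF, Finset.card_sigma]
  exact Finset.sum_congr rfl (fun uu _ => Finset.card_powersetCard i (dnb G v0 uu))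

end Count2

end MedianCube

open MedianCube in
/-- For a finite median graph `G`,
`Σ_i (−1)ⁱ α_i(G) = 1`; equivalently, `C(G,−1) = 1`. -/
theorem cubePoly_eval_neg_one {V : Type*} [Fintype V] (G : SimpleGraph V)
    (hG : IsMedianGraph G) :
    (∑ i ∈ Finset.range (Nat.card V + 1), (-1 : ℤ) ^ i * (cubeCount G i : ℤ) = 1) ∧
      (cubePoly G).eval (-1 : ℤ) = 1 := by
  classical
  have hconn := hG.1
  obtain ⟨v0⟩ : Nonempty V := hconn.nonempty
  -- the downward neighbourhood is empty iff the vertex is the basepoint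
  have hDv0 : ∀ u : V, ((dnb G v0 u).card = 0 ↔ u = v0) := by
    intro u
    constructor
    · intro h0
      by_contra hne
      have hd : G.dist v0 u ≠ 0 := fun hc => hne ((hconn.dist_eq_zero_iff).mp hc).symm
      obtain ⟨p, hp⟩ := hconn.exists_walk_length_eq_dist u v0
      cases p with
      | nil =>
        rw [SimpleGraph.dist_self] at hd
        exact hd rfl
      | @cons _ y _ hadj q =>
        have hq : q.length + 1 = G.dist u v0 := by
          rw [← hp]; rfl
        have h1 : G.dist v0 y ≤ q.length := by
          rw [dc]; exact SimpleGraph.dist_le q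
        have h2 : G.dist v0 u ≤ G.dist v0 y + 1 := by
          have ht := hconn.dist_triangle (u := v0) (v := y) (w := u)
          have he : G.dist y u = 1 := by
            rw [dc]; exact adj_dist_eq_one hG hadj
          omega
        have hcomm : G.dist u v0 = G.dist v0 u := dc G u v0
        have hmem : y ∈ dnb G v0 u := mem_dnb.mpr ⟨hadj, by omega⟩
        exact (Finset.card_ne_zero_of_mem hmem) h0
    · rintro rfl
      rw [Finset.card_eq_zero, Finset.eq_empty_iff_forall_notMem]
      intro t ht
      have := (mem_dnb.mp ht).2
      rw [SimpleGraph.dist_self] at this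
      omega
  have hsum : ∑ i ∈ Finset.range (Nat.card V + 1), (-1 : ℤ) ^ i * (cubeCount G i : ℤ) = 1 := by
    have hswap : ∑ i ∈ Finset.range (Nat.card V + 1), (-1 : ℤ) ^ i * (cubeCount G i : ℤ)
        = ∑ u : V, ∑ i ∈ Finset.range (Nat.card V + 1),
            (-1 : ℤ) ^ i * ((dnb G v0 u).card.choose i : ℤ) := by
      rw [← Finset.sum_comm]
      refine Finset.sum_congr rfl fun i _ => ?_
      rw [count_eq hG v0 i]
      push_cast
      rw [Finset.mul_sum]
    rw [hswap]
    have hterm : ∀ u : V, ∑ i ∈ Finset.range (Nat.card V + 1),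
        (-1 : ℤ) ^ i * ((dnb G v0 u).card.choose i : ℤ)
        = if u = v0 then 1 else 0 := by
      intro u
      have hle : (dnb G v0 u).card ≤ Nat.card V := by
        rw [Nat.card_eq_fintype_card]
        exact Finset.card_le_univ _
      have hshrink : ∑ i ∈ Finset.range ((dnb G v0 u).card + 1),
          (-1 : ℤ) ^ i * ((dnb G v0 u).card.choose i : ℤ)
          = ∑ i ∈ Finset.range (Nat.card V + 1),
          (-1 : ℤ) ^ i * ((dnb G v0 u).card.choose i : ℤ) := by
        refine Finset.sum_subset (Finset.range_subset_range.mpr (by omega)) ?_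
        intro x _ hx
        rw [Finset.mem_range, not_lt] at hx
        rw [Nat.choose_eq_zero_of_lt (by omega)]
        push_cast
        ring
      rw [← hshrink, Int.alternating_sum_range_choose]
      by_cases hu : u = v0
      · rw [if_pos ((hDv0 u).mpr hu), if_pos hu]
      · rw [if_neg (fun hc => hu ((hDv0 u).mp hc)), if_neg hu]
    rw [Finset.sum_congr rfl (fun u _ => hterm u), Finset.sum_ite_eq' Finset.univ v0 (fun _ => (1 : ℤ))]
    rw [if_pos (Finset.mem_univ v0)]
  refine ⟨hsum, ?_⟩
  have heval : (cubePoly G).eval (-1 : ℤ)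
      = ∑ i ∈ Finset.range (Nat.card V + 1), (cubeCount G i : ℤ) * (-1 : ℤ) ^ i := by
    rw [cubePoly, Polynomial.eval_finset_sum]
    refine Finset.sum_congr rfl fun i _ => ?_
    rw [Polynomial.eval_mul, Polynomial.eval_C, Polynomial.eval_pow, Polynomial.eval_X]
  have hcomm : ∑ i ∈ Finset.range (Nat.card V + 1), (cubeCount G i : ℤ) * (-1 : ℤ) ^ i
      = ∑ i ∈ Finset.range (Nat.card V + 1), (-1 : ℤ) ^ i * (cubeCount G i : ℤ) :=
    Finset.sum_congr rfl fun i _ => mul_comm _ _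
  rw [heval, hcomm]
  exact hsum
end

section
/- Let G be a finite simple graph and let {G_1, G_2} be a cubical cover of G with G_0 the induced subgraph on V(G_1) ∩ V(G_2), and let G* be the expansion of G with respect to {G_1, G_2}. Then C(G*, x) = C(G_1, x) + C(G_2, x) + x·C(G_0, x). -/
open SimpleGraph Polynomial

/-- The expansion of `G` with respect to a pair of induced subgraphs given by
vertex sets `S₁` and `S₂`: the disjoint union of copies of `G.induce S₁` and
`G.induce S₂`, with an edge between the two copies of each vertex of
`S₁ ∩ S₂`. -/
def expansionGraph {V : Type*} (G : SimpleGraph V) (S₁ S₂ : Set V) :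
    SimpleGraph (↥S₁ ⊕ ↥S₂) where
  Adj x y :=
    match x, y with
    | Sum.inl u, Sum.inl v => G.Adj u v
    | Sum.inr u, Sum.inr v => G.Adj u v
    | Sum.inl u, Sum.inr v => (u : V) = (v : V)
    | Sum.inr u, Sum.inl v => (u : V) = (v : V)
  symm := by
    constructor
    rintro (u | u) (v | v) h
    · exact G.adj_symm h
    · exact h.symm
    · exact h.symm
    · exact G.adj_symm h
  loopless := by
    constructor
    rintro (u | u) h
    · exact G.irrefl h
    · exact G.irrefl h

namespace CubeAux
variable {n m : ℕ}

def flip (j : Fin n) (f : Fin n → Bool) : Fin n → Bool := Function.update f j (!(f j))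
@[simp] lemma flip_apply_same (j : Fin n) (f : Fin n → Bool) : flip j f j = !(f j) := by
  simp [flip]
lemma flip_apply_ne (j k : Fin n) (f : Fin n → Bool) (h : k ≠ j) : flip j f k = f k := by
  simp [flip, Function.update_of_ne h]
@[simp] lemma flip_flip (j : Fin n) (f : Fin n → Bool) : flip j (flip j f) = f := by
  funext k
  rcases eq_or_ne k j with rfl | h
  · simp
  · rw [flip_apply_ne _ _ _ h, flip_apply_ne _ _ _ h]
lemma flip_comm {j k : Fin n} (h : j ≠ k) (f : Fin n → Bool) :
    flip j (flip k f) = flip k (flip j f) := by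
  simp only [flip, Function.update_of_ne h, Function.update_of_ne h.symm,
    Function.update_comm h]
lemma adj_flip (j : Fin n) (f : Fin n → Bool) : (cubeGraph n).Adj f (flip j f) := by
  refine ⟨j, by simp, fun k hk => ?_⟩
  by_contra h
  exact hk (flip_apply_ne j k f h).symm
lemma adj_iff {f g : Fin n → Bool} : (cubeGraph n).Adj f g ↔ ∃ j, g = flip j f := by
  constructor
  · rintro ⟨j, hj, hu⟩
    refine ⟨j, funext fun k => ?_⟩
    rcases eq_or_ne k j with rfl | h
    · rw [flip_apply_same]
      revert hj; cases f k <;> cases g k <;> simp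
    · rw [flip_apply_ne _ _ _ h]
      by_contra hc
      exact h (hu k (fun he => hc he.symm))
  · rintro ⟨j, rfl⟩; exact adj_flip j f
def dcount (f g : Fin n → Bool) : ℕ := (Finset.univ.filter (fun k => f k ≠ g k)).card
lemma dcount_eq_zero {f g : Fin n → Bool} (h : dcount f g = 0) : f = g := by
  funext k
  by_contra hk
  have : k ∈ Finset.univ.filter (fun k => f k ≠ g k) := by simp [hk]
  rw [Finset.card_eq_zero.mp h] at this
  exact absurd this (Finset.notMem_empty k)
lemma dcount_flip_lt {f g : Fin n → Bool} {j : Fin n} (h : f j ≠ g j) :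
    dcount (flip j f) g < dcount f g := by
  have hsub : Finset.univ.filter (fun k => flip j f k ≠ g k) ⊆
      (Finset.univ.filter (fun k => f k ≠ g k)).erase j := by
    intro k hk
    simp only [Finset.mem_filter, Finset.mem_univ, true_and] at hk
    rcases eq_or_ne k j with rfl | hne
    · exfalso
      apply hk
      rw [flip_apply_same]
      revert h; cases f k <;> cases g k <;> simp
    · rw [flip_apply_ne _ _ _ hne] at hk
      exact Finset.mem_erase.mpr ⟨hne, by simp [hk]⟩
  calc dcount (flip j f) g ≤ ((Finset.univ.filter (fun k => f k ≠ g k)).erase j).card :=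
        Finset.card_le_card hsub
    _ < dcount f g := by
        apply Finset.card_erase_lt_of_mem
        simp [h]

section Split
variable (σ : (Fin n → Bool) → Bool)
  (H2 : ∀ f g h, (cubeGraph n).Adj f g → (cubeGraph n).Adj f h →
    σ g ≠ σ f → σ h ≠ σ f → g = h)

include H2

lemma square {j k : Fin n} (f : Fin n → Bool) (hjk : k ≠ j)
    (hj : σ (flip j f) ≠ σ f) : σ (flip j (flip k f)) ≠ σ (flip k f) := by
  have hflipne : flip j f ≠ flip k f := by
    intro h
    have := congrFun h j
    rw [flip_apply_same, flip_apply_ne _ _ _ (Ne.symm hjk)] at this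
    cases f j <;> simp_all
  have hk : σ (flip k f) = σ f := by
    by_contra hc
    exact hflipne (H2 f (flip j f) (flip k f) (adj_flip j f) (adj_flip k f) hj hc)
  intro hc
  rw [hk] at hc
  have hadj1 : (cubeGraph n).Adj (flip j f) f := by
    have := adj_flip j (flip j f); rwa [flip_flip] at this
  have hadj2 : (cubeGraph n).Adj (flip j f) (flip k (flip j f)) := adj_flip k (flip j f)
  have h1 : σ f ≠ σ (flip j f) := Ne.symm hj
  have h2 : σ (flip k (flip j f)) ≠ σ (flip j f) := by
    rw [← flip_comm hjk.symm]
    rw [hc]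
    exact Ne.symm hj
  have heq := H2 (flip j f) f (flip k (flip j f)) hadj1 hadj2 h1 h2
  have hck := congrFun heq k
  rw [flip_apply_same, flip_apply_ne _ _ _ hjk] at hck
  simp at hck

lemma all_j_cross {j : Fin n} {a : Fin n → Bool} (ha : σ (flip j a) ≠ σ a) :
    ∀ f, σ (flip j f) ≠ σ f := by
  have key : ∀ m (f : Fin n → Bool),
      (Finset.univ.filter (fun k => k ≠ j ∧ f k ≠ a k)).card = m → σ (flip j f) ≠ σ f := by
    intro m
    induction m using Nat.strong_induction_on with
    | _ m ih =>
      intro f hcard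
      rcases Nat.eq_zero_or_pos m with rfl | hpos
      · have hagree : ∀ k, k ≠ j → f k = a k := by
          intro k hk
          by_contra hc
          have : k ∈ Finset.univ.filter (fun k => k ≠ j ∧ f k ≠ a k) := by simp [hk, hc]
          rw [Finset.card_eq_zero.mp hcard] at this
          exact absurd this (Finset.notMem_empty k)
        rcases eq_or_ne (f j) (a j) with hfj | hfj
        · have : f = a := funext fun k => by
            rcases eq_or_ne k j with rfl | hk
            · exact hfj
            · exact hagree k hk
          rwa [this]
        · have : f = flip j a := funext fun k => by
            rcases eq_or_ne k j with rfl | hk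
            · rw [flip_apply_same]; revert hfj; cases f k <;> cases a k <;> simp
            · rw [flip_apply_ne _ _ _ hk]; exact hagree k hk
          rw [this, flip_flip]
          exact Ne.symm ha
      · have hne : (Finset.univ.filter (fun k => k ≠ j ∧ f k ≠ a k)).Nonempty := by
          rw [← Finset.card_pos, hcard]; exact hpos
        obtain ⟨k, hk⟩ := hne
        simp only [Finset.mem_filter, Finset.mem_univ, true_and] at hk
        obtain ⟨hkj, hka⟩ := hk
        set f' := flip k f with hf'
        have hcard' : (Finset.univ.filter (fun l => l ≠ j ∧ f' l ≠ a l)).card < m := by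
          rw [← hcard]
          apply Finset.card_lt_card
          constructor
          · intro l hl
            simp only [Finset.mem_filter, Finset.mem_univ, true_and] at hl ⊢
            refine ⟨hl.1, ?_⟩
            rcases eq_or_ne l k with rfl | hlk
            · exfalso
              apply hl.2
              rw [hf', flip_apply_same]
              revert hka; cases f l <;> cases a l <;> simp
            · have := hl.2
              rwa [hf', flip_apply_ne _ _ _ hlk] at this
          · intro hsub
            have hk' : k ∈ Finset.univ.filter (fun l => l ≠ j ∧ f l ≠ a l) := by
              simp [hkj, hka]
            have := hsub hk'
            simp only [Finset.mem_filter, Finset.mem_univ, true_and] at this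
            apply this.2
            rw [hf', flip_apply_same]
            revert hka; cases f k <;> cases a k <;> simp
        have ih' := ih _ hcard' f' rfl
        have hsq := square σ H2 f' hkj ih'
        rwa [hf', flip_flip] at hsq
  exact fun f => key _ f rfl

lemma cube_split (hnc : ∃ f g, σ f ≠ σ g) :
    ∃ j : Fin n, (∀ f, σ (flip j f) ≠ σ f) ∧ (∀ f g, f j = g j → σ f = σ g) := by
  obtain ⟨f₀, g₀, hfg⟩ := hnc
  have step1 : ∃ (h : Fin n → Bool) (j : Fin n), σ (flip j h) ≠ σ h := by
    clear H2
    have : ∀ m (f g : Fin n → Bool), dcount f g = m → σ f ≠ σ g →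
        ∃ (h : Fin n → Bool) (j : Fin n), σ (flip j h) ≠ σ h := by
      intro m
      induction m using Nat.strong_induction_on with
      | _ m ih =>
        intro f g hcard hσ
        rcases Nat.eq_zero_or_pos m with rfl | hpos
        · exact absurd (dcount_eq_zero hcard) (fun h => hσ (h ▸ rfl))
        · have hne : (Finset.univ.filter (fun k => f k ≠ g k)).Nonempty := by
            rw [← Finset.card_pos]
            rw [show (Finset.univ.filter (fun k => f k ≠ g k)).card = m from hcard]
            exact hpos
          obtain ⟨j, hj⟩ := hne
          simp only [Finset.mem_filter, Finset.mem_univ, true_and] at hj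
          rcases eq_or_ne (σ (flip j f)) (σ f) with heq | hneq
          · exact ih _ (hcard ▸ dcount_flip_lt hj) (flip j f) g rfl (heq.symm ▸ hσ)
          · exact ⟨f, j, hneq⟩
    exact this _ f₀ g₀ rfl hfg
  obtain ⟨a, j, ha⟩ := step1
  refine ⟨j, all_j_cross σ H2 ha, ?_⟩
  have hcross := all_j_cross σ H2 ha
  have noncross : ∀ (f : Fin n → Bool) (k : Fin n), k ≠ j → σ (flip k f) = σ f := by
    intro f k hk
    by_contra hc
    have heq := H2 f (flip j f) (flip k f) (adj_flip j f) (adj_flip k f) (hcross f) hc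
    have hcj := congrFun heq j
    rw [flip_apply_same, flip_apply_ne _ _ _ (Ne.symm hk)] at hcj
    simp at hcj
  have key : ∀ m (f g : Fin n → Bool), dcount f g = m → f j = g j → σ f = σ g := by
    intro m
    induction m using Nat.strong_induction_on with
    | _ m ih =>
      intro f g hcard hj
      rcases Nat.eq_zero_or_pos m with rfl | hpos
      · rw [dcount_eq_zero hcard]
      · have hne : (Finset.univ.filter (fun k => f k ≠ g k)).Nonempty := by
          rw [← Finset.card_pos]
          rw [show (Finset.univ.filter (fun k => f k ≠ g k)).card = m from hcard]
          exact hpos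
        obtain ⟨k, hk⟩ := hne
        simp only [Finset.mem_filter, Finset.mem_univ, true_and] at hk
        have hkj : k ≠ j := fun h => hk (h ▸ hj)
        have h1 : σ (flip k f) = σ f := noncross f k hkj
        have h2 : (flip k f) j = g j := by
          rw [flip_apply_ne _ _ _ (Ne.symm hkj)]; exact hj
        have := ih _ (hcard ▸ dcount_flip_lt hk) (flip k f) g rfl h2
        rw [← h1, this]
  exact fun f g h => key _ f g rfl h

end Split

lemma adj_cons_iff (f g : Fin (m+1) → Bool) :
    (cubeGraph (m+1)).Adj f g ↔
      ((f 0 ≠ g 0 ∧ Fin.tail f = Fin.tail g) ∨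
       (f 0 = g 0 ∧ (cubeGraph m).Adj (Fin.tail f) (Fin.tail g))) := by
  constructor
  · rintro ⟨i, hi, hu⟩
    rcases eq_or_ne i 0 with rfl | hi0
    · left
      refine ⟨hi, funext fun k => ?_⟩
      by_contra hc
      exact (Fin.succ_ne_zero k) (hu k.succ hc)
    · right
      obtain ⟨k, rfl⟩ := Fin.exists_succ_eq.mpr hi0
      constructor
      · by_contra hc; exact Fin.succ_ne_zero k ((hu 0 hc) ▸ rfl)
      · exact ⟨k, hi, fun l hl => Fin.succ_injective m (hu l.succ hl)⟩
  · rintro (⟨h0, ht⟩ | ⟨h0, k, hk, hu⟩)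
    · refine ⟨0, h0, fun l hl => ?_⟩
      rcases Fin.eq_zero_or_eq_succ l with rfl | ⟨l', rfl⟩
      · rfl
      · exact absurd (congrFun ht l') hl
    · refine ⟨k.succ, hk, fun l hl => ?_⟩
      rcases Fin.eq_zero_or_eq_succ l with rfl | ⟨l', rfl⟩
      · exact absurd h0 hl
      · rw [hu l' hl]

lemma adj_comp_iff (π : Fin n ≃ Fin n) (f g : Fin n → Bool) :
    (cubeGraph n).Adj (f ∘ π) (g ∘ π) ↔ (cubeGraph n).Adj f g := by
  have fwd : ∀ (π : Fin n ≃ Fin n) (f g : Fin n → Bool),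
      (cubeGraph n).Adj (f ∘ π) (g ∘ π) → (cubeGraph n).Adj f g := by
    rintro π f g ⟨i, hi, hu⟩
    refine ⟨π i, hi, fun y hy => ?_⟩
    have : π.symm y = i := hu (π.symm y) (by simpa using hy)
    rw [← this, Equiv.apply_symm_apply]
  constructor
  · exact fwd π f g
  · intro h
    apply fwd π.symm (f ∘ π) (g ∘ π)
    have h1 : (f ∘ π) ∘ π.symm = f := by funext x; simp
    have h2 : (g ∘ π) ∘ π.symm = g := by funext x; simp
    rw [h1, h2]
    exact h

lemma flip_comp (π : Fin n ≃ Fin n) (a : Fin n) (f : Fin n → Bool) :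
    (flip a f) ∘ π = flip (π.symm a) (f ∘ π) := by
  funext k
  rcases eq_or_ne k (π.symm a) with rfl | hk
  · simp only [Function.comp_apply, Equiv.apply_symm_apply, flip_apply_same]
  · have hπk : π k ≠ a := fun h => hk (by rw [← h, Equiv.symm_apply_apply])
    simp only [Function.comp_apply]
    rw [flip_apply_ne _ _ _ hπk, flip_apply_ne _ _ _ hk]
    rfl

noncomputable def induceImageIso {V W : Type*} (G : SimpleGraph V) (H : SimpleGraph W)
    (ι : W → V) (hinj : Function.Injective ι)
    (hadj : ∀ a b, G.Adj (ι a) (ι b) ↔ H.Adj a b) (S : Set W) :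
    G.induce (ι '' S) ≃g H.induce S where
  toEquiv := (Equiv.Set.image ι S hinj).symm
  map_rel_iff' := by
    intro a b
    simp only [comap_adj, Function.Embedding.coe_subtype]
    rw [← hadj]
    have ha : ι (((Equiv.Set.image ι S hinj).symm a : S) : W) = (a : V) := by
      obtain ⟨x, hx⟩ := (Equiv.Set.image ι S hinj).surjective a
      rw [← hx, Equiv.symm_apply_apply]
      simp [Equiv.Set.image, Equiv.Set.imageOfInjOn]
    have hb : ι (((Equiv.Set.image ι S hinj).symm b : S) : W) = (b : V) := by
      obtain ⟨x, hx⟩ := (Equiv.Set.image ι S hinj).surjective b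
      rw [← hx, Equiv.symm_apply_apply]
      simp [Equiv.Set.image, Equiv.Set.imageOfInjOn]
    rw [ha, hb]

lemma cube_set_nonempty {V : Type*} {G : SimpleGraph V} {S : Set V} {i : ℕ}
    (h : Nonempty (G.induce S ≃g cubeGraph i)) : S.Nonempty := by
  obtain ⟨e⟩ := h
  exact ⟨(e.symm (fun _ => false) : S), (e.symm (fun _ => false)).2⟩

lemma cubeCount_eq_zero' {V : Type*} [Finite V] (G : SimpleGraph V) {i : ℕ}
    (h : Nat.card V < i + 1) : cubeCount G i = 0 := by
  have : IsEmpty {S : Set V // Nonempty (G.induce S ≃g cubeGraph i)} := by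
    constructor
    rintro ⟨S, ⟨e⟩⟩
    have h1 : Nat.card S = 2 ^ i := by
      rw [Nat.card_congr e.toEquiv]
      simp [Nat.card_eq_fintype_card]
    have h2 : Nat.card S ≤ Nat.card V :=
      Nat.card_le_card_of_injective (Subtype.val : S → V) Subtype.val_injective
    have h3 : i + 1 ≤ 2 ^ i := Nat.lt_two_pow_self (n := i)
    omega
  rw [cubeCount]
  simp [Nat.card_of_isEmpty]

end CubeAux

namespace ExpAux
open CubeAux

variable {V : Type*} (G : SimpleGraph V) (S₁ S₂ : Set V)

@[simp] lemma exp_adj_inl_inl (u v : ↥S₁) :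
    (expansionGraph G S₁ S₂).Adj (Sum.inl u) (Sum.inl v) ↔ G.Adj u v := Iff.rfl
@[simp] lemma exp_adj_inr_inr (u v : ↥S₂) :
    (expansionGraph G S₁ S₂).Adj (Sum.inr u) (Sum.inr v) ↔ G.Adj u v := Iff.rfl
@[simp] lemma exp_adj_inl_inr (u : ↥S₁) (v : ↥S₂) :
    (expansionGraph G S₁ S₂).Adj (Sum.inl u) (Sum.inr v) ↔ (u : V) = (v : V) := Iff.rfl
@[simp] lemma exp_adj_inr_inl (u : ↥S₂) (v : ↥S₁) :
    (expansionGraph G S₁ S₂).Adj (Sum.inr u) (Sum.inl v) ↔ (u : V) = (v : V) := Iff.rfl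

def tL : ↥(S₁ ∩ S₂) → ↥S₁ := fun w => ⟨w.1, w.2.1⟩
def tR : ↥(S₁ ∩ S₂) → ↥S₂ := fun w => ⟨w.1, w.2.2⟩

lemma tL_injective : Function.Injective (tL S₁ S₂) := fun a b h =>
  Subtype.ext (congrArg Subtype.val h : (tL S₁ S₂ a : V) = tL S₁ S₂ b)
lemma tR_injective : Function.Injective (tR S₁ S₂) := fun a b h =>
  Subtype.ext (congrArg Subtype.val h : (tR S₁ S₂ a : V) = tR S₁ S₂ b)

def F0set (T : Set ↥(S₁ ∩ S₂)) : Set (↥S₁ ⊕ ↥S₂) :=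
  Sum.inl '' (tL S₁ S₂ '' T) ∪ Sum.inr '' (tR S₁ S₂ '' T)

lemma mem_F0set_inl {T : Set ↥(S₁ ∩ S₂)} {u : ↥S₁} :
    Sum.inl u ∈ F0set S₁ S₂ T ↔ u ∈ tL S₁ S₂ '' T := by
  simp [F0set]

lemma mem_F0set_inr {T : Set ↥(S₁ ∩ S₂)} {v : ↥S₂} :
    Sum.inr v ∈ F0set S₁ S₂ T ↔ v ∈ tR S₁ S₂ '' T := by
  simp [F0set]

section F0

variable {T : Set ↥(S₁ ∩ S₂)} {m : ℕ}

/-- forward map for the mixed case -/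
noncomputable def F0fun (T : Set ↥(S₁ ∩ S₂)) (m : ℕ)
    (e : ((G.induce (S₁ ∩ S₂)).induce T) ≃g cubeGraph m) :
    (Fin (m+1) → Bool) → ↥(F0set S₁ S₂ T) := fun f =>
  if h : f 0 = false then
    ⟨Sum.inl (tL S₁ S₂ (e.symm (Fin.tail f)).1),
      Or.inl ⟨tL S₁ S₂ (e.symm (Fin.tail f)).1, ⟨_, (e.symm (Fin.tail f)).2, rfl⟩, rfl⟩⟩
  else
    ⟨Sum.inr (tR S₁ S₂ (e.symm (Fin.tail f)).1),
      Or.inr ⟨tR S₁ S₂ (e.symm (Fin.tail f)).1, ⟨_, (e.symm (Fin.tail f)).2, rfl⟩, rfl⟩⟩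

lemma F0fun_val_false (e : ((G.induce (S₁ ∩ S₂)).induce T) ≃g cubeGraph m)
    {f : Fin (m+1) → Bool} (h : f 0 = false) :
    (F0fun G S₁ S₂ T m e f : ↥S₁ ⊕ ↥S₂) = Sum.inl (tL S₁ S₂ (e.symm (Fin.tail f)).1) := by
  simp [F0fun, h]

lemma F0fun_val_true (e : ((G.induce (S₁ ∩ S₂)).induce T) ≃g cubeGraph m)
    {f : Fin (m+1) → Bool} (h : f 0 = true) :
    (F0fun G S₁ S₂ T m e f : ↥S₁ ⊕ ↥S₂) = Sum.inr (tR S₁ S₂ (e.symm (Fin.tail f)).1) := by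
  simp [F0fun, h]

lemma eval_tail_eq (e : ((G.induce (S₁ ∩ S₂)).induce T) ≃g cubeGraph m)
    {p q : Fin m → Bool} (h : ((e.symm p).1 : V) = ((e.symm q).1 : V)) : p = q :=
  e.symm.injective (Subtype.ext (Subtype.ext h))

lemma F0fun_bijective (e : ((G.induce (S₁ ∩ S₂)).induce T) ≃g cubeGraph m) :
    Function.Bijective (F0fun G S₁ S₂ T m e) := by
  constructor
  · intro f g hfg
    have hfg' := congrArg Subtype.val hfg
    have tail_eq : Fin.tail f = Fin.tail g ∧ f 0 = g 0 := by
      rcases Bool.eq_false_or_eq_true (f 0) with hf | hf <;>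
        rcases Bool.eq_false_or_eq_true (g 0) with hg | hg
      · rw [F0fun_val_true G S₁ S₂ e hf, F0fun_val_true G S₁ S₂ e hg] at hfg'
        have h1 := tR_injective S₁ S₂ (Sum.inr_injective hfg')
        exact ⟨eval_tail_eq G S₁ S₂ e (congrArg Subtype.val h1),
          by rw [hf, hg]⟩
      · rw [F0fun_val_true G S₁ S₂ e hf, F0fun_val_false G S₁ S₂ e hg] at hfg'
        exact absurd hfg' (by simp)
      · rw [F0fun_val_false G S₁ S₂ e hf, F0fun_val_true G S₁ S₂ e hg] at hfg'
        exact absurd hfg' (by simp)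
      · rw [F0fun_val_false G S₁ S₂ e hf, F0fun_val_false G S₁ S₂ e hg] at hfg'
        have h1 := tL_injective S₁ S₂ (Sum.inl_injective hfg')
        exact ⟨eval_tail_eq G S₁ S₂ e (congrArg Subtype.val h1),
          by rw [hf, hg]⟩
    funext k
    rcases Fin.eq_zero_or_eq_succ k with rfl | ⟨k', rfl⟩
    · exact tail_eq.2
    · exact congrFun tail_eq.1 k'
  · rintro ⟨x, hx⟩
    rcases x with u | v
    · rw [mem_F0set_inl] at hx
      obtain ⟨w, hw, rfl⟩ := hx
      refine ⟨Fin.cons false (e ⟨w, hw⟩), Subtype.ext ?_⟩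
      rw [F0fun_val_false G S₁ S₂ e (by simp)]
      rw [show Fin.tail (Fin.cons false (e ⟨w, hw⟩) : Fin (m+1) → Bool) = e ⟨w, hw⟩ from
        Fin.tail_cons _ _]
      rw [RelIso.symm_apply_apply]
    · rw [mem_F0set_inr] at hx
      obtain ⟨w, hw, rfl⟩ := hx
      refine ⟨Fin.cons true (e ⟨w, hw⟩), Subtype.ext ?_⟩
      rw [F0fun_val_true G S₁ S₂ e (by simp)]
      rw [show Fin.tail (Fin.cons true (e ⟨w, hw⟩) : Fin (m+1) → Bool) = e ⟨w, hw⟩ from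
        Fin.tail_cons _ _]
      rw [RelIso.symm_apply_apply]

lemma F0fun_adj (e : ((G.induce (S₁ ∩ S₂)).induce T) ≃g cubeGraph m)
    (f g : Fin (m+1) → Bool) :
    ((expansionGraph G S₁ S₂).induce (F0set S₁ S₂ T)).Adj
      (F0fun G S₁ S₂ T m e f) (F0fun G S₁ S₂ T m e g) ↔ (cubeGraph (m+1)).Adj f g := by
  have hGadj : ∀ p q : Fin m → Bool,
      G.Adj ((e.symm p).1 : V) ((e.symm q).1 : V) ↔ (cubeGraph m).Adj p q := by
    intro p q
    exact (e.symm.map_adj_iff (v := p) (w := q))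
  have hval : ∀ p q : Fin m → Bool,
      (((e.symm p).1 : V) = ((e.symm q).1 : V)) ↔ p = q := by
    intro p q
    exact ⟨eval_tail_eq G S₁ S₂ e, fun h => by rw [h]⟩
  have hcomap : ((expansionGraph G S₁ S₂).induce (F0set S₁ S₂ T)).Adj
      (F0fun G S₁ S₂ T m e f) (F0fun G S₁ S₂ T m e g) ↔
      (expansionGraph G S₁ S₂).Adj (F0fun G S₁ S₂ T m e f : ↥S₁ ⊕ ↥S₂)
        (F0fun G S₁ S₂ T m e g : ↥S₁ ⊕ ↥S₂) := Iff.rfl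
  rw [hcomap, adj_cons_iff]
  rcases Bool.eq_false_or_eq_true (f 0) with hf | hf <;>
    rcases Bool.eq_false_or_eq_true (g 0) with hg | hg
  · rw [F0fun_val_true G S₁ S₂ e hf, F0fun_val_true G S₁ S₂ e hg, exp_adj_inr_inr]
    rw [show G.Adj (tR S₁ S₂ (e.symm (Fin.tail f)).1) (tR S₁ S₂ (e.symm (Fin.tail g)).1) ↔
      (cubeGraph m).Adj (Fin.tail f) (Fin.tail g) from hGadj _ _]
    simp [hf, hg]
  · rw [F0fun_val_true G S₁ S₂ e hf, F0fun_val_false G S₁ S₂ e hg, exp_adj_inr_inl]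
    rw [show ((tR S₁ S₂ (e.symm (Fin.tail f)).1 : V) = (tL S₁ S₂ (e.symm (Fin.tail g)).1 : V)) ↔
      Fin.tail f = Fin.tail g from hval _ _]
    simp [hf, hg]
  · rw [F0fun_val_false G S₁ S₂ e hf, F0fun_val_true G S₁ S₂ e hg, exp_adj_inl_inr]
    rw [show ((tL S₁ S₂ (e.symm (Fin.tail f)).1 : V) = (tR S₁ S₂ (e.symm (Fin.tail g)).1 : V)) ↔
      Fin.tail f = Fin.tail g from hval _ _]
    simp [hf, hg]
  · rw [F0fun_val_false G S₁ S₂ e hf, F0fun_val_false G S₁ S₂ e hg, exp_adj_inl_inl]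
    rw [show G.Adj (tL S₁ S₂ (e.symm (Fin.tail f)).1) (tL S₁ S₂ (e.symm (Fin.tail g)).1) ↔
      (cubeGraph m).Adj (Fin.tail f) (Fin.tail g) from hGadj _ _]
    simp [hf, hg]

/-- the mixed-case isomorphism -/
noncomputable def F0iso (e : ((G.induce (S₁ ∩ S₂)).induce T) ≃g cubeGraph m) :
    (expansionGraph G S₁ S₂).induce (F0set S₁ S₂ T) ≃g cubeGraph (m+1) :=
  RelIso.symm
    { toEquiv := Equiv.ofBijective _ (F0fun_bijective G S₁ S₂ e)
      map_rel_iff' := fun {f g} => F0fun_adj G S₁ S₂ e f g }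

end F0

section Classify

lemma bool_ne_false {b : Bool} (h : b ≠ false) : b = true := by cases b <;> simp_all
lemma bool_ne_true {b : Bool} (h : b ≠ true) : b = false := by cases b <;> simp_all
lemma sum_eq_inl_of_isRight_false {α β : Type*} {x : α ⊕ β} (h : x.isRight = false) :
    ∃ a, x = Sum.inl a := by rcases x with a | b
                             · exact ⟨a, rfl⟩
                             · simp at h

/-- coordinate-permutation automorphism of the cube -/
def permIso (π : Fin n ≃ Fin n) (hπ : ∀ f : Fin n → Bool, (f ∘ π) ∘ π = f) :
    cubeGraph n ≃g cubeGraph n where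
  toEquiv := ⟨fun f => f ∘ π, fun f => f ∘ π, fun f => hπ f, fun f => hπ f⟩
  map_rel_iff' := fun {f g} => adj_comp_iff π f g

/-- The classification of induced cubes in the expansion graph. -/
lemma classify {i : ℕ} (S : Set (↥S₁ ⊕ ↥S₂))
    (hS : Nonempty ((expansionGraph G S₁ S₂).induce S ≃g cubeGraph i)) :
    (∃ A : Set ↥S₁, S = Sum.inl '' A) ∨ (∃ B : Set ↥S₂, S = Sum.inr '' B) ∨
    (∃ m, i = m + 1 ∧ ∃ T : Set ↥(S₁ ∩ S₂),
      Nonempty (((G.induce (S₁ ∩ S₂)).induce T) ≃g cubeGraph m) ∧ S = F0set S₁ S₂ T) := by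
  by_cases h₁ : ∀ x ∈ S, ∃ u : ↥S₁, x = Sum.inl u
  · left
    refine ⟨Sum.inl ⁻¹' S, ?_⟩
    ext x
    constructor
    · intro hx
      obtain ⟨u, rfl⟩ := h₁ x hx
      exact ⟨u, hx, rfl⟩
    · rintro ⟨u, hu, rfl⟩; exact hu
  by_cases h₂ : ∀ x ∈ S, ∃ v : ↥S₂, x = Sum.inr v
  · right; left
    refine ⟨Sum.inr ⁻¹' S, ?_⟩
    ext x
    constructor
    · intro hx
      obtain ⟨v, rfl⟩ := h₂ x hx
      exact ⟨v, hx, rfl⟩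
    · rintro ⟨v, hv, rfl⟩; exact hv
  right; right
  push_neg at h₁ h₂
  obtain ⟨x₁, hx₁S, hx₁⟩ := h₁
  obtain ⟨x₂, hx₂S, hx₂⟩ := h₂
  obtain ⟨v₁, rfl⟩ : ∃ v₁ : ↥S₂, x₁ = Sum.inr v₁ := by
    rcases x₁ with u | v
    · exact absurd rfl (hx₁ u)
    · exact ⟨v, rfl⟩
  obtain ⟨u₂, rfl⟩ : ∃ u₂ : ↥S₁, x₂ = Sum.inl u₂ := by
    rcases x₂ with u | v
    · exact ⟨u, rfl⟩
    · exact absurd rfl (hx₂ v)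
  classical
  obtain ⟨e⟩ := hS
  set ψ := e.symm with hψdef
  set σ : (Fin i → Bool) → Bool := fun f => Sum.isRight ((ψ f : ↥S) : ↥S₁ ⊕ ↥S₂) with hσdef
  -- σ is non-constant
  have hσ₁ : σ (ψ.symm ⟨Sum.inr v₁, hx₁S⟩) = true := by
    simp only [hσdef, RelIso.apply_symm_apply]
    rfl
  have hσ₂ : σ (ψ.symm ⟨Sum.inl u₂, hx₂S⟩) = false := by
    simp only [hσdef, RelIso.apply_symm_apply]
    rfl
  have hnc : ∃ f g, σ f ≠ σ g :=
    ⟨ψ.symm ⟨Sum.inr v₁, hx₁S⟩, ψ.symm ⟨Sum.inl u₂, hx₂S⟩, by rw [hσ₁, hσ₂]; simp⟩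
  -- H2: at most one cross-neighbor
  have H2 : ∀ f g h, (cubeGraph i).Adj f g → (cubeGraph i).Adj f h →
      σ g ≠ σ f → σ h ≠ σ f → g = h := by
    intro f g h hfg hfh hg hh
    have hafg : (expansionGraph G S₁ S₂).Adj ((ψ f : ↥S) : ↥S₁ ⊕ ↥S₂) (ψ g : ↥S) :=
      ψ.map_adj_iff.mpr hfg
    have hafh : (expansionGraph G S₁ S₂).Adj ((ψ f : ↥S) : ↥S₁ ⊕ ↥S₂) (ψ h : ↥S) :=
      ψ.map_adj_iff.mpr hfh
    rcases hval : ((ψ f : ↥S) : ↥S₁ ⊕ ↥S₂) with u | v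
    · have hσf : σ f = false := by simp [hσdef, hval]
      obtain ⟨vg, hvg⟩ : ∃ vg, ((ψ g : ↥S) : ↥S₁ ⊕ ↥S₂) = Sum.inr vg :=
        Sum.isRight_iff.mp (by rw [hσf] at hg; simpa using hg)
      obtain ⟨vh, hvh⟩ : ∃ vh, ((ψ h : ↥S) : ↥S₁ ⊕ ↥S₂) = Sum.inr vh :=
        Sum.isRight_iff.mp (by rw [hσf] at hh; simpa using hh)
      rw [hval, hvg] at hafg
      rw [hval, hvh] at hafh
      rw [exp_adj_inl_inr] at hafg hafh
      have : vg = vh := Subtype.ext (hafg ▸ hafh)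
      apply ψ.injective
      apply Subtype.ext
      rw [hvg, hvh, this]
    · have hσf : σ f = true := by simp [hσdef, hval]
      obtain ⟨ug, hug⟩ : ∃ ug, ((ψ g : ↥S) : ↥S₁ ⊕ ↥S₂) = Sum.inl ug :=
        sum_eq_inl_of_isRight_false (bool_ne_true (by rw [hσf] at hg; exact hg))
      obtain ⟨uh, huh⟩ : ∃ uh, ((ψ h : ↥S) : ↥S₁ ⊕ ↥S₂) = Sum.inl uh :=
        sum_eq_inl_of_isRight_false (bool_ne_true (by rw [hσf] at hh; exact hh))
      rw [hval, hug] at hafg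
      rw [hval, huh] at hafh
      rw [exp_adj_inr_inl] at hafg hafh
      have : ug = uh := Subtype.ext (hafg ▸ hafh)
      apply ψ.injective
      apply Subtype.ext
      rw [hug, huh, this]
  obtain ⟨j, hcross, hsame⟩ := cube_split σ H2 hnc
  rcases i with _ | m
  · exact Fin.elim0 j
  -- swap coordinate j to coordinate 0
  set π : Fin (m+1) ≃ Fin (m+1) := Equiv.swap 0 j with hπdef
  have hππ : ∀ f : Fin (m+1) → Bool, (f ∘ π) ∘ π = f := by
    intro f; funext x
    simp [hπdef, Equiv.swap_apply_self]
  set ψ' : cubeGraph (m+1) ≃g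
      ((expansionGraph G S₁ S₂).induce S) := (permIso π hππ).trans ψ with hψ'def
  have hψ'val : ∀ f, (ψ' f : ↥S) = ψ (f ∘ π) := fun f => rfl
  set σ' : (Fin (m+1) → Bool) → Bool :=
    fun f => Sum.isRight ((ψ' f : ↥S) : ↥S₁ ⊕ ↥S₂) with hσ'def
  have hσ'σ : ∀ f, σ' f = σ (f ∘ π) := fun f => rfl
  have hπj : π j = 0 := Equiv.swap_apply_right 0 j
  have hπ0 : π 0 = j := Equiv.swap_apply_left 0 j
  have hcross' : ∀ f, σ' (flip 0 f) ≠ σ' f := by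
    intro f
    rw [hσ'σ, hσ'σ, flip_comp]
    have : π.symm 0 = j := by rw [Equiv.symm_swap]; exact hπ0
    rw [this]
    exact hcross (f ∘ π)
  have hsame' : ∀ f g, f 0 = g 0 → σ' f = σ' g := by
    intro f g h
    rw [hσ'σ, hσ'σ]
    exact hsame (f ∘ π) (g ∘ π) (by simp only [Function.comp_apply, hπj, h])
  -- P1, P2
  have P1 : ∀ u : ↥S₁, Sum.inl u ∈ S → ∃ v : ↥S₂, (v : V) = (u : V) ∧ Sum.inr v ∈ S := by
    intro u hu
    set f := ψ'.symm ⟨Sum.inl u, hu⟩ with hfdef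
    have hval : ((ψ' f : ↥S) : ↥S₁ ⊕ ↥S₂) = Sum.inl u := by
      rw [hfdef, RelIso.apply_symm_apply]
    have hσf : σ' f = false := by rw [hσ'def]; simp only [hval]; rfl
    have hσg : σ' (flip 0 f) = true := by
      have h := hcross' f
      rw [hσf] at h
      exact bool_ne_false h
    obtain ⟨v, hv⟩ : ∃ v, ((ψ' (flip 0 f) : ↥S) : ↥S₁ ⊕ ↥S₂) = Sum.inr v :=
      Sum.isRight_iff.mp hσg
    have hadj : (expansionGraph G S₁ S₂).Adj ((ψ' f : ↥S) : ↥S₁ ⊕ ↥S₂)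
        ((ψ' (flip 0 f) : ↥S) : ↥S₁ ⊕ ↥S₂) := ψ'.map_adj_iff.mpr (adj_flip 0 f)
    rw [hval, hv, exp_adj_inl_inr] at hadj
    exact ⟨v, hadj.symm, by rw [← hv]; exact (ψ' (flip 0 f) : ↥S).2⟩
  have P2 : ∀ v : ↥S₂, Sum.inr v ∈ S → ∃ u : ↥S₁, (u : V) = (v : V) ∧ Sum.inl u ∈ S := by
    intro v hv
    set f := ψ'.symm ⟨Sum.inr v, hv⟩ with hfdef
    have hval : ((ψ' f : ↥S) : ↥S₁ ⊕ ↥S₂) = Sum.inr v := by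
      rw [hfdef, RelIso.apply_symm_apply]
    have hσf : σ' f = true := by rw [hσ'def]; simp only [hval]; rfl
    have hσg : σ' (flip 0 f) = false := by
      have h := hcross' f
      rw [hσf] at h
      exact bool_ne_true h
    obtain ⟨u, hu⟩ : ∃ u, ((ψ' (flip 0 f) : ↥S) : ↥S₁ ⊕ ↥S₂) = Sum.inl u :=
      sum_eq_inl_of_isRight_false hσg
    have hadj : (expansionGraph G S₁ S₂).Adj ((ψ' f : ↥S) : ↥S₁ ⊕ ↥S₂)
        ((ψ' (flip 0 f) : ↥S) : ↥S₁ ⊕ ↥S₂) := ψ'.map_adj_iff.mpr (adj_flip 0 f)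
    rw [hval, hu, exp_adj_inr_inl] at hadj
    exact ⟨u, hadj.symm, by rw [← hu]; exact (ψ' (flip 0 f) : ↥S).2⟩
  -- the set T
  set T : Set ↥(S₁ ∩ S₂) := {w | Sum.inl (tL S₁ S₂ w) ∈ S} with hTdef
  -- set equality
  have hset : S = F0set S₁ S₂ T := by
    ext x
    constructor
    · intro hx
      rcases x with u | v
      · obtain ⟨v, hv, -⟩ := P1 u hx
        refine Or.inl ⟨tL S₁ S₂ ⟨u.1, u.2, by rw [← hv]; exact v.2⟩,
          ⟨⟨u.1, u.2, by rw [← hv]; exact v.2⟩, ?_, rfl⟩, ?_⟩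
        · show Sum.inl (tL S₁ S₂ _) ∈ S
          have : tL S₁ S₂ ⟨u.1, u.2, by rw [← hv]; exact v.2⟩ = u := Subtype.ext rfl
          rw [this]; exact hx
        · have : tL S₁ S₂ ⟨u.1, u.2, by rw [← hv]; exact v.2⟩ = u := Subtype.ext rfl
          rw [this]
      · obtain ⟨u, hu, huS⟩ := P2 v hx
        have hw : (v : V) ∈ S₁ ∩ S₂ := ⟨by rw [← hu]; exact u.2, v.2⟩
        refine Or.inr ⟨tR S₁ S₂ ⟨v.1, hw⟩, ⟨⟨v.1, hw⟩, ?_, rfl⟩, ?_⟩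
        · show Sum.inl (tL S₁ S₂ _) ∈ S
          have : tL S₁ S₂ ⟨v.1, hw⟩ = u := Subtype.ext (by rw [hu]; rfl)
          rw [this]; exact huS
        · have : tR S₁ S₂ ⟨v.1, hw⟩ = v := Subtype.ext rfl
          rw [this]
    · intro hx
      rcases hx with ⟨u, ⟨w, hw, rfl⟩, rfl⟩ | ⟨v, ⟨w, hw, rfl⟩, rfl⟩
      · exact hw
      · obtain ⟨v', hv', hv'S⟩ := P1 (tL S₁ S₂ w) hw
        have : tR S₁ S₂ w = v' := Subtype.ext (by rw [hv']; rfl)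
        rw [this]; exact hv'S
  -- the isomorphism for T
  set s : Bool → Bool := fun b => σ' (fun _ => b) with hsdef
  have hs : ∀ f, σ' f = s (f 0) := fun f => hsame' f (fun _ => f 0) rfl
  have hstf : s true ≠ s false := by
    have h := hcross' (fun _ => false)
    rw [hs (flip 0 (fun _ => false))] at h
    simpa using h
  set c₀ : Bool := if s false = false then false else true with hc₀def
  have hc₀ : s c₀ = false := by
    by_cases hsf : s false = false
    · have hc : c₀ = false := by rw [hc₀def, if_pos hsf]
      rw [hc]; exact hsf
    · have hc : c₀ = true := by rw [hc₀def, if_neg hsf]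
      rw [hc]
      exact bool_ne_true (fun ht => hstf (by rw [ht, bool_ne_false hsf]))
  have hc₀' : ∀ b, s b = false → b = c₀ := by
    intro b hb
    by_cases hsf : s false = false
    · have hc : c₀ = false := by rw [hc₀def, if_pos hsf]
      rcases Bool.eq_false_or_eq_true b with rfl | rfl
      · exact absurd (hb.trans hsf.symm) hstf
      · rw [hc]
    · have hc : c₀ = true := by rw [hc₀def, if_neg hsf]
      rcases Bool.eq_false_or_eq_true b with rfl | rfl
      · rw [hc]
      · exact absurd hb hsf
  have key : ∀ p : Fin m → Bool, ∃ w : ↥(S₁ ∩ S₂), w ∈ T ∧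
      ((ψ' (Fin.cons c₀ p) : ↥S) : ↥S₁ ⊕ ↥S₂) = Sum.inl (tL S₁ S₂ w) := by
    intro p
    have hσf : σ' (Fin.cons c₀ p) = false := by
      rw [hs]; simp only [Fin.cons_zero]; exact hc₀
    obtain ⟨u, hu⟩ : ∃ u, ((ψ' (Fin.cons c₀ p) : ↥S) : ↥S₁ ⊕ ↥S₂) = Sum.inl u :=
      sum_eq_inl_of_isRight_false hσf
    have huS : Sum.inl u ∈ S := by rw [← hu]; exact (ψ' (Fin.cons c₀ p) : ↥S).2
    obtain ⟨v, hv, -⟩ := P1 u huS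
    refine ⟨⟨u.1, u.2, by rw [← hv]; exact v.2⟩, ?_, ?_⟩
    · show Sum.inl (tL S₁ S₂ _) ∈ S
      have : tL S₁ S₂ ⟨u.1, u.2, by rw [← hv]; exact v.2⟩ = u := Subtype.ext rfl
      rw [this]; exact huS
    · have : tL S₁ S₂ ⟨u.1, u.2, by rw [← hv]; exact v.2⟩ = u := Subtype.ext rfl
      rw [this, hu]
  set χ : (Fin m → Bool) → ↥T := fun p => ⟨(key p).choose, (key p).choose_spec.1⟩ with hχdef
  have hχ : ∀ p, ((ψ' (Fin.cons c₀ p) : ↥S) : ↥S₁ ⊕ ↥S₂) = Sum.inl (tL S₁ S₂ (χ p).1) :=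
    fun p => (key p).choose_spec.2
  have hχinj : Function.Injective χ := by
    intro p q h
    have h1 : ((ψ' (Fin.cons c₀ p) : ↥S) : ↥S₁ ⊕ ↥S₂) =
        ((ψ' (Fin.cons c₀ q) : ↥S) : ↥S₁ ⊕ ↥S₂) := by rw [hχ p, hχ q, h]
    have h2 : (ψ' (Fin.cons c₀ p) : ↥S) = (ψ' (Fin.cons c₀ q) : ↥S) := Subtype.ext h1
    have h3 := ψ'.injective h2
    have := congrArg Fin.tail h3
    rwa [Fin.tail_cons, Fin.tail_cons] at this
  have hχsurj : Function.Surjective χ := by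
    intro b
    have hbS : Sum.inl (tL S₁ S₂ b.1) ∈ S := b.2
    set f := ψ'.symm ⟨Sum.inl (tL S₁ S₂ b.1), hbS⟩ with hfdef
    have hval : ((ψ' f : ↥S) : ↥S₁ ⊕ ↥S₂) = Sum.inl (tL S₁ S₂ b.1) := by
      rw [hfdef, RelIso.apply_symm_apply]
    have hσf : σ' f = false := by rw [hσ'def]; simp only [hval]; rfl
    have hf0 : f 0 = c₀ := hc₀' _ (by rw [← hs]; exact hσf)
    have hfcons : Fin.cons c₀ (Fin.tail f) = f := by
      rw [← hf0]; exact Fin.cons_self_tail f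
    refine ⟨Fin.tail f, ?_⟩
    have h1 := hχ (Fin.tail f)
    rw [hfcons, hval] at h1
    have h2 : tL S₁ S₂ b.1 = tL S₁ S₂ (χ (Fin.tail f)).1 := Sum.inl_injective h1
    exact Subtype.ext (tL_injective S₁ S₂ h2).symm
  have hχadj : ∀ p q, ((G.induce (S₁ ∩ S₂)).induce T).Adj (χ p) (χ q) ↔
      (cubeGraph m).Adj p q := by
    intro p q
    have lhs : ((G.induce (S₁ ∩ S₂)).induce T).Adj (χ p) (χ q) ↔
        (expansionGraph G S₁ S₂).Adj (Sum.inl (tL S₁ S₂ (χ p).1))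
          (Sum.inl (tL S₁ S₂ (χ q).1)) := by
      rw [exp_adj_inl_inl]
      exact Iff.rfl
    rw [lhs, ← hχ p, ← hχ q]
    have mid : (expansionGraph G S₁ S₂).Adj ((ψ' (Fin.cons c₀ p) : ↥S) : ↥S₁ ⊕ ↥S₂)
        ((ψ' (Fin.cons c₀ q) : ↥S) : ↥S₁ ⊕ ↥S₂) ↔
        (cubeGraph (m+1)).Adj (Fin.cons c₀ p) (Fin.cons c₀ q) := ψ'.map_adj_iff
    rw [mid, adj_cons_iff]
    simp [Fin.tail_cons]
  refine ⟨m, rfl, T, ⟨RelIso.symm ⟨Equiv.ofBijective χ ⟨hχinj, hχsurj⟩, ?_⟩⟩, hset⟩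
  intro p q
  exact hχadj p q

end Classify

section Count

abbrev Cubes {W : Type*} (H : SimpleGraph W) (i : ℕ) :=
  {S : Set W // Nonempty (H.induce S ≃g cubeGraph i)}

noncomputable def FL (i : ℕ) : Cubes (G.induce S₁) i → Cubes (expansionGraph G S₁ S₂) i :=
  fun A => ⟨Sum.inl '' A.1,
    ⟨(induceImageIso (expansionGraph G S₁ S₂) (G.induce S₁) Sum.inl Sum.inl_injective
      (fun _ _ => Iff.rfl) A.1).trans A.2.some⟩⟩

noncomputable def FR (i : ℕ) : Cubes (G.induce S₂) i → Cubes (expansionGraph G S₁ S₂) i :=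
  fun B => ⟨Sum.inr '' B.1,
    ⟨(induceImageIso (expansionGraph G S₁ S₂) (G.induce S₂) Sum.inr Sum.inr_injective
      (fun _ _ => Iff.rfl) B.1).trans B.2.some⟩⟩

noncomputable def FM (m : ℕ) :
    Cubes (G.induce (S₁ ∩ S₂)) m → Cubes (expansionGraph G S₁ S₂) (m+1) :=
  fun T => ⟨F0set S₁ S₂ T.1, ⟨F0iso G S₁ S₂ T.2.some⟩⟩

lemma F0set_injective : Function.Injective (F0set S₁ S₂) := by
  intro T T' h
  have key : ∀ T'' w, w ∈ T'' ↔ Sum.inl (tL S₁ S₂ w) ∈ F0set S₁ S₂ T'' := by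
    intro T'' w
    rw [mem_F0set_inl]
    exact ⟨fun hw => ⟨w, hw, rfl⟩,
      fun ⟨w', hw', he⟩ => (tL_injective S₁ S₂ he) ▸ hw'⟩
  ext w
  rw [key T w, h, ← key T' w]

lemma inl_ne_F0set {A : Set ↥S₁} {T : Set ↥(S₁ ∩ S₂)} (hT : T.Nonempty) :
    Sum.inl '' A ≠ F0set S₁ S₂ T := by
  intro h
  obtain ⟨w, hw⟩ := hT
  have : Sum.inr (tR S₁ S₂ w) ∈ F0set S₁ S₂ T := Or.inr ⟨tR S₁ S₂ w, ⟨w, hw, rfl⟩, rfl⟩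
  rw [← h] at this
  obtain ⟨a, -, ha⟩ := this
  exact Sum.inl_ne_inr ha

lemma inr_ne_F0set {B : Set ↥S₂} {T : Set ↥(S₁ ∩ S₂)} (hT : T.Nonempty) :
    Sum.inr '' B ≠ F0set S₁ S₂ T := by
  intro h
  obtain ⟨w, hw⟩ := hT
  have : Sum.inl (tL S₁ S₂ w) ∈ F0set S₁ S₂ T := Or.inl ⟨tL S₁ S₂ w, ⟨w, hw, rfl⟩, rfl⟩
  rw [← h] at this
  obtain ⟨a, -, ha⟩ := this
  exact Sum.inl_ne_inr ha.symm

lemma inl_ne_inr_img {A : Set ↥S₁} {B : Set ↥S₂} (hA : A.Nonempty) :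
    Sum.inl '' A ≠ Sum.inr '' B := by
  intro h
  obtain ⟨a, ha⟩ := hA
  have : (Sum.inl a : ↥S₁ ⊕ ↥S₂) ∈ Sum.inr '' B := h ▸ ⟨a, ha, rfl⟩
  obtain ⟨b, -, hb⟩ := this
  exact Sum.inl_ne_inr hb.symm

variable [Finite V]

lemma count_succ (m : ℕ) :
    cubeCount (expansionGraph G S₁ S₂) (m+1) =
      cubeCount (G.induce S₁) (m+1) + cubeCount (G.induce S₂) (m+1) +
        cubeCount (G.induce (S₁ ∩ S₂)) m := by
  classical
  set F : (Cubes (G.induce S₁) (m+1) ⊕ Cubes (G.induce S₂) (m+1)) ⊕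
      Cubes (G.induce (S₁ ∩ S₂)) m → Cubes (expansionGraph G S₁ S₂) (m+1) :=
    Sum.elim (Sum.elim (FL G S₁ S₂ (m+1)) (FR G S₁ S₂ (m+1))) (FM G S₁ S₂ m) with hF
  have hinj : Function.Injective F := by
    rintro ((A | B) | T) ((A' | B') | T') h <;>
      have hval := congrArg Subtype.val h
    · exact congrArg _ (congrArg _ (Subtype.ext
        ((Set.image_injective.mpr Sum.inl_injective) hval)))
    · exact absurd hval (inl_ne_inr_img S₁ S₂ (cube_set_nonempty A.2))
    · exact absurd hval (inl_ne_F0set S₁ S₂ (cube_set_nonempty T'.2))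
    · exact absurd hval.symm (inl_ne_inr_img S₁ S₂ (cube_set_nonempty A'.2))
    · exact congrArg _ (congrArg _ (Subtype.ext
        ((Set.image_injective.mpr Sum.inr_injective) hval)))
    · exact absurd hval (inr_ne_F0set S₁ S₂ (cube_set_nonempty T'.2))
    · exact absurd hval.symm (inl_ne_F0set S₁ S₂ (cube_set_nonempty T.2))
    · exact absurd hval.symm (inr_ne_F0set S₁ S₂ (cube_set_nonempty T.2))
    · exact congrArg _ (Subtype.ext (F0set_injective S₁ S₂ hval))
  have hsurj : Function.Surjective F := by
    rintro ⟨S, hS⟩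
    rcases classify G S₁ S₂ S hS with ⟨A, rfl⟩ | ⟨B, rfl⟩ | ⟨m', hm', T, hT, rfl⟩
    · have hA : Nonempty ((G.induce S₁).induce A ≃g cubeGraph (m+1)) :=
        ⟨(induceImageIso (expansionGraph G S₁ S₂) (G.induce S₁) Sum.inl Sum.inl_injective
          (fun _ _ => Iff.rfl) A).symm.trans hS.some⟩
      exact ⟨Sum.inl (Sum.inl ⟨A, hA⟩), Subtype.ext rfl⟩
    · have hB : Nonempty ((G.induce S₂).induce B ≃g cubeGraph (m+1)) :=
        ⟨(induceImageIso (expansionGraph G S₁ S₂) (G.induce S₂) Sum.inr Sum.inr_injective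
          (fun _ _ => Iff.rfl) B).symm.trans hS.some⟩
      exact ⟨Sum.inl (Sum.inr ⟨B, hB⟩), Subtype.ext rfl⟩
    · obtain rfl : m' = m := by omega
      exact ⟨Sum.inr ⟨T, hT⟩, Subtype.ext rfl⟩
  have hcard := Nat.card_congr (Equiv.ofBijective F ⟨hinj, hsurj⟩)
  rw [Nat.card_sum, Nat.card_sum] at hcard
  rw [cubeCount, cubeCount, cubeCount, cubeCount, ← hcard]

lemma count_zero :
    cubeCount (expansionGraph G S₁ S₂) 0 =
      cubeCount (G.induce S₁) 0 + cubeCount (G.induce S₂) 0 := by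
  classical
  set F : Cubes (G.induce S₁) 0 ⊕ Cubes (G.induce S₂) 0 →
      Cubes (expansionGraph G S₁ S₂) 0 :=
    Sum.elim (FL G S₁ S₂ 0) (FR G S₁ S₂ 0) with hF
  have hinj : Function.Injective F := by
    rintro (A | B) (A' | B') h <;> have hval := congrArg Subtype.val h
    · exact congrArg _ (Subtype.ext ((Set.image_injective.mpr Sum.inl_injective) hval))
    · exact absurd hval (inl_ne_inr_img S₁ S₂ (cube_set_nonempty A.2))
    · exact absurd hval.symm (inl_ne_inr_img S₁ S₂ (cube_set_nonempty A'.2))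
    · exact congrArg _ (Subtype.ext ((Set.image_injective.mpr Sum.inr_injective) hval))
  have hsurj : Function.Surjective F := by
    rintro ⟨S, hS⟩
    rcases classify G S₁ S₂ S hS with ⟨A, rfl⟩ | ⟨B, rfl⟩ | ⟨m', hm', T, hT, rfl⟩
    · have hA : Nonempty ((G.induce S₁).induce A ≃g cubeGraph 0) :=
        ⟨(induceImageIso (expansionGraph G S₁ S₂) (G.induce S₁) Sum.inl Sum.inl_injective
          (fun _ _ => Iff.rfl) A).symm.trans hS.some⟩
      exact ⟨Sum.inl ⟨A, hA⟩, Subtype.ext rfl⟩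
    · have hB : Nonempty ((G.induce S₂).induce B ≃g cubeGraph 0) :=
        ⟨(induceImageIso (expansionGraph G S₁ S₂) (G.induce S₂) Sum.inr Sum.inr_injective
          (fun _ _ => Iff.rfl) B).symm.trans hS.some⟩
      exact ⟨Sum.inr ⟨B, hB⟩, Subtype.ext rfl⟩
    · omega
  have hcard := Nat.card_congr (Equiv.ofBijective F ⟨hinj, hsurj⟩)
  rw [Nat.card_sum] at hcard
  rw [cubeCount, cubeCount, cubeCount, ← hcard]

end Count

end ExpAux

lemma cubePoly_eq_sum {W : Type*} [Finite W] (H : SimpleGraph W) {N : ℕ}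
    (hN : Nat.card W + 1 ≤ N) :
    cubePoly H = ∑ i ∈ Finset.range N, Polynomial.C (cubeCount H i : ℤ) * Polynomial.X ^ i := by
  rw [cubePoly]
  apply Finset.sum_subset (Finset.range_subset_range.mpr hN)
  intro i _ hi
  rw [Finset.mem_range, not_lt] at hi
  rw [CubeAux.cubeCount_eq_zero' H (by omega)]
  simp

/-- If `{G₁, G₂}` is a cubical cover of a finite simple graph
`G` (with `G₁ = G.induce S₁`, `G₂ = G.induce S₂` and `G₀` induced on
`S₁ ∩ S₂`), and `G*` is the expansion of `G` with respect to `{G₁, G₂}`, then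
`C(G*, x) = C(G₁, x) + C(G₂, x) + x·C(G₀, x)`. -/
theorem cubePoly_expansion {V : Type*} [Fintype V] (G : SimpleGraph V)
    (S₁ S₂ : Set V) (hcover : S₁ ∪ S₂ = Set.univ)
    (hedge : ∀ e ∈ G.edgeSet, (∀ v ∈ e, v ∈ S₁) ∨ (∀ v ∈ e, v ∈ S₂))
    (hcube : ∀ (S : Set V) (i : ℕ),
      Nonempty (G.induce S ≃g cubeGraph i) → S ⊆ S₁ ∨ S ⊆ S₂) :
    cubePoly (expansionGraph G S₁ S₂) =
      cubePoly (G.induce S₁) + cubePoly (G.induce S₂) +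
        Polynomial.X * cubePoly (G.induce (S₁ ∩ S₂)) := by
  classical
  set n₁ := Nat.card ↥S₁ with hn₁
  set n₂ := Nat.card ↥S₂ with hn₂
  set M := n₁ + n₂ + 1 with hM
  have hsum : Nat.card (↥S₁ ⊕ ↥S₂) = n₁ + n₂ := by
    rw [Nat.card_sum]
  have hn₀ : Nat.card ↥(S₁ ∩ S₂) ≤ n₁ :=
    Nat.card_le_card_of_injective (ExpAux.tL S₁ S₂) (ExpAux.tL_injective S₁ S₂)
  rw [cubePoly_eq_sum (expansionGraph G S₁ S₂) (N := M + 1) (by omega),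
    cubePoly_eq_sum (G.induce S₁) (N := M + 1) (by omega),
    cubePoly_eq_sum (G.induce S₂) (N := M + 1) (by omega),
    cubePoly_eq_sum (G.induce (S₁ ∩ S₂)) (N := M) (by omega)]
  rw [Finset.sum_range_succ' (fun i =>
      Polynomial.C ((cubeCount (expansionGraph G S₁ S₂) i : ℤ)) * Polynomial.X ^ i),
    Finset.sum_range_succ' (fun i =>
      Polynomial.C ((cubeCount (G.induce S₁) i : ℤ)) * Polynomial.X ^ i),
    Finset.sum_range_succ' (fun i =>
      Polynomial.C ((cubeCount (G.induce S₂) i : ℤ)) * Polynomial.X ^ i)]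
  have hzero : (cubeCount (expansionGraph G S₁ S₂) 0 : ℤ) =
      (cubeCount (G.induce S₁) 0 : ℤ) + (cubeCount (G.induce S₂) 0 : ℤ) := by
    rw [ExpAux.count_zero G S₁ S₂]; push_cast; ring
  have hstep : ∀ i : ℕ, (cubeCount (expansionGraph G S₁ S₂) (i+1) : ℤ) =
      (cubeCount (G.induce S₁) (i+1) : ℤ) + (cubeCount (G.induce S₂) (i+1) : ℤ) +
      (cubeCount (G.induce (S₁ ∩ S₂)) i : ℤ) := by
    intro i
    rw [ExpAux.count_succ G S₁ S₂ i]; push_cast; ring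
  have hL : ∑ i ∈ Finset.range M,
      Polynomial.C ((cubeCount (expansionGraph G S₁ S₂) (i+1) : ℤ)) * Polynomial.X ^ (i+1) =
      ∑ i ∈ Finset.range M,
        (Polynomial.C ((cubeCount (G.induce S₁) (i+1) : ℤ)) * Polynomial.X ^ (i+1) +
         Polynomial.C ((cubeCount (G.induce S₂) (i+1) : ℤ)) * Polynomial.X ^ (i+1) +
         Polynomial.C ((cubeCount (G.induce (S₁ ∩ S₂)) i : ℤ)) * Polynomial.X ^ (i+1)) := by
    apply Finset.sum_congr rfl
    intro i _
    rw [hstep i]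
    rw [map_add, map_add]
    ring
  rw [hL, hzero]
  rw [Finset.mul_sum]
  have hX : ∀ i : ℕ, Polynomial.X * (Polynomial.C ((cubeCount (G.induce (S₁ ∩ S₂)) i : ℤ)) *
      Polynomial.X ^ i) =
      Polynomial.C ((cubeCount (G.induce (S₁ ∩ S₂)) i : ℤ)) * Polynomial.X ^ (i+1) := by
    intro i; ring
  rw [Finset.sum_congr rfl (fun i _ => hX i)]
  rw [Finset.sum_add_distrib, Finset.sum_add_distrib]
  rw [map_add]
  ring
end

section
/- A finite connected simple graph G is a median graph if and only if G can be obtained from the one-vertex graph K_1 by a finite sequence of peripheral convex expansions. -/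
open SimpleGraph Polynomial

universe u

/-- `S` is (the vertex set of) a convex subgraph of `G`: every shortest path of
`G` between two vertices of `S` lies entirely in `S`.  (The subgraph itself is
the induced subgraph `G.induce S`.) -/
def IsConvexSet {V : Type u} (G : SimpleGraph V) (S : Set V) : Prop :=
  ∀ u ∈ S, ∀ v ∈ S, ∀ p : G.Walk u v, p.IsPath → p.length = G.dist u v →
    ∀ x ∈ p.support, x ∈ S

/-- The peripheral convex expansion of `G` with respect to (the vertex set `S`
of) a convex subgraph: `G` together with a disjoint copy of `G.induce S` and an
edge joining each vertex of `S` to its copy. -/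
def pceGraph {V : Type u} (G : SimpleGraph V) (S : Set V) : SimpleGraph (V ⊕ ↥S) where
  Adj x y :=
    match x, y with
    | Sum.inl u, Sum.inl v => G.Adj u v
    | Sum.inr u, Sum.inr v => G.Adj u v
    | Sum.inl u, Sum.inr v => u = (v : V)
    | Sum.inr u, Sum.inl v => (u : V) = v
  symm := by
    constructor
    rintro (u | u) (v | v) h
    · exact G.adj_symm h
    · exact h.symm
    · exact h.symm
    · exact G.adj_symm h
  loopless := by
    constructor
    rintro (u | u) h
    · exact G.irrefl h
    · exact G.irrefl h

/-- Membership in the smallest class of graphs (up to isomorphism) containing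
the one-vertex graph and closed under peripheral convex expansions with respect
to nonempty convex subgraphs. -/
inductive ObtainedByPCE : ∀ V : Type u, SimpleGraph V → Prop
  | base : ObtainedByPCE PUnit ⊥
  | expand {V : Type u} (G : SimpleGraph V) (S : Set V) (hS : S.Nonempty)
      (hconv : IsConvexSet G S) (hG : ObtainedByPCE V G) :
      ObtainedByPCE (V ⊕ ↥S) (pceGraph G S)
  | iso {V W : Type u} (G : SimpleGraph V) (G' : SimpleGraph W)
      (hG : ObtainedByPCE V G) (e : Nonempty (G ≃g G')) : ObtainedByPCE W G'
namespace MedPCE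
open SimpleGraph

universe v
variable {V : Type v} {G : SimpleGraph V}

/-- `z` is between `x` and `y`. -/
def Btw (G : SimpleGraph V) (x z y : V) : Prop :=
  G.dist x z + G.dist z y = G.dist x y

lemma btw_of_mem_support {x y : V} (p : G.Walk x y) (hp : p.length = G.dist x y)
    {z : V} (hz : z ∈ p.support) : Btw G x z y := by
  classical
  have hsplit := p.take_spec hz
  have hlen : (p.takeUntil z hz).length + (p.dropUntil z hz).length = p.length := by
    rw [← SimpleGraph.Walk.length_append, hsplit]
  have h1 := SimpleGraph.dist_le (p.takeUntil z hz)
  have h2 := SimpleGraph.dist_le (p.dropUntil z hz)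
  have h3 : G.dist x y ≤ G.dist x z + G.dist z y := by
    obtain ⟨q1, hq1⟩ := SimpleGraph.Reachable.exists_walk_length_eq_dist ⟨p.takeUntil z hz⟩
    obtain ⟨q2, hq2⟩ := SimpleGraph.Reachable.exists_walk_length_eq_dist ⟨p.dropUntil z hz⟩
    calc G.dist x y ≤ (q1.append q2).length := SimpleGraph.dist_le _
    _ = G.dist x z + G.dist z y := by rw [SimpleGraph.Walk.length_append, hq1, hq2]
  unfold Btw
  omega

lemma btw_walk {x y z : V} (h : Btw G x z y) (hr1 : G.Reachable x z)
    (hr2 : G.Reachable z y) :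
    ∃ p : G.Walk x y, p.length = G.dist x y ∧ z ∈ p.support := by
  obtain ⟨q1, hq1⟩ := hr1.exists_walk_length_eq_dist
  obtain ⟨q2, hq2⟩ := hr2.exists_walk_length_eq_dist
  refine ⟨q1.append q2, ?_, ?_⟩
  · rw [SimpleGraph.Walk.length_append, hq1, hq2]; exact h
  · rw [SimpleGraph.Walk.mem_support_append_iff]
    exact Or.inl q1.end_mem_support

/-- Interval formulation of convexity. -/
def BtwConvex (G : SimpleGraph V) (S : Set V) : Prop :=
  ∀ x ∈ S, ∀ y ∈ S, ∀ z, Btw G x z y → z ∈ S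

lemma isConvexSet_of_btwConvex {S : Set V} (h : BtwConvex G S) : IsConvexSet G S := by
  intro x hx y hy p _ hlen z hz
  exact h x hx y hy z (btw_of_mem_support p hlen hz)

lemma btwConvex_of_isConvexSet (hconn : G.Connected) {S : Set V}
    (h : IsConvexSet G S) : BtwConvex G S := by
  intro x hx y hy z hbtw
  obtain ⟨p, hlen, hz⟩ := btw_walk hbtw (hconn x z) (hconn z y)
  exact h x hx y hy p (p.isPath_of_length_eq_dist hlen) hlen z hz

lemma adj_of_dist_one {x y : V} (h : G.dist x y = 1) : G.Adj x y :=
  SimpleGraph.dist_eq_one_iff_adj.mp h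

lemma exists_adj_dist {x y : V} {n : ℕ} (h : G.dist x y = n + 1) :
    ∃ z, G.Adj x z ∧ G.dist z y = n := by
  have hne : G.dist x y ≠ 0 := by omega
  obtain ⟨p, hp⟩ := SimpleGraph.exists_walk_of_dist_ne_zero hne
  cases p with
  | nil => rw [SimpleGraph.Walk.length_nil] at hp; omega
  | @cons _ z _ hadj q =>
    have hql : q.length = n := by
      rw [SimpleGraph.Walk.length_cons] at hp; omega
    refine ⟨z, hadj, ?_⟩
    have h1 : G.dist z y ≤ n := hql ▸ SimpleGraph.dist_le q
    have h2 : G.dist x y ≤ G.dist x z + G.dist z y := by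
      obtain ⟨q2, hq2⟩ := SimpleGraph.Reachable.exists_walk_length_eq_dist (⟨q⟩ : G.Reachable z y)
      calc G.dist x y ≤ (SimpleGraph.Walk.cons hadj q2).length := SimpleGraph.dist_le _
      _ = 1 + G.dist z y := by rw [SimpleGraph.Walk.length_cons]; omega
      _ ≤ G.dist x z + G.dist z y := by
          rw [SimpleGraph.dist_eq_one_iff_adj.mpr hadj]
    have hd1 : G.dist x z = 1 := SimpleGraph.dist_eq_one_iff_adj.mpr hadj
    omega

end MedPCE
namespace MedPCE
open SimpleGraph

universe v
variable {V : Type v} {G : SimpleGraph V}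

lemma dc (G : SimpleGraph V) (x y : V) : G.dist x y = G.dist y x := SimpleGraph.dist_comm

lemma dist_adj {x y : V} (h : G.Adj x y) : G.dist x y = 1 :=
  SimpleGraph.dist_eq_one_iff_adj.mpr h

lemma btw_symm {x y z : V} (h : Btw G x z y) : Btw G y z x := by
  unfold Btw at *
  have e1 := dc G y z; have e2 := dc G z x; have e3 := dc G y x
  omega

lemma btw_self_left (x y : V) : Btw G x x y := by
  unfold Btw; rw [SimpleGraph.dist_self]; omega

lemma btw_self_right (x y : V) : Btw G x y y := by
  unfold Btw; rw [SimpleGraph.dist_self]; omega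

section Median

variable (hm : IsMedianGraph G)
include hm

lemma med (u v w : V) : ∃! m : V, Btw G u m v ∧ Btw G u m w ∧ Btw G v m w :=
  hm.2 u v w

/-- Two medians of the same triple coincide. -/
lemma med_eq {u v w m1 m2 : V}
    (h1 : Btw G u m1 v ∧ Btw G u m1 w ∧ Btw G v m1 w)
    (h2 : Btw G u m2 v ∧ Btw G u m2 w ∧ Btw G v m2 w) : m1 = m2 := by
  obtain ⟨m, _, hu⟩ := hm.2 u v w
  rw [hu m1 h1, hu m2 h2]

lemma dist_eq_zero {x y : V} (h : G.dist x y = 0) : x = y :=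
  (hm.1.dist_eq_zero_iff).mp h

lemma tri (x y z : V) : G.dist x z ≤ G.dist x y + G.dist y z := hm.1.dist_triangle

/-- No ties: every vertex is strictly closer to one end of an edge. -/
lemma noTies {a b : V} (hab : G.Adj a b) (v : V) :
    G.dist v a + 1 = G.dist v b ∨ G.dist v b + 1 = G.dist v a := by
  obtain ⟨c, ⟨h1, h2, h3⟩, _⟩ := hm.2 v a b
  have hd : G.dist a b = 1 := dist_adj hab
  have hsplit : G.dist a c = 0 ∨ G.dist c b = 0 := by omega
  rcases hsplit with h | h
  · left
    have hac : a = c := dist_eq_zero hm h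
    subst hac
    omega
  · right
    have hcb : c = b := dist_eq_zero hm h
    rw [hcb] at h1
    have e1 := dc G b a
    omega

/-- Side of an edge: vertices strictly closer to `a` than to `b`. -/
def side (G : SimpleGraph V) (a b : V) : Set V := {v | G.dist v a + 1 = G.dist v b}

omit hm in
lemma mem_side {a b v : V} : v ∈ side G a b ↔ G.dist v a + 1 = G.dist v b := Iff.rfl

lemma sides_total {a b : V} (hab : G.Adj a b) (v : V) :
    v ∈ side G a b ∨ v ∈ side G b a := noTies hm hab v

omit hm in
lemma sides_disjoint {a b v : V} (h1 : v ∈ side G a b) (h2 : v ∈ side G b a) : False := by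
  rw [mem_side] at *; omega

omit hm in
lemma mem_side_self {a b : V} (hab : G.Adj a b) : a ∈ side G a b := by
  rw [mem_side, SimpleGraph.dist_self]
  have := dist_adj hab
  omega

omit hm in
lemma side_ne {a b x y : V} (h1 : x ∈ side G a b) (h2 : y ∈ side G b a) : x ≠ y := by
  rintro rfl; exact sides_disjoint h1 h2

/-- L1: the interval to `a` stays on `a`'s side. -/
lemma btw_side {a b x z : V} (hab : G.Adj a b) (hx : x ∈ side G a b)
    (hz : Btw G x z a) : z ∈ side G a b := by
  rcases sides_total hm hab z with h | h
  · exact h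
  · exfalso
    rw [mem_side] at hx h
    unfold Btw at hz
    have t1 : G.dist x b ≤ G.dist x z + G.dist z b := tri hm x z b
    omega

/-- Crossing edge: distances behave like the edge `a b` itself. -/
lemma crossing {a b x y : V} (hab : G.Adj a b) (hxy : G.Adj x y)
    (hx : x ∈ side G a b) (hy : y ∈ side G b a) :
    G.dist y a = G.dist x a + 1 ∧ G.dist x b = G.dist y b + 1 := by
  have nta := noTies hm hxy a
  have ntb := noTies hm hxy b
  rw [mem_side] at hx hy
  have e1 := dc G a x; have e2 := dc G a y; have e3 := dc G b x; have e4 := dc G b y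
  omega

/-- The quadrangle condition. -/
lemma quadrangle {u v w1 w2 : V} (h1 : G.Adj w1 v) (h2 : G.Adj w2 v) (hne : w1 ≠ w2)
    (hd1 : G.dist u w1 + 1 = G.dist u v) (hd2 : G.dist u w2 + 1 = G.dist u v) :
    ∃ x, G.Adj x w1 ∧ G.Adj x w2 ∧ G.dist u x + 2 = G.dist u v ∧
      Btw G u x w1 ∧ Btw G u x w2 := by
  have hw12 : G.dist w1 w2 = 2 := by
    have hle : G.dist w1 w2 ≤ 2 := by
      have t1 := tri hm w1 v w2
      have e1 := dist_adj h1
      have e2 := dist_adj h2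
      have e3 := dc G v w2
      omega
    have hne0 : G.dist w1 w2 ≠ 0 := fun h => hne (dist_eq_zero hm h)
    have hne1 : G.dist w1 w2 ≠ 1 := by
      intro h
      have nt := noTies hm (SimpleGraph.dist_eq_one_iff_adj.mp h) u
      have e1 := dc G u w1; have e2 := dc G u w2
      omega
    omega
  obtain ⟨c, ⟨hc1, hc2, hc3⟩, _⟩ := hm.2 u w1 w2
  rw [hw12] at hc3
  have c1 : G.dist w1 c ≠ 0 := by
    intro h
    have hw : w1 = c := dist_eq_zero hm h
    rw [← hw] at hc2
    omega
  have c2 : G.dist c w2 ≠ 0 := by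
    intro h
    have hw : c = w2 := dist_eq_zero hm h
    rw [hw] at hc1
    have e := dc G w2 w1
    omega
  have hcl : G.dist w1 c = 1 ∧ G.dist c w2 = 1 := by omega
  refine ⟨c, ?_, ?_, by omega, ⟨hc1, by unfold Btw; omega⟩⟩
  · exact (SimpleGraph.dist_eq_one_iff_adj.mp (by rw [dc]; exact hcl.1))
  · exact (SimpleGraph.dist_eq_one_iff_adj.mp hcl.2)

end Median
end MedPCE
namespace MedPCE
open SimpleGraph

universe v
variable {V : Type v} {G : SimpleGraph V}

section Median
variable (hm : IsMedianGraph G)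
include hm

lemma dist_pos_of_ne {x y : V} (h : x ≠ y) : 0 < G.dist x y :=
  hm.1.pos_dist_of_ne h

/-- Half of the induction step for convexity of sides. -/
lemma halfStep {a b x y x₁ : V} (hab : G.Adj a b)
    (hIH : ∀ x' y' z', x' ∈ side G a b → y' ∈ side G a b → Btw G x' z' y' →
      G.dist x' y' < G.dist x y → z' ∈ side G a b)
    (hx : x ∈ side G a b) (hy : y ∈ side G a b)
    (hx1 : G.Adj x x₁) (hx1B : x₁ ∈ side G b a) (hbx : Btw G x x₁ y) :
    (G.dist x y - 1) + G.dist y a = G.dist x a + 1 := by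
  have hd1 : G.dist x x₁ = 1 := dist_adj hx1
  unfold Btw at hbx
  have hx1y : G.dist x₁ y = G.dist x y - 1 ∧ 1 ≤ G.dist x y := by
    constructor <;> omega
  obtain ⟨u', ⟨m1, m2, m3⟩, _⟩ := hm.2 x₁ y a
  have u'A : u' ∈ side G a b := btw_side hm hab hy m3
  by_cases hu'y : u' = y
  · subst hu'y
    have hcr := crossing hm hab hx1 hx hx1B
    omega
  · exfalso
    have hu'ypos : 0 < G.dist u' y := by
      have := dist_pos_of_ne hm hu'y
      have e := dc G u' y
      omega
    -- m1 : dist x₁ u' + dist u' y = dist x₁ y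
    have t1 : G.dist x u' ≤ G.dist x x₁ + G.dist x₁ u' := tri hm x x₁ u'
    have t2 : G.dist x y ≤ G.dist x u' + G.dist u' y := tri hm x u' y
    have hxu' : G.dist x u' = G.dist x y - G.dist u' y := by omega
    have hbtw1 : Btw G x x₁ u' := by unfold Btw; omega
    have hlt : G.dist x u' < G.dist x y := by omega
    exact sides_disjoint (hIH x u' x₁ hx u'A hbtw1 hlt) hx1B

lemma side_convex_aux :
    ∀ n : ℕ, ∀ a b x y z : V, G.Adj a b → x ∈ side G a b → y ∈ side G a b →
      Btw G x z y → G.dist x y ≤ n → z ∈ side G a b := by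
  intro n
  induction n with
  | zero =>
    intro a b x y z hab hx hy hbtw hle
    unfold Btw at hbtw
    have : x = z := dist_eq_zero hm (by omega)
    exact this ▸ hx
  | succ n IH =>
    intro a b x y z hab hx hy hbtw hle
    by_cases hz : z ∈ side G a b
    · exact hz
    have hzB : z ∈ side G b a := (sides_total hm hab z).resolve_left hz
    exfalso
    have hzx : x ≠ z := side_ne hx hzB
    have hzy : y ≠ z := side_ne hy hzB
    have hxz1 : 1 ≤ G.dist x z := dist_pos_of_ne hm hzx
    have hzy1 : 1 ≤ G.dist z y := by
      have := dist_pos_of_ne hm hzy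
      have e := dc G y z
      omega
    unfold Btw at hbtw
    have hIH' : ∀ x' y' z', x' ∈ side G a b → y' ∈ side G a b → Btw G x' z' y' →
        G.dist x' y' < G.dist x y → z' ∈ side G a b := by
      intro x' y' z' hx' hy' hb' hlt
      exact IH a b x' y' z' hab hx' hy' hb' (by omega)
    -- construct x₁
    obtain ⟨x₁, hax1, hdx1⟩ := exists_adj_dist (show G.dist x z = (G.dist x z - 1) + 1 by omega)
    have hd1 : G.dist x x₁ = 1 := dist_adj hax1
    have t1 : G.dist x y ≤ G.dist x x₁ + G.dist x₁ y := tri hm x x₁ y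
    have t2 : G.dist x₁ y ≤ G.dist x₁ z + G.dist z y := tri hm x₁ z y
    have hbx1 : Btw G x x₁ y := by unfold Btw; omega
    have hbx1z : Btw G x₁ z y := by unfold Btw; omega
    have hx1B : x₁ ∈ side G b a := by
      rcases sides_total hm hab x₁ with h | h
      · exact absurd (hIH' x₁ y z h hy hbx1z (by omega)) hz
      · exact h
    -- construct y₁  (neighbour of y towards z)
    obtain ⟨y₁, hay1, hdy1⟩ := by
      have : G.dist y z = (G.dist y z - 1) + 1 := by
        have e := dc G y z; omega
      exact exists_adj_dist (G := G) this
    have hd1y : G.dist y y₁ = 1 := dist_adj hay1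
    have ey : G.dist y z = G.dist z y := dc G y z
    have t3 : G.dist y x ≤ G.dist y y₁ + G.dist y₁ x := tri hm y y₁ x
    have t4 : G.dist y₁ x ≤ G.dist y₁ z + G.dist z x := tri hm y₁ z x
    have exy : G.dist y x = G.dist x y := dc G y x
    have ezx : G.dist z x = G.dist x z := dc G z x
    have hby1 : Btw G y y₁ x := by unfold Btw; omega
    have hby1z : Btw G y₁ z x := by unfold Btw; omega
    have hy1B : y₁ ∈ side G b a := by
      rcases sides_total hm hab y₁ with h | h
      · refine absurd (hIH' y₁ x z h hx hby1z ?_) hz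
        unfold Btw at hby1
        have := dc G y₁ x
        omega
      · exact h
    -- two cases on dist x y
    by_cases hcase : 3 ≤ G.dist x y
    · have e1 := halfStep hm hab hIH' hx hy hax1 hx1B hbx1
      have e2 : G.dist y x - 1 + G.dist x a = G.dist y a + 1 := by
        refine halfStep hm hab ?_ hy hx hay1 hy1B hby1
        intro x' y' z' hx' hy' hb' hlt
        exact hIH' x' y' z' hx' hy' hb' (by omega)
      omega
    · -- dist x y = 2, z is a common neighbour
      have hxy2 : G.dist x y = 2 := by
        rcases noTies hm hab x with _ | _ <;> rcases noTies hm hab y with _ | _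
        all_goals (rw [mem_side] at hx hy; omega)
      have hxz : G.dist x z = 1 := by omega
      have hzy' : G.dist z y = 1 := by omega
      have haxz : G.Adj x z := adj_of_dist_one hxz
      have hayz : G.Adj y z := adj_of_dist_one (by rw [← ey] at hzy'; exact hzy')
      obtain ⟨hc1, hc2⟩ := crossing hm hab haxz hx hzB
      obtain ⟨hc3, hc4⟩ := crossing hm hab hayz hy hzB
      have hxy_ne : x ≠ y := fun h => by rw [h] at hxy2; rw [SimpleGraph.dist_self] at hxy2; omega
      have eax := dc G a x; have eay := dc G a y; have eaz := dc G a z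
      obtain ⟨w, hwx, hwy, hwd, hbw1, hbw2⟩ :=
        quadrangle hm (u := a) haxz hayz hxy_ne (by omega) (by omega)
      have wA : w ∈ side G a b := btw_side hm hab hx (btw_symm hbw1)
      have hwz_ne : w ≠ z := side_ne wA hzB
      have hdwx : G.dist w x = 1 := dist_adj hwx
      have hnwz : ¬ G.Adj w z := by
        intro h
        have nt := noTies hm h x
        have e1 := dc G x w
        omega
      have hdwz : G.dist w z = 2 := by
        have hle : G.dist w z ≤ 2 := by
          have := tri hm w x z
          omega
        have h0 : G.dist w z ≠ 0 := fun h => hwz_ne (dist_eq_zero hm h)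
        have h1 : G.dist w z ≠ 1 := fun h => hnwz (adj_of_dist_one h)
        omega
      obtain ⟨c, ⟨q1, q2, q3⟩, _⟩ := hm.2 w z b
      have cB : c ∈ side G b a := btw_side hm hab.symm hzB q3
      have hcw : c ≠ w := side_ne cB wA
      have hcz : c ≠ z := by
        intro h
        rw [h] at q2
        rw [mem_side] at wA hzB
        have eaw := dc G a w
        omega
      have hq1 : G.dist w c = 1 ∧ G.dist c z = 1 := by
        rw [hdwz] at q1
        have p1 : 0 < G.dist w c := by
          have := dist_pos_of_ne hm (Ne.symm hcw)
          have e := dc G c w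
          omega
        have p2 : 0 < G.dist c z := dist_pos_of_ne hm hcz
        omega
      have hadj_wc : G.Adj w c := adj_of_dist_one hq1.1
      have hadj_cz : G.Adj c z := adj_of_dist_one hq1.2
      have hcx : c ≠ x := (side_ne hx cB).symm
      have hcy : c ≠ y := (side_ne hy cB).symm
      have hdxc : G.dist x c = 2 := by
        have hle : G.dist x c ≤ 2 := by
          have t := tri hm x z c
          have e := dc G z c
          omega
        have h0 : G.dist x c ≠ 0 := fun h => hcx (dist_eq_zero hm h).symm
        have h1 : G.dist x c ≠ 1 := by
          intro h
          have nt := noTies hm hadj_cz x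
          have e := dc G x c
          omega
        omega
      have hdyc : G.dist y c = 2 := by
        have hle : G.dist y c ≤ 2 := by
          have t := tri hm y z c
          have e := dc G z c
          have e2 := dc G y z
          omega
        have h0 : G.dist y c ≠ 0 := fun h => hcy (dist_eq_zero hm h).symm
        have h1 : G.dist y c ≠ 1 := by
          intro h
          have nt := noTies hm hadj_cz y
          have e := dc G y c
          omega
        omega
      -- w and z are both medians of (x, y, c)
      have hdxw : G.dist x w = 1 := by rw [dc G x w]; exact hdwx
      have hdwy : G.dist w y = 1 := dist_adj hwy
      have hdzy : G.dist z y = 1 := hzy'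
      have hdwc : G.dist w c = 1 := hq1.1
      have hdzc : G.dist z c = 1 := by rw [dc G z c]; exact hq1.2
      have eyw := dc G y w
      have eyz := dc G y z
      have medw : Btw G x w y ∧ Btw G x w c ∧ Btw G y w c := by
        refine ⟨?_, ?_, ?_⟩ <;> (unfold Btw; omega)
      have medz : Btw G x z y ∧ Btw G x z c ∧ Btw G y z c := by
        refine ⟨?_, ?_, ?_⟩ <;> (unfold Btw; omega)
      exact hwz_ne (med_eq hm medw medz)

/-- Halfspaces of median graphs are convex. -/
lemma side_btwConvex {a b : V} (hab : G.Adj a b) : BtwConvex G (side G a b) :=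
  fun x hx y hy z h => side_convex_aux hm (G.dist x y) a b x y z hab hx hy h le_rfl

end Median
end MedPCE
namespace MedPCE
open SimpleGraph

universe v
variable {V : Type v} {G : SimpleGraph V}

section Median
variable (hm : IsMedianGraph G)
include hm

/-- A vertex on one side has at most one neighbour on the other side. -/
lemma unique_cross {a b v w w' : V} (hab : G.Adj a b) (hv : v ∈ side G b a)
    (hw : w ∈ side G a b) (hw' : w' ∈ side G a b)
    (h1 : G.Adj v w) (h2 : G.Adj v w') : w = w' := by
  by_contra hne
  obtain ⟨hcr1, hcr2⟩ := crossing hm hab h1.symm hw hv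
  obtain ⟨hcr3, hcr4⟩ := crossing hm hab h2.symm hw' hv
  have hdvw : G.dist v w = 1 := dist_adj h1
  have hdvw' : G.dist v w' = 1 := dist_adj h2
  have hnww' : ¬ G.Adj w w' := by
    intro h
    have nt := noTies hm h v
    omega
  have hdww' : G.dist w w' = 2 := by
    have hle := tri hm w v w'
    have e := dc G w v
    have h0 : G.dist w w' ≠ 0 := fun h => hne (dist_eq_zero hm h)
    have h1' : G.dist w w' ≠ 1 := fun h => hnww' (adj_of_dist_one h)
    omega
  have eaw := dc G a w; have eaw' := dc G a w'; have eav := dc G a v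
  obtain ⟨c, hcw, hcw', hcd, hbc1, hbc2⟩ :=
    quadrangle hm (u := a) h1.symm h2.symm hne (by omega) (by omega)
  have cA : c ∈ side G a b := btw_side hm hab hw (btw_symm hbc1)
  have hcv : c ≠ v := side_ne cA hv
  have hdcw : G.dist c w = 1 := dist_adj hcw
  have hdcw' : G.dist c w' = 1 := dist_adj hcw'
  have hncv : ¬ G.Adj c v := by
    intro h
    have nt := noTies hm h w
    have e1 := dc G w c; have e2 := dc G w v
    omega
  have hdcv : G.dist c v = 2 := by
    have hle := tri hm c w v
    have e := dc G w v
    have h0 : G.dist c v ≠ 0 := fun h => hcv (dist_eq_zero hm h)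
    have h1' : G.dist c v ≠ 1 := fun h => hncv (adj_of_dist_one h)
    omega
  obtain ⟨e, ⟨q1, q2, q3⟩, _⟩ := hm.2 c v b
  have eB : e ∈ side G b a := btw_side hm hab.symm hv q3
  have hec : e ≠ c := (side_ne cA eB).symm
  have hev : e ≠ v := by
    intro h
    rw [h] at q2
    rw [mem_side] at cA hv
    have eac := dc G a c
    omega
  have hq : G.dist c e = 1 ∧ G.dist e v = 1 := by
    rw [hdcv] at q1
    have p1 : 0 < G.dist c e := by
      have := dist_pos_of_ne hm (Ne.symm hec)
      omega
    have p2 : 0 < G.dist e v := by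
      have := dist_pos_of_ne hm hev
      have e' := dc G e v
      omega
    omega
  have hadj_ce : G.Adj c e := adj_of_dist_one hq.1
  have hadj_ev : G.Adj e v := adj_of_dist_one hq.2
  have hew : e ≠ w := (side_ne hw eB).symm
  have hew' : e ≠ w' := (side_ne hw' eB).symm
  have hdwe : G.dist w e = 2 := by
    have hle : G.dist w e ≤ 2 := by
      have t := tri hm w v e
      have e1 := dc G w v; have e2 := dc G v e
      omega
    have h0 : G.dist w e ≠ 0 := fun h => hew ((dist_eq_zero hm h).symm)
    have h1' : G.dist w e ≠ 1 := by
      intro h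
      have nt := noTies hm hadj_ev w
      have e1 := dc G w e; have e2 := dc G w v
      omega
    omega
  have hdw'e : G.dist w' e = 2 := by
    have hle : G.dist w' e ≤ 2 := by
      have t := tri hm w' v e
      have e1 := dc G w' v; have e2 := dc G v e
      omega
    have h0 : G.dist w' e ≠ 0 := fun h => hew' ((dist_eq_zero hm h).symm)
    have h1' : G.dist w' e ≠ 1 := by
      intro h
      have nt := noTies hm hadj_ev w'
      have e1 := dc G w' e; have e2 := dc G w' v
      omega
    omega
  -- both c and v are medians of (w, w', e)
  have e1 := dc G w c; have e2 := dc G w v; have e3 := dc G w' e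
  have e4 := dc G w' v; have e5 := dc G w' c; have e6 := dc G c e
  have e7 := dc G v e
  have medc : Btw G w c w' ∧ Btw G w c e ∧ Btw G w' c e := by
    refine ⟨?_, ?_, ?_⟩ <;> (unfold Btw; omega)
  have medv : Btw G w v w' ∧ Btw G w v e ∧ Btw G w' v e := by
    refine ⟨?_, ?_, ?_⟩ <;> (unfold Btw; omega)
  exact hcv (med_eq hm medc medv)

/-- Parity of distances: `d(x,y) + d(x,r) + d(y,r)` is always even. -/
lemma dist_parity (r : V) :
    ∀ n x y, G.dist x y ≤ n → (G.dist x y + G.dist x r + G.dist y r) % 2 = 0 := by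
  intro n
  induction n with
  | zero =>
    intro x y h
    have hxy : x = y := dist_eq_zero hm (by omega)
    subst hxy
    rw [SimpleGraph.dist_self]
    omega
  | succ n IH =>
    intro x y h
    by_cases h0 : G.dist x y = 0
    · have hxy : x = y := dist_eq_zero hm h0
      subst hxy
      rw [SimpleGraph.dist_self]
      omega
    · obtain ⟨z, hadj, hdz⟩ := exists_adj_dist (show G.dist x y = (G.dist x y - 1) + 1 by omega)
      have hIH := IH z y (by omega)
      have nt := noTies hm hadj r
      have e1 := dc G x z
      have e2 := dc G r x
      have e3 := dc G r z
      have e4 := dc G z r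
      omega

/-- Parallelism of crossing edges. -/
lemma parallel {a b u v u' v' : V} (hab : G.Adj a b)
    (hu : u ∈ side G a b) (hv : v ∈ side G b a) (huv : G.Adj u v)
    (hu' : u' ∈ side G a b) (hv' : v' ∈ side G b a) (hu'v' : G.Adj u' v') :
    G.dist v v' = G.dist u u' ∧ G.dist u v' = G.dist u u' + 1 := by
  have hduv : G.dist u v = 1 := dist_adj huv
  have hdu'v' : G.dist u' v' = 1 := dist_adj hu'v'
  obtain ⟨c1, c2⟩ := crossing hm hab huv hu hv
  obtain ⟨c3, c4⟩ := crossing hm hab hu'v' hu' hv'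
  -- parity facts
  have p1 := dist_parity hm a (G.dist u u') u u' le_rfl
  have p2 := dist_parity hm a (G.dist v v') v v' le_rfl
  have p3 := dist_parity hm a (G.dist u v') u v' le_rfl
  -- triangle bounds
  have t1 := tri hm v u u'
  have t2 := tri hm u u' v'
  have t3 := tri hm v u v'
  have t4 := tri hm u v' v
  have t5 := tri hm u u' v'
  have t6 := tri hm u v v'
  have t7 := tri hm v v' u'
  have t8 := tri hm u v u'
  have t9 := tri hm u v' u'
  have e1 := dc G v u; have e2 := dc G v' v; have e3 := dc G v' u'
  have e10 := dc G u' v'; have e11 := dc G v' u; have e12 := dc G u' v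
  -- exclude d(v,v') = d(u,u') + 2
  have hA := side_btwConvex hm hab
  have hB := side_btwConvex hm hab.symm
  have hvv'₁ : G.dist v v' ≠ G.dist u u' + 2 := by
    intro hcase
    have hbu : Btw G v u v' := by unfold Btw; omega
    exact sides_disjoint hu (hB v hv v' hv' u hbu)
  have hvv'₂ : G.dist u u' ≠ G.dist v v' + 2 := by
    intro hcase
    have hbv : Btw G u v u' := by unfold Btw; omega
    exact sides_disjoint (hA u hu u' hu' v hbv) hv
  have hvv' : G.dist v v' = G.dist u u' := by omega
  refine ⟨hvv', ?_⟩
  have huv'ne : G.dist u v' ≠ G.dist u u' - 1 ∨ G.dist u u' = 0 := by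
    by_cases h0 : G.dist u u' = 0
    · right; exact h0
    · left
      intro hcase
      have hbv' : Btw G u v' u' := by unfold Btw; omega
      exact sides_disjoint (hA u hu u' hu' v' hbv') hv'
  rcases huv'ne with h | h
  · omega
  · have : u = u' := dist_eq_zero hm h
    subst this
    have : v = v' := unique_cross hm hab.symm hu hv hv' huv hu'v'
    subst this
    rw [h, SimpleGraph.dist_self] at *
    omega

/-- Distance from an `a`-side vertex to the far end of a crossing edge. -/
lemma cross_dist {a b z u w : V} (hab : G.Adj a b)
    (hz : z ∈ side G a b) (hu : u ∈ side G a b) (hw : w ∈ side G b a)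
    (huw : G.Adj u w) : G.dist z w = G.dist z u + 1 := by
  have nt := noTies hm huw z
  have hd := dist_adj huw
  have e := dc G w u
  rcases nt with h | h
  · omega
  · exfalso
    have hbu : Btw G z w u := by unfold Btw; omega
    exact sides_disjoint (side_btwConvex hm hab z hz u hu w hbu) hw

/-- The set of vertices with a neighbour on the other side. -/
def uside (G : SimpleGraph V) (a b : V) : Set V :=
  {u | u ∈ side G a b ∧ ∃ w, w ∈ side G b a ∧ G.Adj u w}

lemma uside_btwConvex {a b : V} (hab : G.Adj a b) : BtwConvex G (uside G a b) := by
  rintro u ⟨huA, v, hvB, huv⟩ u' ⟨hu'A, v', hv'B, hu'v'⟩ z hbtw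
  have hzA : z ∈ side G a b := side_btwConvex hm hab u huA u' hu'A z hbtw
  refine ⟨hzA, ?_⟩
  obtain ⟨hp, _⟩ := parallel hm hab huA hvB huv hu'A hv'B hu'v'
  have hq1 : G.dist z v = G.dist z u + 1 := cross_dist hm hab hzA huA hvB huv
  have hq2 : G.dist z v' = G.dist z u' + 1 := cross_dist hm hab hzA hu'A hv'B hu'v'
  obtain ⟨c, ⟨m1, m2, m3⟩, _⟩ := hm.2 v v' z
  have hcB : c ∈ side G b a := side_btwConvex hm hab.symm v hvB v' hv'B c m1
  unfold Btw at hbtw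
  have e1 := dc G v z; have e2 := dc G v' z; have e3 := dc G z u
  have e4 := dc G z u'; have e5 := dc G c z; have e6 := dc G u z; have e7 := dc G u' z
  have e8 := dc G v' c
  have hdzc : G.dist z c = 1 := by omega
  exact ⟨c, hcB, adj_of_dist_one hdzc⟩

end Median
end MedPCE
namespace MedPCE
open SimpleGraph

universe v
variable {V : Type v} {G : SimpleGraph V}

lemma walk_first {P Q : V → Prop} :
    ∀ {x y : V} (p : G.Walk x y), (∀ z ∈ p.support, P z) → ¬ Q x → Q y →
      ∃ c d, G.Adj c d ∧ P c ∧ P d ∧ ¬ Q c ∧ Q d := by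
  intro x y p
  induction p with
  | nil => intro _ hx hy; exact absurd hy hx
  | @cons u w y h q IH =>
    intro hP hx hy
    by_cases hw : Q w
    · exact ⟨u, w, h, hP u (by simp), hP w (by simp), hx, hw⟩
    · exact IH (fun z hz => hP z (by simp [hz])) hw hy

section Median
variable (hm : IsMedianGraph G)
include hm

lemma inner_side_subset {a b c d d' : V} (hab : G.Adj a b)
    (hc : c ∈ side G b a) (hd : d ∈ side G b a) (hdc : G.Adj c d)
    (hcno : ∀ w, w ∈ side G a b → ¬ G.Adj c w)
    (hd' : d' ∈ side G a b) (hdd' : G.Adj d d') :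
    side G c d ⊆ side G b a := by
  intro t ht
  rcases sides_total hm hab t with htA | htB
  swap
  · exact htB
  exfalso
  rw [mem_side] at ht
  have h1 : G.dist t d = G.dist t d' + 1 := cross_dist hm hab htA hd' hd hdd'.symm
  obtain ⟨m, ⟨m1, m2, m3⟩, _⟩ := hm.2 t c d'
  have mA : m ∈ side G a b := side_btwConvex hm hab t htA d' hd' m m2
  have hne_cd' : c ≠ d' := (side_ne hd' hc).symm
  have hnadj : ¬ G.Adj c d' := fun h => hcno d' hd' h
  have hdcd' : G.dist c d' = 2 := by
    have hle : G.dist c d' ≤ 2 := by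
      have t1 := tri hm c d d'
      have := dist_adj hdc
      have := dist_adj hdd'
      omega
    have h0 : G.dist c d' ≠ 0 := fun h => hne_cd' (dist_eq_zero hm h)
    have h1' : G.dist c d' ≠ 1 := fun h => hnadj (adj_of_dist_one h)
    omega
  have hmc : m ≠ c := side_ne mA hc
  by_cases hmd' : m = d'
  · rw [hmd'] at m1
    have e1 := dc G d' c
    have ed := dist_adj hdc
    omega
  · have hpos1 : 0 < G.dist c m := by
      have := dist_pos_of_ne hm (Ne.symm hmc)
      omega
    have hpos2 : 0 < G.dist m d' := by
      have := dist_pos_of_ne hm hmd'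
      omega
    have hcm : G.dist c m = 1 := by omega
    exact hcno m mA (adj_of_dist_one hcm)

lemma exists_peripheral [Fintype V] (hcard : 1 < Fintype.card V) :
    ∃ a b : V, G.Adj a b ∧ ∀ v ∈ side G b a, ∃ w ∈ side G a b, G.Adj v w := by
  classical
  obtain ⟨x, y, hxy⟩ := Fintype.exists_pair_of_one_lt_card hcard
  have hd : G.dist x y = (G.dist x y - 1) + 1 := by
    have := dist_pos_of_ne hm hxy
    omega
  obtain ⟨z, hadj, -⟩ := exists_adj_dist hd
  -- minimise the size of the far side over all directed edges
  set S : Set ℕ := {n | ∃ a b : V, G.Adj a b ∧ n = (side G b a).ncard} with hS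
  have hSne : S.Nonempty := ⟨_, x, z, hadj, rfl⟩
  have hkmem := Nat.sInf_mem hSne
  obtain ⟨a, b, hab, hk⟩ := hkmem
  refine ⟨a, b, hab, ?_⟩
  by_contra hbad
  push_neg at hbad
  obtain ⟨y0, hy0B, hy0no⟩ := hbad
  have hy0nU : y0 ∉ uside G b a := by
    rintro ⟨-, w, hw, hadjw⟩
    exact hy0no w hw hadjw
  have hbU : b ∈ uside G b a :=
    ⟨mem_side_self hab.symm, a, mem_side_self hab, hab.symm⟩
  obtain ⟨p, hp⟩ := hm.1.exists_walk_length_eq_dist y0 b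
  have hsupp : ∀ w ∈ p.support, w ∈ side G b a := by
    intro w hw
    exact btw_side hm hab.symm hy0B (btw_of_mem_support p hp hw)
  obtain ⟨c, d, hcd, hcB, hdB, hcnU, hdU⟩ :=
    walk_first (P := (· ∈ side G b a)) (Q := (· ∈ uside G b a)) p hsupp hy0nU hbU
  obtain ⟨-, d', hd'A, hdd'⟩ := hdU
  have hcno : ∀ w, w ∈ side G a b → ¬ G.Adj c w := by
    intro w hw hadjw
    exact hcnU ⟨hcB, w, hw, hadjw⟩
  have hsub : side G c d ⊆ side G b a :=
    inner_side_subset hm hab hcB hdB hcd hcno hd'A hdd'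
  have hdnot : d ∉ side G c d := by
    rw [mem_side, SimpleGraph.dist_self]
    have := dist_adj hcd
    have e := dc G d c
    omega
  have hss : side G c d ⊂ side G b a := ⟨hsub, fun h => hdnot (h hdB)⟩
  have hlt : (side G c d).ncard < (side G b a).ncard :=
    Set.ncard_lt_ncard hss (Set.toFinite _)
  have hle : sInf S ≤ (side G c d).ncard := Nat.sInf_le ⟨d, c, hcd.symm, rfl⟩
  omega

end Median
end MedPCE
namespace MedPCE
open SimpleGraph

universe v
variable {V : Type v} {W : Type v}

lemma dist_map {G : SimpleGraph V} {G' : SimpleGraph W} (e : G ≃g G') (x y : V) :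
    G'.dist (e x) (e y) = G.dist x y := by
  have hle : ∀ {V₁ W₁ : Type v} (G₁ : SimpleGraph V₁) (G₁' : SimpleGraph W₁)
      (e₁ : G₁ ≃g G₁') (x₁ y₁ : V₁), G₁'.dist (e₁ x₁) (e₁ y₁) ≤ G₁.dist x₁ y₁ := by
    intro V₁ W₁ G₁ G₁' e₁ x₁ y₁
    by_cases hr : G₁.Reachable x₁ y₁
    · obtain ⟨p, hp⟩ := hr.exists_walk_length_eq_dist
      calc G₁'.dist (e₁ x₁) (e₁ y₁) ≤ (p.map e₁.toHom).length := SimpleGraph.dist_le _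
      _ = p.length := by rw [SimpleGraph.Walk.length_map]
      _ = G₁.dist x₁ y₁ := hp
    · have hr' : ¬ G₁'.Reachable (e₁ x₁) (e₁ y₁) := by
        rw [SimpleGraph.Iso.reachable_iff]
        exact hr
      rw [SimpleGraph.dist_eq_zero_of_not_reachable hr,
        SimpleGraph.dist_eq_zero_of_not_reachable hr']
  refine le_antisymm (hle G G' e x y) ?_
  have := hle G' G e.symm (e x) (e y)
  simpa using this

lemma median_iso {G : SimpleGraph V} {G' : SimpleGraph W} (hm : IsMedianGraph G)
    (e : G ≃g G') : IsMedianGraph G' := by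
  constructor
  · exact (SimpleGraph.Iso.connected_iff e).mp hm.1
  · intro u v w
    obtain ⟨m, ⟨h1, h2, h3⟩, hu⟩ := hm.2 (e.symm u) (e.symm v) (e.symm w)
    have key : ∀ s t : V, G'.dist (e s) (e t) = G.dist s t := dist_map e
    have key2 : ∀ s : W, ∀ t : V, G'.dist s (e t) = G.dist (e.symm s) t := by
      intro s t
      have := key (e.symm s) t
      simpa using this
    have key3 : ∀ s : V, ∀ t : W, G'.dist (e s) t = G.dist s (e.symm t) := by
      intro s t
      have := key s (e.symm t)
      simpa using this
    have key4 : ∀ s t : W, G'.dist s t = G.dist (e.symm s) (e.symm t) := by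
      intro s t
      have := key (e.symm s) (e.symm t)
      simpa using this
    refine ⟨e m, ⟨?_, ?_, ?_⟩, ?_⟩
    · simp only [key2, key3, key4]; exact h1
    · simp only [key2, key3, key4]; exact h2
    · simp only [key2, key3, key4]; exact h3
    · intro y ⟨g1, g2, g3⟩
      simp only [key4] at g1 g2 g3
      have := hu (e.symm y) ⟨g1, g2, g3⟩
      rw [← this]
      simp

section PCE
variable {G : SimpleGraph V} {S : Set V}

/-- Projection from the expansion back to the original graph. -/
def pceProj (S : Set V) : V ⊕ ↥S → V := Sum.elim id (fun s => (s : V))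

lemma pce_adj_inl_inl {x y : V} :
    (pceGraph G S).Adj (Sum.inl x) (Sum.inl y) ↔ G.Adj x y := Iff.rfl

lemma pce_walk_inl {x y : V} (p : G.Walk x y) :
    ∃ q : (pceGraph G S).Walk (Sum.inl x) (Sum.inl y), q.length = p.length := by
  induction p with
  | nil => exact ⟨.nil, rfl⟩
  | cons h p IH =>
    obtain ⟨q, hq⟩ := IH
    exact ⟨.cons (show (pceGraph G S).Adj (Sum.inl _) (Sum.inl _) from h) q, by simp [hq]⟩

lemma pce_walk_inr : ∀ {x y : V} (p : G.Walk x y) (hx : x ∈ S) (hy : y ∈ S),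
    (∀ z ∈ p.support, z ∈ S) →
    ∃ q : (pceGraph G S).Walk (Sum.inr ⟨x, hx⟩) (Sum.inr ⟨y, hy⟩), q.length = p.length := by
  intro x y p
  induction p with
  | nil => intro hx hy _; exact ⟨.nil, rfl⟩
  | @cons u w y h p IH =>
    intro hx hy hsupp
    have hw : w ∈ S := hsupp w (by simp)
    obtain ⟨q, hq⟩ := IH hw hy (fun z hz => hsupp z (by simp [hz]))
    exact ⟨.cons (show (pceGraph G S).Adj (Sum.inr ⟨u, hx⟩) (Sum.inr ⟨w, hw⟩) from h) q,
      by simp [hq]⟩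

lemma pce_walk_proj : ∀ {x y : V ⊕ ↥S} (w : (pceGraph G S).Walk x y),
    ∃ q : G.Walk (pceProj S x) (pceProj S y), q.length ≤ w.length ∧
      (x.isLeft ≠ y.isLeft → q.length + 1 ≤ w.length) := by
  intro x y w
  induction w with
  | nil => exact ⟨.nil, by simp, by simp⟩
  | @cons x z y h w IH =>
    obtain ⟨q, hq1, hq2⟩ := IH
    match x, z, h with
    | Sum.inl u, Sum.inl v, h =>
      refine ⟨.cons h q, by simp; change q.length + 1 ≤ _; omega, ?_⟩
      intro hside
      have : (Sum.inl (α := V) (β := ↥S) v).isLeft ≠ y.isLeft := hside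
      have := hq2 this
      simp only [SimpleGraph.Walk.length_cons]
      change q.length + 1 + 1 ≤ _
      omega
    | Sum.inr u, Sum.inr v, h =>
      refine ⟨.cons h q, by simp; change q.length + 1 ≤ _; omega, ?_⟩
      intro hside
      have : (Sum.inr (α := V) (β := ↥S) v).isLeft ≠ y.isLeft := hside
      have := hq2 this
      simp only [SimpleGraph.Walk.length_cons]
      change q.length + 1 + 1 ≤ _
      omega
    | Sum.inl u, Sum.inr v, h =>
      have hceq : pceProj S (Sum.inr v) = pceProj S (Sum.inl u) := by
        have huv : u = (v : V) := h
        simp [pceProj, huv]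
      refine ⟨q.copy hceq rfl, ?_, ?_⟩
      · rw [SimpleGraph.Walk.length_copy]
        simp only [SimpleGraph.Walk.length_cons]
        omega
      · intro hside
        rw [SimpleGraph.Walk.length_copy]
        simp only [SimpleGraph.Walk.length_cons]
        by_cases hy : y.isLeft
        · have : (Sum.inr (α := V) (β := ↥S) v).isLeft ≠ y.isLeft := by simp [hy]
          have := hq2 this
          omega
        · omega
    | Sum.inr u, Sum.inl v, h =>
      have hceq : pceProj S (Sum.inl v) = pceProj S (Sum.inr u) := by
        have huv : (u : V) = v := h
        simp [pceProj, ← huv]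
      refine ⟨q.copy hceq rfl, ?_, ?_⟩
      · rw [SimpleGraph.Walk.length_copy]
        simp only [SimpleGraph.Walk.length_cons]
        omega
      · intro hside
        rw [SimpleGraph.Walk.length_copy]
        simp only [SimpleGraph.Walk.length_cons]
        by_cases hy : y.isLeft
        · omega
        · have : (Sum.inl (α := V) (β := ↥S) v).isLeft ≠ y.isLeft := by simp [hy]
          have := hq2 this
          omega

end PCE
end MedPCE
namespace MedPCE
open SimpleGraph

universe v
variable {V : Type v}

section PCE
variable {G : SimpleGraph V} {S : Set V}

lemma pce_connected (hc : G.Connected) : (pceGraph G S).Connected := by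
  rw [SimpleGraph.connected_iff]
  have base : ∀ u v : V, (pceGraph G S).Reachable (Sum.inl u) (Sum.inl v) := by
    intro u v
    obtain ⟨p⟩ := hc u v
    obtain ⟨q, -⟩ := pce_walk_inl (S := S) p
    exact ⟨q⟩
  have key : ∀ z : V ⊕ ↥S, (pceGraph G S).Reachable z (Sum.inl (pceProj S z)) := by
    intro z
    match z with
    | Sum.inl u => exact SimpleGraph.Reachable.refl _
    | Sum.inr s =>
      exact SimpleGraph.Adj.reachable (show ((s : V) = (s : V)) from rfl)
  refine ⟨fun x y => ?_, ⟨Sum.inl hc.nonempty.some⟩⟩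
  exact ((key x).trans (base _ _)).trans (key y).symm

lemma pce_dist_inl_inl (hc : G.Connected) (x y : V) :
    (pceGraph G S).dist (Sum.inl x) (Sum.inl y) = G.dist x y := by
  apply le_antisymm
  · obtain ⟨p, hp⟩ := hc.exists_walk_length_eq_dist x y
    obtain ⟨q, hq⟩ := pce_walk_inl (S := S) p
    calc (pceGraph G S).dist (Sum.inl x) (Sum.inl y) ≤ q.length := SimpleGraph.dist_le q
    _ = G.dist x y := by rw [hq, hp]
  · obtain ⟨w, hw⟩ := (pce_connected (S := S) hc).exists_walk_length_eq_dist
      (Sum.inl x) (Sum.inl y)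
    obtain ⟨q, hq1, -⟩ := pce_walk_proj w
    have h2 : G.dist x y ≤ q.length := SimpleGraph.dist_le q
    omega

lemma pce_dist_inr_inr (hc : G.Connected) (hconv : IsConvexSet G S) (u v : ↥S) :
    (pceGraph G S).dist (Sum.inr u) (Sum.inr v) = G.dist (u : V) (v : V) := by
  apply le_antisymm
  · obtain ⟨p, hp⟩ := hc.exists_walk_length_eq_dist (u : V) (v : V)
    have hpath := p.isPath_of_length_eq_dist hp
    have hsupp : ∀ z ∈ p.support, z ∈ S := hconv _ u.2 _ v.2 p hpath hp
    obtain ⟨q, hq⟩ := pce_walk_inr p u.2 v.2 hsupp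
    calc (pceGraph G S).dist (Sum.inr u) (Sum.inr v) ≤ q.length := SimpleGraph.dist_le q
    _ = G.dist (u : V) (v : V) := by rw [hq, hp]
  · obtain ⟨w, hw⟩ := (pce_connected (S := S) hc).exists_walk_length_eq_dist
      (Sum.inr u) (Sum.inr v)
    obtain ⟨q, hq1, -⟩ := pce_walk_proj w
    have h2 : G.dist (u : V) (v : V) ≤ q.length := SimpleGraph.dist_le q
    omega

lemma pce_dist_inl_inr (hc : G.Connected) (x : V) (v : ↥S) :
    (pceGraph G S).dist (Sum.inl x) (Sum.inr v) = G.dist x (v : V) + 1 := by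
  apply le_antisymm
  · obtain ⟨p, hp⟩ := hc.exists_walk_length_eq_dist x (v : V)
    obtain ⟨q, hq⟩ := pce_walk_inl (S := S) p
    have hadj : (pceGraph G S).Adj (Sum.inl (v : V)) (Sum.inr v) := rfl
    calc (pceGraph G S).dist (Sum.inl x) (Sum.inr v) ≤ (q.concat hadj).length :=
      SimpleGraph.dist_le _
    _ = G.dist x (v : V) + 1 := by rw [SimpleGraph.Walk.length_concat, hq, hp]
  · obtain ⟨w, hw⟩ := (pce_connected (S := S) hc).exists_walk_length_eq_dist
      (Sum.inl x) (Sum.inr v)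
    obtain ⟨q, -, hq2⟩ := pce_walk_proj w
    have hside : (Sum.inl x : V ⊕ ↥S).isLeft ≠ (Sum.inr v : V ⊕ ↥S).isLeft := by simp
    have h2 : G.dist x (v : V) ≤ q.length := SimpleGraph.dist_le q
    have := hq2 hside
    omega

lemma pce_dist_inr_inl (hc : G.Connected) (x : V) (v : ↥S) :
    (pceGraph G S).dist (Sum.inr v) (Sum.inl x) = G.dist x (v : V) + 1 := by
  rw [SimpleGraph.dist_comm, pce_dist_inl_inr hc]

end PCE

section Perm
variable {α : Type*} (H : SimpleGraph α)

lemma exu_medpred_perm12 {u v w : α} :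
    (∃! m, Btw H u m v ∧ Btw H u m w ∧ Btw H v m w) →
    (∃! m, Btw H v m u ∧ Btw H v m w ∧ Btw H u m w) := by
  rintro ⟨m, ⟨a, b, c⟩, hu⟩
  exact ⟨m, ⟨btw_symm a, c, b⟩,
    fun y ⟨a', b', c'⟩ => hu y ⟨btw_symm a', c', b'⟩⟩

lemma exu_medpred_perm23 {u v w : α} :
    (∃! m, Btw H u m v ∧ Btw H u m w ∧ Btw H v m w) →
    (∃! m, Btw H u m w ∧ Btw H u m v ∧ Btw H w m v) := by
  rintro ⟨m, ⟨a, b, c⟩, hu⟩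
  exact ⟨m, ⟨b, a, btw_symm c⟩,
    fun y ⟨a', b', c'⟩ => hu y ⟨b', a', btw_symm c'⟩⟩

end Perm

section PCEMedian
variable {G : SimpleGraph V} {S : Set V}

lemma pce_median (hm : IsMedianGraph G) (hS : S.Nonempty) (hconv : IsConvexSet G S) :
    IsMedianGraph (pceGraph G S) := by
  have hc := hm.1
  have dLL := pce_dist_inl_inl (S := S) hc
  have dRR := pce_dist_inr_inr hc hconv
  have dLR := pce_dist_inl_inr (S := S) hc
  have dRL := pce_dist_inr_inl (S := S) hc
  have hSbtw := btwConvex_of_isConvexSet hc hconv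
  set H := pceGraph G S with hH
  -- canonical cases
  have caseLLL : ∀ x y z : V, ∃! m, Btw H (Sum.inl x) m (Sum.inl y) ∧
      Btw H (Sum.inl x) m (Sum.inl z) ∧ Btw H (Sum.inl y) m (Sum.inl z) := by
    intro x y z
    obtain ⟨m0, ⟨h1, h2, h3⟩, hu⟩ := hm.2 x y z
    refine ⟨Sum.inl m0, ⟨?_, ?_, ?_⟩, ?_⟩
    · show H.dist _ _ + H.dist _ _ = H.dist _ _
      rw [dLL, dLL, dLL]; exact h1
    · show H.dist _ _ + H.dist _ _ = H.dist _ _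
      rw [dLL, dLL, dLL]; exact h2
    · show H.dist _ _ + H.dist _ _ = H.dist _ _
      rw [dLL, dLL, dLL]; exact h3
    · rintro (t | t) ⟨g1, g2, g3⟩
      · unfold Btw at g1 g2 g3
        rw [dLL, dLL, dLL] at g1 g2 g3
        exact congrArg Sum.inl (hu t ⟨g1, g2, g3⟩)
      · exfalso
        unfold Btw at g1
        rw [dLR, dRL, dLL] at g1
        have ht := hm.1.dist_triangle (u := x) (v := (t : V)) (w := y)
        have e := dc G y (t : V)
        omega
  have caseLLR : ∀ (x y : V) (z : ↥S), ∃! m, Btw H (Sum.inl x) m (Sum.inl y) ∧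
      Btw H (Sum.inl x) m (Sum.inr z) ∧ Btw H (Sum.inl y) m (Sum.inr z) := by
    intro x y z
    obtain ⟨m0, ⟨h1, h2, h3⟩, hu⟩ := hm.2 x y (z : V)
    refine ⟨Sum.inl m0, ⟨?_, ?_, ?_⟩, ?_⟩
    · show H.dist _ _ + H.dist _ _ = H.dist _ _
      rw [dLL, dLL, dLL]; exact h1
    · show H.dist _ _ + H.dist _ _ = H.dist _ _
      rw [dLL, dLR, dLR]; omega
    · show H.dist _ _ + H.dist _ _ = H.dist _ _
      rw [dLL, dLR, dLR]; omega
    · rintro (t | t) ⟨g1, g2, g3⟩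
      · unfold Btw at g1 g2 g3
        rw [dLL, dLL, dLL] at g1
        rw [dLL, dLR, dLR] at g2
        rw [dLL, dLR, dLR] at g3
        exact congrArg Sum.inl (hu t ⟨g1, by omega, by omega⟩)
      · exfalso
        unfold Btw at g1
        rw [dLR, dRL, dLL] at g1
        have ht := hm.1.dist_triangle (u := x) (v := (t : V)) (w := y)
        have e := dc G y (t : V)
        omega
  have caseLRR : ∀ (x : V) (y z : ↥S), ∃! m, Btw H (Sum.inl x) m (Sum.inr y) ∧
      Btw H (Sum.inl x) m (Sum.inr z) ∧ Btw H (Sum.inr y) m (Sum.inr z) := by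
    intro x y z
    obtain ⟨m0, ⟨h1, h2, h3⟩, hu⟩ := hm.2 x (y : V) (z : V)
    have hm0S : m0 ∈ S := hSbtw (y : V) y.2 (z : V) z.2 m0 h3
    refine ⟨Sum.inr ⟨m0, hm0S⟩, ⟨?_, ?_, ?_⟩, ?_⟩
    · show H.dist _ _ + H.dist _ _ = H.dist _ _
      rw [dLR, dRR, dLR]
      show (G.dist x m0 + 1) + G.dist m0 (y : V) = G.dist x (y : V) + 1
      omega
    · show H.dist _ _ + H.dist _ _ = H.dist _ _
      rw [dLR, dRR, dLR]
      show (G.dist x m0 + 1) + G.dist m0 (z : V) = G.dist x (z : V) + 1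
      omega
    · show H.dist _ _ + H.dist _ _ = H.dist _ _
      rw [dRR, dRR, dRR]
      exact h3
    · rintro (t | t) ⟨g1, g2, g3⟩
      · exfalso
        unfold Btw at g3
        rw [dRL, dLR, dRR] at g3
        have ht := hm.1.dist_triangle (u := (y : V)) (v := (t : V)) (w := (z : V))
        have e1 := dc G t (y : V)
        omega
      · unfold Btw at g1 g2 g3
        rw [dLR, dRR, dLR] at g1
        rw [dLR, dRR, dLR] at g2
        rw [dRR, dRR, dRR] at g3
        have := hu (t : V) ⟨by omega, by omega, g3⟩
        exact congrArg Sum.inr (Subtype.ext this)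
  have caseRRR : ∀ (x y z : ↥S), ∃! m, Btw H (Sum.inr x) m (Sum.inr y) ∧
      Btw H (Sum.inr x) m (Sum.inr z) ∧ Btw H (Sum.inr y) m (Sum.inr z) := by
    intro x y z
    obtain ⟨m0, ⟨h1, h2, h3⟩, hu⟩ := hm.2 (x : V) (y : V) (z : V)
    have hm0S : m0 ∈ S := hSbtw (x : V) x.2 (y : V) y.2 m0 h1
    refine ⟨Sum.inr ⟨m0, hm0S⟩, ⟨?_, ?_, ?_⟩, ?_⟩
    · show H.dist _ _ + H.dist _ _ = H.dist _ _
      rw [dRR, dRR, dRR]; exact h1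
    · show H.dist _ _ + H.dist _ _ = H.dist _ _
      rw [dRR, dRR, dRR]; exact h2
    · show H.dist _ _ + H.dist _ _ = H.dist _ _
      rw [dRR, dRR, dRR]; exact h3
    · rintro (t | t) ⟨g1, g2, g3⟩
      · exfalso
        unfold Btw at g1
        rw [dRL, dLR, dRR] at g1
        have ht := hm.1.dist_triangle (u := (x : V)) (v := t) (w := (y : V))
        have e1 := dc G t (x : V)
        omega
      · unfold Btw at g1 g2 g3
        rw [dRR, dRR, dRR] at g1 g2 g3
        have := hu (t : V) ⟨g1, g2, g3⟩
        exact congrArg Sum.inr (Subtype.ext this)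
  refine ⟨pce_connected hc, ?_⟩
  rintro (x | x) (y | y) (z | z)
  · exact caseLLL x y z
  · exact caseLLR x y z
  · exact exu_medpred_perm23 H (caseLLR x z y)
  · exact caseLRR x y z
  · exact exu_medpred_perm12 H (exu_medpred_perm23 H (caseLLR y z x))
  · exact exu_medpred_perm12 H (caseLRR y x z)
  · exact exu_medpred_perm23 H (exu_medpred_perm12 H (caseLRR z x y))
  · exact caseRRR x y z

end PCEMedian

/-- Every graph obtained by peripheral convex expansions is a median graph. -/
lemma obtained_median : ∀ {V : Type v} {G : SimpleGraph V},
    ObtainedByPCE V G → IsMedianGraph G := by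
  intro V G h
  induction h with
  | base =>
    constructor
    · rw [SimpleGraph.connected_iff]
      refine ⟨fun x y => ?_, ⟨PUnit.unit⟩⟩
      rw [Subsingleton.elim x y]
    · intro u v w
      refine ⟨u, ⟨?_, ?_, ?_⟩, fun y _ => Subsingleton.elim y u⟩ <;> simp
  | expand G S hS hconv hG ih => exact pce_median ih hS hconv
  | iso G G' hG e ih => exact median_iso ih e.some
end MedPCE
namespace MedPCE
open SimpleGraph

universe v
variable {V : Type v} {G : SimpleGraph V} {A : Set V}

lemma induce_walk_lift : ∀ {x y : V} (p : G.Walk x y) (hx : x ∈ A) (hy : y ∈ A),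
    (∀ z ∈ p.support, z ∈ A) →
    ∃ q : (G.induce A).Walk ⟨x, hx⟩ ⟨y, hy⟩, q.length = p.length := by
  intro x y p
  induction p with
  | nil => intro hx hy _; exact ⟨.nil, rfl⟩
  | @cons u w y h p IH =>
    intro hx hy hsupp
    have hw : w ∈ A := hsupp w (by simp)
    obtain ⟨q, hq⟩ := IH hw hy (fun z hz => hsupp z (by simp [hz]))
    exact ⟨.cons (show (G.induce A).Adj ⟨u, hx⟩ ⟨w, hw⟩ from h) q, by simp [hq]⟩

lemma induce_dist (hc : G.Connected) (hbc : BtwConvex G A) (x y : ↥A) :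
    (G.induce A).dist x y = G.dist (x : V) (y : V) := by
  apply le_antisymm
  · obtain ⟨p, hp⟩ := hc.exists_walk_length_eq_dist (x : V) (y : V)
    have hsupp : ∀ z ∈ p.support, z ∈ A := by
      intro z hz
      exact hbc _ x.2 _ y.2 z (btw_of_mem_support p hp hz)
    obtain ⟨q, hq⟩ := induce_walk_lift p x.2 y.2 hsupp
    calc (G.induce A).dist x y ≤ q.length := SimpleGraph.dist_le q
    _ = G.dist (x : V) (y : V) := by rw [hq, hp]
  · by_cases hr : (G.induce A).Reachable x y
    · obtain ⟨q, hq⟩ := hr.exists_walk_length_eq_dist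
      have h2 := SimpleGraph.dist_le (q.map (SimpleGraph.Embedding.induce A).toHom)
      rw [SimpleGraph.Walk.length_map] at h2
      exact hq ▸ h2
    · exfalso
      obtain ⟨p, hp⟩ := hc.exists_walk_length_eq_dist (x : V) (y : V)
      have hsupp : ∀ z ∈ p.support, z ∈ A := by
        intro z hz
        exact hbc _ x.2 _ y.2 z (btw_of_mem_support p hp hz)
      obtain ⟨q, -⟩ := induce_walk_lift p x.2 y.2 hsupp
      exact hr ⟨q⟩

lemma induce_connected (hc : G.Connected) (hbc : BtwConvex G A) (hA : A.Nonempty) :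
    (G.induce A).Connected := by
  rw [SimpleGraph.connected_iff]
  refine ⟨fun x y => ?_, ⟨⟨hA.some, hA.some_mem⟩⟩⟩
  obtain ⟨p, hp⟩ := hc.exists_walk_length_eq_dist (x : V) (y : V)
  have hsupp : ∀ z ∈ p.support, z ∈ A := by
    intro z hz
    exact hbc _ x.2 _ y.2 z (btw_of_mem_support p hp hz)
  obtain ⟨q, -⟩ := induce_walk_lift p x.2 y.2 hsupp
  exact ⟨q⟩

lemma induce_median (hm : IsMedianGraph G) (hbc : BtwConvex G A) (hA : A.Nonempty) :
    IsMedianGraph (G.induce A) := by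
  have hc := hm.1
  have dI := induce_dist hc hbc
  refine ⟨induce_connected hc hbc hA, ?_⟩
  intro u v w
  obtain ⟨m0, ⟨h1, h2, h3⟩, hu⟩ := hm.2 (u : V) (v : V) (w : V)
  have hm0 : m0 ∈ A := hbc _ u.2 _ v.2 m0 h1
  refine ⟨⟨m0, hm0⟩, ⟨?_, ?_, ?_⟩, ?_⟩
  · rw [dI, dI, dI]; exact h1
  · rw [dI, dI, dI]; exact h2
  · rw [dI, dI, dI]; exact h3
  · intro t ⟨g1, g2, g3⟩
    rw [dI, dI, dI] at g1 g2 g3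
    exact Subtype.ext (hu (t : V) ⟨g1, g2, g3⟩)

end MedPCE
namespace MedPCE
open SimpleGraph

universe v
variable {V : Type v} {G : SimpleGraph V}

lemma forward_base [Fintype V] (hm : IsMedianGraph G) (h1 : Fintype.card V = 1) :
    ObtainedByPCE V G := by
  obtain ⟨x, hx⟩ := Fintype.card_eq_one_iff.mp h1
  refine ObtainedByPCE.iso (⊥ : SimpleGraph PUnit) G ObtainedByPCE.base ⟨?_⟩
  refine ⟨⟨fun _ => x, fun _ => PUnit.unit, fun u => rfl, fun v => (hx v).symm⟩, ?_⟩
  intro u v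
  show G.Adj x x ↔ (⊥ : SimpleGraph PUnit).Adj u v
  simp

lemma forward_step [Fintype V] (hm : IsMedianGraph G) (hcard : 1 < Fintype.card V)
    (IH : ∀ (W : Type v) (H : SimpleGraph W) (instW : Fintype W),
      @Fintype.card W instW < Fintype.card V → IsMedianGraph H → ObtainedByPCE W H) :
    ObtainedByPCE V G := by
  classical
  obtain ⟨a, b, hab, hperi⟩ := exists_peripheral hm hcard
  have sidecases : ∀ v : V, v ∈ side G a b ∨ v ∈ side G b a := sides_total hm hab
  -- total partner functions via choice
  have hex : ∀ v : V, ∃ w : V,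
      v ∈ side G b a → (w ∈ side G a b ∧ G.Adj v w ∧ w ∈ uside G a b) := by
    intro v
    by_cases hv : v ∈ side G b a
    · obtain ⟨w, hwA, hadj⟩ := hperi v hv
      exact ⟨w, fun _ => ⟨hwA, hadj, ⟨hwA, v, hv, hadj.symm⟩⟩⟩
    · exact ⟨v, fun h => absurd h hv⟩
  choose pf hpf using hex
  have hex2 : ∀ u : V, ∃ w : V, u ∈ uside G a b → (w ∈ side G b a ∧ G.Adj u w) := by
    intro u
    by_cases hu : u ∈ uside G a b
    · obtain ⟨huA, w, hwB, hadj⟩ := hu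
      exact ⟨w, fun _ => ⟨hwB, hadj⟩⟩
    · exact ⟨u, fun h => absurd h hu⟩
  choose qf hqf using hex2
  have pf_eq : ∀ v ∈ side G b a, ∀ w, w ∈ side G a b → G.Adj v w → pf v = w := by
    intro v hv w hw hadj
    exact unique_cross hm hab hv (hpf v hv).1 hw (hpf v hv).2.1 hadj
  have qf_eq : ∀ u ∈ uside G a b, ∀ w, w ∈ side G b a → G.Adj u w → qf u = w := by
    intro u hu w hw hadj
    exact unique_cross hm hab.symm hu.1 (hqf u hu).1 hw (hqf u hu).2 hadj
  set A := side G a b with hA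
  set G0 := G.induce A with hG0
  set S0 : Set ↥A := {u : ↥A | (u : V) ∈ uside G a b} with hS0
  -- the isomorphism
  let f : V → (↥A ⊕ ↥S0) := fun v =>
    if h : v ∈ A then Sum.inl ⟨v, h⟩
    else Sum.inr ⟨⟨pf v, (hpf v ((sidecases v).resolve_left h)).1⟩,
                  (hpf v ((sidecases v).resolve_left h)).2.2⟩
  let g : (↥A ⊕ ↥S0) → V := Sum.elim (fun u => (u : V)) (fun s => qf ((s : ↥A) : V))
  have hleft : ∀ v, g (f v) = v := by
    intro v
    by_cases h : v ∈ A
    · simp only [f, g, dif_pos h, Sum.elim_inl]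
    · have hvB := (sidecases v).resolve_left h
      simp only [f, g, dif_neg h, Sum.elim_inr]
      exact qf_eq (pf v) (hpf v hvB).2.2 v hvB (hpf v hvB).2.1.symm
  have hright : ∀ z, f (g z) = z := by
    rintro (u | s)
    · simp only [f, g, Sum.elim_inl, dif_pos u.2]
    · have huU : ((s : ↥A) : V) ∈ uside G a b := s.2
      have hq := hqf _ huU
      have hqB : qf ((s : ↥A) : V) ∈ side G b a := hq.1
      have hqnA : qf ((s : ↥A) : V) ∉ A := fun hmem => sides_disjoint hmem hqB
      simp only [f, g, Sum.elim_inr, dif_neg hqnA]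
      have hpfq : pf (qf ((s : ↥A) : V)) = ((s : ↥A) : V) :=
        pf_eq _ hqB _ ((s : ↥A).2) hq.2.symm
      congr 1
      exact Subtype.ext (Subtype.ext hpfq)
  have hadj_iff : ∀ u v : V, (pceGraph G0 S0).Adj (f u) (f v) ↔ G.Adj u v := by
    intro u v
    by_cases hu : u ∈ A <;> by_cases hv : v ∈ A
    · simp only [f, dif_pos hu, dif_pos hv]
      exact Iff.rfl
    · have hvB := (sidecases v).resolve_left hv
      simp only [f, dif_pos hu, dif_neg hv]
      have hiff : u = pf v ↔ G.Adj u v := by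
        constructor
        · intro h
          rw [h]
          exact (hpf v hvB).2.1.symm
        · intro h
          exact (pf_eq v hvB u hu h.symm).symm
      constructor
      · intro h
        have h' : (⟨u, hu⟩ : ↥A) = ⟨pf v, (hpf v hvB).1⟩ := h
        exact hiff.mp (congrArg Subtype.val h')
      · intro h
        exact (Subtype.ext (hiff.mpr h) : (⟨u, hu⟩ : ↥A) = ⟨pf v, (hpf v hvB).1⟩)
    · have huB := (sidecases u).resolve_left hu
      simp only [f, dif_neg hu, dif_pos hv]
      have hiff : pf u = v ↔ G.Adj u v := by
        constructor
        · intro h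
          rw [← h]
          exact (hpf u huB).2.1
        · intro h
          exact pf_eq u huB v hv h
      constructor
      · intro h
        have h' : (⟨pf u, (hpf u huB).1⟩ : ↥A) = ⟨v, hv⟩ := h
        exact hiff.mp (congrArg Subtype.val h')
      · intro h
        exact (Subtype.ext (hiff.mpr h) : (⟨pf u, (hpf u huB).1⟩ : ↥A) = ⟨v, hv⟩)
    · have huB := (sidecases u).resolve_left hu
      have hvB := (sidecases v).resolve_left hv
      simp only [f, dif_neg hu, dif_neg hv]
      show G.Adj (pf u) (pf v) ↔ G.Adj u v
      have hpar := parallel hm hab (hpf u huB).1 huB (hpf u huB).2.1.symm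
        (hpf v hvB).1 hvB (hpf v hvB).2.1.symm
      rw [← SimpleGraph.dist_eq_one_iff_adj, ← SimpleGraph.dist_eq_one_iff_adj, hpar.1]
  have iso : G ≃g pceGraph G0 S0 := ⟨⟨f, g, hleft, hright⟩, by
    intro u v
    exact hadj_iff u v⟩
  -- data for the expansion step
  have hbcA : BtwConvex G A := side_btwConvex hm hab
  have hG0med : IsMedianGraph G0 := induce_median hm hbcA ⟨a, mem_side_self hab⟩
  letI instA : Fintype ↥A := Fintype.ofFinite _
  have hcardA : Fintype.card ↥A < Fintype.card V := by
    refine Fintype.card_lt_of_injective_of_notMem Subtype.val Subtype.coe_injective (b := b) ?_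
    rw [Subtype.range_coe]
    exact fun hbA => sides_disjoint hbA (mem_side_self hab.symm)
  have hG0' : ObtainedByPCE ↥A G0 := IH ↥A G0 instA hcardA hG0med
  have hS0ne : S0.Nonempty :=
    ⟨⟨a, mem_side_self hab⟩, ⟨mem_side_self hab, b, mem_side_self hab.symm, hab⟩⟩
  have hS0conv : IsConvexSet G0 S0 := by
    apply isConvexSet_of_btwConvex
    intro x hx y hy z hbtw
    have hbtwG : Btw G (x : ↥A) ((z : ↥A) : V) ((y : ↥A) : V) := by
      unfold Btw at hbtw ⊢
      rw [induce_dist hm.1 hbcA, induce_dist hm.1 hbcA, induce_dist hm.1 hbcA] at hbtw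
      exact hbtw
    exact uside_btwConvex hm hab _ hx _ hy _ hbtwG
  exact ObtainedByPCE.iso _ G (ObtainedByPCE.expand G0 S0 hS0ne hS0conv hG0') ⟨iso.symm⟩

lemma forward_aux : ∀ (n : ℕ) (V : Type v) (G : SimpleGraph V) (inst : Fintype V),
    Fintype.card V ≤ n → IsMedianGraph G → ObtainedByPCE V G := by
  intro n
  induction n with
  | zero =>
    intro V G inst hcard hm
    exfalso
    letI := inst
    have : Nonempty V := hm.1.nonempty
    have := Fintype.card_pos (α := V)
    omega
  | succ n IHn =>
    intro V G inst hcard hm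
    letI := inst
    by_cases h1 : Fintype.card V ≤ 1
    · have hpos : 0 < Fintype.card V := @Fintype.card_pos V inst hm.1.nonempty
      exact forward_base hm (by omega)
    · refine forward_step hm (by omega) ?_
      intro W H instW hlt hmh
      exact IHn W H instW (by omega) hmh

end MedPCE

/-- A finite connected simple graph is a median graph iff it
can be obtained from the one-vertex graph by a finite sequence of peripheral
convex expansions. -/
theorem isMedianGraph_iff_obtainedByPCE {V : Type u} [Fintype V]
    (G : SimpleGraph V) (hconn : G.Connected) :
    IsMedianGraph G ↔ ObtainedByPCE V G := by
  constructor
  · intro hm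
    exact MedPCE.forward_aux (Fintype.card V) V G inferInstance le_rfl hm
  · intro h
    exact MedPCE.obtained_median h
end
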